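/- arXiv:1207.3317 — 7 statements merged into one kernel-verified Lean document; each statement's English description precedes it below -/
import Mathlib

section
/- There exist two infinite sets A and M of positive integers such that p(n,A,M) = 1 for every positive integer n; that is, every positive integer n has exactly one representation n = ∑_{a ∈ A} m_a · a where each m_a ∈ M ∪ {0} and all but finitely many m_a are 0. -/
open Filter

/-- `pCount A M n` is `p(n, A, M)`: the number of finitely supported functions
`m : ℕ → ℕ` with support contained in `A`, nonzero values in `M`, and
`∑_{a ∈ A} m(a) · a = n`. -/
noncomputable def pCount (A M : Set ℕ) (n : ℕ) : ℕ :=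
  {f : ℕ →₀ ℕ | ↑f.support ⊆ A ∧ (∀ a ∈ f.support, f a ∈ M) ∧
    f.sum (fun a m => m * a) = n}.ncard

/-- `spread n` places the binary digits of `n` at the even positions. -/
def spread : ℕ → ℕ
  | 0 => 0
  | (n+1) => (n+1) % 2 + 4 * spread ((n+1)/2)
decreasing_by exact Nat.div_lt_self (Nat.succ_pos n) one_lt_two

lemma spread_zero : spread 0 = 0 := by simp [spread]

lemma spread_def (n : ℕ) : spread n = n % 2 + 4 * spread (n / 2) := by
  cases n with
  | zero => simp [spread]
  | succ m => rw [spread]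

lemma spread_eq_zero {n : ℕ} (h : spread n = 0) : n = 0 := by
  induction n using Nat.strong_induction_on with
  | _ n ih =>
    rcases Nat.eq_zero_or_pos n with rfl | hn
    · rfl
    · rw [spread_def] at h
      have h1 : n % 2 = 0 := by omega
      have h2 : spread (n / 2) = 0 := by omega
      have := ih (n / 2) (Nat.div_lt_self hn one_lt_two) h2
      omega

/-- The interleaving bijection `ℕ × ℕ → ℕ` on binary digits. -/
def fxy (x y : ℕ) : ℕ := spread x + 2 * spread y

lemma fxy_def (x y : ℕ) :
    fxy x y = x % 2 + 2 * (y % 2) + 4 * fxy (x / 2) (y / 2) := by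
  unfold fxy
  rw [spread_def x, spread_def y]
  ring

lemma fxy_inj : ∀ n x y x' y', fxy x y = n → fxy x' y' = n → x = x' ∧ y = y' := by
  intro n
  induction n using Nat.strong_induction_on with
  | _ n ih =>
    intro x y x' y' h h'
    rcases Nat.eq_zero_or_pos n with rfl | hn
    · unfold fxy at h h'
      have hx : spread x = 0 := by omega
      have hy : spread y = 0 := by omega
      have hx' : spread x' = 0 := by omega
      have hy' : spread y' = 0 := by omega
      exact ⟨(spread_eq_zero hx).trans (spread_eq_zero hx').symm,
        (spread_eq_zero hy).trans (spread_eq_zero hy').symm⟩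
    · rw [fxy_def] at h h'
      have hb : x % 2 < 2 := Nat.mod_lt _ two_pos
      have hb2 : y % 2 < 2 := Nat.mod_lt _ two_pos
      have hb3 : x' % 2 < 2 := Nat.mod_lt _ two_pos
      have hb4 : y' % 2 < 2 := Nat.mod_lt _ two_pos
      have hq : fxy (x / 2) (y / 2) = n / 4 := by omega
      have hq' : fxy (x' / 2) (y' / 2) = n / 4 := by omega
      have hlt : n / 4 < n := Nat.div_lt_self hn (by norm_num)
      obtain ⟨e1, e2⟩ := ih (n / 4) hlt _ _ _ _ hq hq'
      constructor <;> omega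

lemma fxy_surj : ∀ n, ∃ x y, fxy x y = n := by
  intro n
  induction n using Nat.strong_induction_on with
  | _ n ih =>
    rcases Nat.eq_zero_or_pos n with rfl | hn
    · exact ⟨0, 0, by simp [fxy, spread_zero]⟩
    · obtain ⟨u, v, huv⟩ := ih (n / 4) (Nat.div_lt_self hn (by norm_num))
      refine ⟨2 * u + n % 2, 2 * v + (n / 2) % 2, ?_⟩
      rw [fxy_def]
      have e1 : (2 * u + n % 2) % 2 = n % 2 := by omega
      have e2 : (2 * u + n % 2) / 2 = u := by omega
      have e3 : (2 * v + (n / 2) % 2) % 2 = (n / 2) % 2 := by omega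
      have e4 : (2 * v + (n / 2) % 2) / 2 = v := by omega
      rw [e1, e2, e3, e4, huv]
      omega

lemma spread_injective : Function.Injective spread := by
  intro x x' h
  have h1 : fxy x 0 = spread x := by simp [fxy, spread_zero]
  have h2 : fxy x' 0 = spread x := by simp [fxy, spread_zero, h]
  exact (fxy_inj (spread x) x 0 x' 0 h1 h2).1

/-- The interleaving equivalence. -/
noncomputable def eXY : ℕ × ℕ ≃ ℕ :=
  Equiv.ofBijective (fun p => fxy p.1 p.2)
    ⟨fun p q h => by
      obtain ⟨h1, h2⟩ := fxy_inj (fxy q.1 q.2) p.1 p.2 q.1 q.2 h rfl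
      exact Prod.ext h1 h2,
     fun n => by obtain ⟨x, y, h⟩ := fxy_surj n; exact ⟨(x, y), h⟩⟩

noncomputable def theA : Set ℕ := Set.range (fun y : ℕ => 2 ^ (2 * spread y))

noncomputable def theM : Set ℕ :=
  {m : ℕ | ∃ X : Finset ℕ, X.Nonempty ∧ m = ∑ x ∈ X, 2 ^ spread x}

/-- The finsupp associated to a finset of pairs. -/
noncomputable def Phi (Q : Finset (ℕ × ℕ)) : ℕ →₀ ℕ :=
  ∑ q ∈ Q, Finsupp.single (2 ^ (2 * spread q.2)) (2 ^ spread q.1)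

lemma pow_two_inj : Function.Injective (fun k : ℕ => 2 ^ k) :=
  Nat.pow_right_injective (le_refl 2)

lemma key_inj : Function.Injective (fun y : ℕ => 2 ^ (2 * spread y)) := by
  intro y y' h
  have := pow_two_inj h
  exact spread_injective (by omega)

lemma sum_Phi (Q : Finset (ℕ × ℕ)) :
    (Phi Q).sum (fun a m => m * a) = ∑ q ∈ Q, 2 ^ fxy q.1 q.2 := by
  classical
  unfold Phi
  rw [← Finsupp.sum_finset_sum_index (fun a => by simp) (fun a m m' => by ring)]
  refine Finset.sum_congr rfl fun q _ => ?_
  rw [Finsupp.sum_single_index (by simp)]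
  rw [← pow_add]
  rfl

lemma sum_Phi' (Q : Finset (ℕ × ℕ)) :
    (Phi Q).sum (fun a m => m * a) = ∑ i ∈ Q.image (fun q => fxy q.1 q.2), 2 ^ i := by
  rw [sum_Phi, Finset.sum_image]
  intro p hp q hq h
  obtain ⟨h1, h2⟩ := fxy_inj (fxy q.1 q.2) p.1 p.2 q.1 q.2 h rfl
  exact Prod.ext h1 h2

lemma Phi_support (Q : Finset (ℕ × ℕ)) : ↑(Phi Q).support ⊆ theA := by
  classical
  intro a ha
  simp only [Finset.coe_subset, Finset.mem_coe] at ha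
  have h := Finsupp.support_finset_sum (s := Q)
    (f := fun q => Finsupp.single (2 ^ (2 * spread q.2)) (2 ^ spread (q.1 : ℕ)))
  have ha' := h ha
  simp only [Finset.mem_biUnion] at ha'
  obtain ⟨q, _, hq⟩ := ha'
  have := Finsupp.support_single_subset hq
  simp only [Finset.mem_singleton] at this
  exact ⟨q.2, this.symm⟩

lemma Phi_apply (Q : Finset (ℕ × ℕ)) (a : ℕ) :
    Phi Q a = ∑ q ∈ Q.filter (fun q => 2 ^ (2 * spread q.2) = a), 2 ^ spread q.1 := by
  classical
  unfold Phi
  rw [Finsupp.finset_sum_apply]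
  rw [Finset.sum_filter]
  refine Finset.sum_congr rfl fun q _ => ?_
  rw [Finsupp.single_apply]

lemma Phi_mem_M (Q : Finset (ℕ × ℕ)) : ∀ a ∈ (Phi Q).support, Phi Q a ∈ theM := by
  classical
  intro a ha
  rw [Phi_apply]
  set F := Q.filter (fun q => 2 ^ (2 * spread q.2) = a) with hF
  have hinj : Set.InjOn Prod.fst (F : Set (ℕ × ℕ)) := by
    intro q hq q' hq' h
    simp only [hF, Finset.coe_filter, Set.mem_setOf_eq] at hq hq'
    have h2 : q.2 = q'.2 := key_inj (hq.2.trans hq'.2.symm)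
    exact Prod.ext h h2
  have himg : ∑ q ∈ F, 2 ^ spread q.1 = ∑ x ∈ F.image Prod.fst, 2 ^ spread x := by
    rw [Finset.sum_image (fun q hq q' hq' h => hinj (by exact_mod_cast hq) (by exact_mod_cast hq') h)]
  rw [himg]
  refine ⟨F.image Prod.fst, ?_, rfl⟩
  rw [Finset.image_nonempty]
  by_contra hne
  rw [Finset.not_nonempty_iff_eq_empty] at hne
  have : Phi Q a = 0 := by rw [Phi_apply, ← hF, hne, Finset.sum_empty]
  exact (Finsupp.mem_support_iff.mp ha) this

lemma sol_eq_Phi {g : ℕ →₀ ℕ} (h1 : ↑g.support ⊆ theA)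
    (h2 : ∀ a ∈ g.support, g a ∈ theM) : ∃ Q, Phi Q = g := by
  classical
  have hy : ∀ a ∈ g.support, ∃ y, 2 ^ (2 * spread y) = a := fun a ha => h1 ha
  have hX : ∀ a ∈ g.support, ∃ X : Finset ℕ, X.Nonempty ∧ g a = ∑ x ∈ X, 2 ^ spread x :=
    fun a ha => h2 a ha
  choose! y hy' using hy
  choose! X hX1 hX2 using hX
  refine ⟨g.support.biUnion (fun a => (X a).image (fun x => (x, y a))), ?_⟩
  unfold Phi
  rw [Finset.sum_biUnion ?hdisj]
  case hdisj =>
    intro a ha a' ha' hne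
    simp only [Finset.disjoint_left, Finset.mem_image]
    rintro ⟨x, c⟩ ⟨u, hu, huv⟩ ⟨u', hu', huv'⟩
    apply hne
    have e1 : c = y a := (Prod.mk.injEq _ _ _ _ ▸ huv).2.symm
    have e2 : c = y a' := (Prod.mk.injEq _ _ _ _ ▸ huv').2.symm
    rw [← hy' a (by exact_mod_cast ha), ← hy' a' (by exact_mod_cast ha'), ← e1, ← e2]
  have hstep : ∀ a ∈ g.support,
      (∑ q ∈ (X a).image (fun x => (x, y a)),
        Finsupp.single (2 ^ (2 * spread q.2)) (2 ^ spread q.1)) = Finsupp.single a (g a) := by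
    intro a ha
    rw [Finset.sum_image (by intro u _ u' _ h; exact (Prod.mk.injEq _ _ _ _ ▸ h).1)]
    simp only
    rw [hy' a ha]
    rw [hX2 a ha]
    exact (map_sum (Finsupp.singleAddHom a) _ _).symm
  rw [Finset.sum_congr rfl hstep]
  exact Finsupp.sum_single g

theorem stmt0 :
    ∃ A M : Set ℕ, A.Infinite ∧ M.Infinite ∧ (∀ a ∈ A, 0 < a) ∧ (∀ m ∈ M, 0 < m) ∧
      ∀ n : ℕ, 0 < n → pCount A M n = 1 := by
  classical
  refine ⟨theA, theM, ?_, ?_, ?_, ?_, ?_⟩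
  · exact Set.infinite_range_of_injective key_inj
  · exact Set.infinite_of_injective_forall_mem
      (f := fun x : ℕ => 2 ^ spread x)
      (fun x x' h => spread_injective (pow_two_inj h))
      (fun x => ⟨{x}, Finset.singleton_nonempty x, by simp⟩)
  · rintro a ⟨y, rfl⟩; positivity
  · rintro m ⟨Y, hY, rfl⟩
    exact Finset.sum_pos (fun i _ => pow_pos two_pos _) hY
  · intro n _
    set I : Finset ℕ := Finset.equivBitIndices n with hI
    set Q0 : Finset (ℕ × ℕ) := I.image (fun i => eXY.symm i) with hQ0
    have einj : Function.Injective (fun q : ℕ × ℕ => fxy q.1 q.2) := by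
      intro p q h
      obtain ⟨a, b⟩ := fxy_inj (fxy q.1 q.2) p.1 p.2 q.1 q.2 h rfl
      exact Prod.ext a b
    have him : Q0.image (fun q => fxy q.1 q.2) = I := by
      rw [hQ0, Finset.image_image]
      have : ((fun q : ℕ × ℕ => fxy q.1 q.2) ∘ fun i => eXY.symm i) = id := by
        funext i
        exact eXY.apply_symm_apply i
      rw [this, Finset.image_id]
    have hsum0 : (Phi Q0).sum (fun a m => m * a) = n := by
      rw [sum_Phi', him, hI]
      exact Finset.twoPowSum_toFinset_bitIndices n
    have hset : {f : ℕ →₀ ℕ | ↑f.support ⊆ theA ∧ (∀ a ∈ f.support, f a ∈ theM) ∧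
        f.sum (fun a m => m * a) = n} = {Phi Q0} := by
      ext g
      constructor
      · rintro ⟨hs, hm, hsum⟩
        obtain ⟨Q, rfl⟩ := sol_eq_Phi hs hm
        have h1 : ∑ i ∈ Q.image (fun q => fxy q.1 q.2), 2 ^ i
            = ∑ i ∈ Q0.image (fun q => fxy q.1 q.2), 2 ^ i := by
          rw [← sum_Phi' Q, ← sum_Phi' Q0, hsum, hsum0]
        have h2 : Q.image (fun q => fxy q.1 q.2) = Q0.image (fun q => fxy q.1 q.2) :=
          Finset.geomSum_injective (le_refl 2) h1
        have h3 : Q = Q0 := Finset.image_injective einj h2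
        rw [h3]; rfl
      · rintro rfl
        exact ⟨Phi_support Q0, Phi_mem_M Q0, hsum0⟩
    rw [pCount, hset, Set.ncard_singleton]
end

section
/- Let B and C be disjoint infinite sets of nonnegative integers with B ∪ C equal to the set of all nonnegative integers. Let D = {∑_{i ∈ B'} 2^i : B' a finite subset of B} and E = {∑_{j ∈ C'} 2^j : C' a finite subset of C}. Define A = {2^d : d ∈ D} and M = {∑_{e ∈ E'} 2^e : E' a finite nonempty subset of E}. Then A and M are infinite sets of positive integers and p(n,A,M) = 1 for every positive integer n. -/
open Filter

def phiF (s : Finset ℕ) : ℕ := ∑ i ∈ s, 2 ^ i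

lemma phiF_def (s : Finset ℕ) : phiF s = ∑ i ∈ s, 2 ^ i := rfl

def bitsF (n : ℕ) : Finset ℕ := n.bitIndices.toFinset

lemma bitsF_phiF (s : Finset ℕ) : bitsF (phiF s) = s :=
  Finset.toFinset_bitIndices_twoPowSum s

lemma phiF_bitsF (n : ℕ) : phiF (bitsF n) = n :=
  Finset.twoPowSum_toFinset_bitIndices n

lemma phiF_injective : Function.Injective phiF := fun s t h => by
  rw [← bitsF_phiF s, h, bitsF_phiF]

lemma phiF_eq_zero {s : Finset ℕ} : phiF s = 0 ↔ s = ∅ := by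
  constructor
  · intro h
    by_contra hne
    obtain ⟨i, hi⟩ := Finset.nonempty_iff_ne_empty.2 hne
    have h1 : 2 ^ i ≤ phiF s := Finset.single_le_sum (fun _ _ => Nat.zero_le _) hi
    have h2 : 0 < 2 ^ i := Nat.pow_pos (n := i) (by norm_num)
    omega
  · rintro rfl; simp [phiF]

lemma phiF_union {s t : Finset ℕ} (h : Disjoint s t) : phiF (s ∪ t) = phiF s + phiF t :=
  Finset.sum_union h

lemma bitsF_two_pow (i : ℕ) : bitsF (2 ^ i) = {i} := by
  simp [bitsF, Nat.bitIndices_two_pow]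

open Classical in
noncomputable def dpartF (B : Set ℕ) (k : ℕ) : ℕ := phiF ((bitsF k).filter (· ∈ B))

open Classical in
lemma bitsF_dpartF (B : Set ℕ) (k : ℕ) :
    bitsF (dpartF B k) = (bitsF k).filter (· ∈ B) := bitsF_phiF _

lemma bitsF_dpartF_subset (B : Set ℕ) (k : ℕ) : ↑(bitsF (dpartF B k)) ⊆ B := by
  classical
  rw [bitsF_dpartF]
  intro i hi
  exact (Finset.mem_filter.1 (Finset.mem_coe.1 hi)).2

section
variable {B C : Set ℕ}

lemma memC_iff (hdisj : Disjoint B C) (hunion : B ∪ C = Set.univ) (i : ℕ) :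
    i ∈ C ↔ i ∉ B := by
  constructor
  · intro hC hB; exact Set.disjoint_left.mp hdisj hB hC
  · intro hB
    have h : i ∈ B ∪ C := hunion ▸ Set.mem_univ i
    exact h.resolve_left hB

lemma dpartF_add_dpartF (hdisj : Disjoint B C) (hunion : B ∪ C = Set.univ) (k : ℕ) :
    dpartF B k + dpartF C k = k := by
  classical
  have hdisj2 : Disjoint ((bitsF k).filter (· ∈ B)) ((bitsF k).filter (· ∈ C)) := by
    rw [Finset.disjoint_left]
    intro i hi hi'
    exact Set.disjoint_left.mp hdisj (Finset.mem_filter.1 hi).2 (Finset.mem_filter.1 hi').2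
  have hun : (bitsF k).filter (· ∈ B) ∪ (bitsF k).filter (· ∈ C) = bitsF k := by
    ext i
    simp only [Finset.mem_union, Finset.mem_filter]
    constructor
    · rintro (⟨h, _⟩ | ⟨h, _⟩) <;> exact h
    · intro h
      rcases (hunion ▸ Set.mem_univ i : i ∈ B ∪ C) with h' | h'
      · exact Or.inl ⟨h, h'⟩
      · exact Or.inr ⟨h, h'⟩
  have := phiF_union hdisj2
  rw [hun, phiF_bitsF] at this
  rw [dpartF, dpartF]
  convert this.symm using 3

lemma dpartF_add (hdisj : Disjoint B C) {d e : ℕ}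
    (hd : ↑(bitsF d) ⊆ B) (he : ↑(bitsF e) ⊆ C) :
    dpartF B (d + e) = d ∧ dpartF C (d + e) = e := by
  classical
  have hst : Disjoint (bitsF d) (bitsF e) := by
    rw [Finset.disjoint_left]
    intro i hi hie
    exact Set.disjoint_left.mp hdisj (hd hi) (he hie)
  have h1 : d + e = phiF (bitsF d ∪ bitsF e) := by
    rw [phiF_union hst, phiF_bitsF, phiF_bitsF]
  have hb : bitsF (d + e) = bitsF d ∪ bitsF e := by rw [h1, bitsF_phiF]
  constructor
  · have hfil : (bitsF (d + e)).filter (· ∈ B) = bitsF d := by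
      rw [hb]; ext i
      simp only [Finset.mem_filter, Finset.mem_union]
      constructor
      · rintro ⟨h | h, hiB⟩
        · exact h
        · exact absurd (he h) (fun hc => Set.disjoint_left.mp hdisj hiB hc)
      · intro h; exact ⟨Or.inl h, hd h⟩
    rw [dpartF]
    rw [show ((bitsF (d+e)).filter (· ∈ B)) = bitsF d from hfil, phiF_bitsF]
  · have hfil : (bitsF (d + e)).filter (· ∈ C) = bitsF e := by
      rw [hb]; ext i
      simp only [Finset.mem_filter, Finset.mem_union]
      constructor
      · rintro ⟨h | h, hiC⟩
        · exact absurd (hd h) (fun hc => Set.disjoint_left.mp hdisj hc hiC)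
        · exact h
      · intro h; exact ⟨Or.inr h, he h⟩
    rw [dpartF]
    rw [show ((bitsF (d+e)).filter (· ∈ C)) = bitsF e from hfil, phiF_bitsF]

end

lemma sum_biUnion_add {β : Type*} [AddCommMonoid β] (S : Finset ℕ) (t : ℕ → Finset ℕ)
    (c : ℕ → ℕ) (F : ℕ → β)
    (hinj : ∀ a ∈ S, ∀ a' ∈ S, ∀ e ∈ t a, ∀ e' ∈ t a', c a + e = c a' + e' → a = a') :
    ∑ k ∈ S.biUnion (fun a => (t a).image (fun e => c a + e)), F k
      = ∑ a ∈ S, ∑ e ∈ t a, F (c a + e) := by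
  classical
  rw [Finset.sum_biUnion]
  · exact Finset.sum_congr rfl fun a ha =>
      Finset.sum_image (fun e he e' he' h => by omega)
  · intro a ha a' ha' hne
    simp only [Finset.disjoint_left, Finset.mem_image]
    rintro x ⟨e, he, rfl⟩ ⟨e', he', hx⟩
    exact hne (hinj a ha a' ha' e he e' he' hx.symm)

theorem stmt1 (B C : Set ℕ) (hdisj : Disjoint B C) (hunion : B ∪ C = Set.univ)
    (hB : B.Infinite) (hC : C.Infinite)
    (D E A M : Set ℕ)
    (hD : D = {n | ∃ s : Finset ℕ, ↑s ⊆ B ∧ n = ∑ i ∈ s, 2 ^ i})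
    (hE : E = {n | ∃ s : Finset ℕ, ↑s ⊆ C ∧ n = ∑ j ∈ s, 2 ^ j})
    (hA : A = {x | ∃ d ∈ D, x = 2 ^ d})
    (hM : M = {x | ∃ s : Finset ℕ, ↑s ⊆ E ∧ s.Nonempty ∧ x = ∑ e ∈ s, 2 ^ e}) :
    A.Infinite ∧ M.Infinite ∧ (∀ a ∈ A, 0 < a) ∧ (∀ m ∈ M, 0 < m) ∧
      ∀ n : ℕ, 0 < n → pCount A M n = 1 := by
  classical
  have memD : ∀ x, x ∈ D ↔ ↑(bitsF x) ⊆ B := by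
    intro x; rw [hD]; simp only [Set.mem_setOf_eq]
    constructor
    · rintro ⟨s, hs, rfl⟩
      rwa [show bitsF (∑ i ∈ s, 2 ^ i) = s from bitsF_phiF s]
    · intro h; exact ⟨bitsF x, h, (phiF_bitsF x).symm⟩
  have memE : ∀ x, x ∈ E ↔ ↑(bitsF x) ⊆ C := by
    intro x; rw [hE]; simp only [Set.mem_setOf_eq]
    constructor
    · rintro ⟨s, hs, rfl⟩
      rwa [show bitsF (∑ i ∈ s, 2 ^ i) = s from bitsF_phiF s]
    · intro h; exact ⟨bitsF x, h, (phiF_bitsF x).symm⟩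
  have memA : ∀ a, a ∈ A ↔ ∃ d, ↑(bitsF d) ⊆ B ∧ a = 2 ^ d := by
    intro a; rw [hA]; simp only [Set.mem_setOf_eq]
    constructor
    · rintro ⟨d, hd, rfl⟩; exact ⟨d, (memD d).1 hd, rfl⟩
    · rintro ⟨d, hd, rfl⟩; exact ⟨d, (memD d).2 hd, rfl⟩
  have memM : ∀ x, x ∈ M ↔ x ≠ 0 ∧ ↑(bitsF x) ⊆ E := by
    intro x; rw [hM]; simp only [Set.mem_setOf_eq]
    constructor
    · rintro ⟨s, hs, hne, rfl⟩
      constructor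
      · show phiF s ≠ 0
        exact fun h => (Finset.nonempty_iff_ne_empty.1 hne) (phiF_eq_zero.1 h)
      · rwa [show bitsF (∑ e ∈ s, 2 ^ e) = s from bitsF_phiF s]
    · rintro ⟨h0, hsub⟩
      refine ⟨bitsF x, hsub, ?_, (phiF_bitsF x).symm⟩
      refine Finset.nonempty_iff_ne_empty.2 fun h => h0 ?_
      rw [← phiF_bitsF x, h]
      simp [phiF]
  have hpow2 : Function.Injective (fun i : ℕ => (2 : ℕ) ^ i) :=
    Nat.pow_right_injective (le_refl 2)
  have hinjj : Function.Injective (fun i : ℕ => (2 : ℕ) ^ 2 ^ i) :=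
    fun i j h => hpow2 (hpow2 h)
  have hAinf : A.Infinite := by
    refine Set.Infinite.mono ?_ (hB.image (Set.injOn_of_injective hinjj))
    rintro _ ⟨i, hi, rfl⟩
    exact (memA _).2 ⟨2 ^ i, by rw [bitsF_two_pow]; simpa using hi, rfl⟩
  have hMinf : M.Infinite := by
    refine Set.Infinite.mono ?_ (hC.image (Set.injOn_of_injective hinjj))
    rintro _ ⟨j, hj, rfl⟩
    refine (memM _).2 ⟨by positivity, ?_⟩
    rw [bitsF_two_pow]
    simp only [Finset.coe_singleton, Set.singleton_subset_iff]
    exact (memE _).2 (by rw [bitsF_two_pow]; simpa using hj)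
  have hApos : ∀ a ∈ A, 0 < a := by
    intro a ha
    obtain ⟨d, _, rfl⟩ := (memA a).1 ha
    positivity
  have hMpos : ∀ m ∈ M, 0 < m := fun m hm => Nat.pos_of_ne_zero ((memM m).1 hm).1
  refine ⟨hAinf, hMinf, hApos, hMpos, ?_⟩
  intro n hn
  have hδε : ∀ k, dpartF B k + dpartF C k = k := dpartF_add_dpartF hdisj hunion
  set F : ℕ → (ℕ →₀ ℕ) := fun k => Finsupp.single (2 ^ dpartF B k) (2 ^ dpartF C k) with hF
  set g : ℕ →₀ ℕ := ∑ k ∈ bitsF n, F k with hg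
  -- g has the three properties
  have hgsum : g.sum (fun a m => m * a) = n := by
    rw [hg, ← Finsupp.sum_finsetSum_index (fun a => zero_mul a) (fun a x y => add_mul x y a)]
    have : ∀ k ∈ bitsF n, (F k).sum (fun a m => m * a) = 2 ^ k := by
      intro k hk
      show (Finsupp.single ((2:ℕ) ^ dpartF B k) ((2:ℕ) ^ dpartF C k)).sum
        (fun a m => m * a) = 2 ^ k
      rw [Finsupp.sum_single_index (by simp), ← pow_add]
      congr 1
      have := hδε k; omega
    rw [Finset.sum_congr rfl this]
    exact phiF_bitsF n
  have hgsupp : ↑g.support ⊆ A := by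
    intro a ha
    have ha' : g a ≠ 0 := Finsupp.mem_support_iff.1 (Finset.mem_coe.1 ha)
    rw [hg, Finsupp.finset_sum_apply] at ha'
    obtain ⟨k, hk, hka⟩ := Finset.exists_ne_zero_of_sum_ne_zero ha'
    have h2 : (2 : ℕ) ^ dpartF B k = a := by
      by_contra hne
      exact hka (Finsupp.single_eq_of_ne' hne)
    exact (memA a).2 ⟨dpartF B k, bitsF_dpartF_subset B k, h2.symm⟩
  have hgval : ∀ a ∈ g.support, g a ∈ M := by
    intro a ha
    have hane : g a ≠ 0 := Finsupp.mem_support_iff.1 ha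
    have hga : g a = ∑ k ∈ (bitsF n).filter (fun k => (2 : ℕ) ^ dpartF B k = a),
        2 ^ dpartF C k := by
      rw [hg, Finsupp.finset_sum_apply]
      simp only [hF, Finsupp.single_apply]
      exact (Finset.sum_filter _ _).symm
    set T := (bitsF n).filter (fun k => (2 : ℕ) ^ dpartF B k = a) with hT
    have hinjT : ∀ k ∈ T, ∀ k' ∈ T, dpartF C k = dpartF C k' → k = k' := by
      intro k hk k' hk' h
      have h1 := (Finset.mem_filter.1 hk).2
      have h2 := (Finset.mem_filter.1 hk').2
      have hd : dpartF B k = dpartF B k' := hpow2 (h1.trans h2.symm)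
      have e1 := hδε k; have e2 := hδε k'
      omega
    have himg : g a = phiF (T.image (dpartF C)) := by
      rw [hga, phiF_def]
      exact (Finset.sum_image hinjT).symm
    refine (memM _).2 ⟨hane, ?_⟩
    rw [himg, bitsF_phiF]
    intro e he
    obtain ⟨k, _, rfl⟩ := Finset.mem_image.1 (Finset.mem_coe.1 he)
    exact (memE _).2 (bitsF_dpartF_subset C k)
  -- uniqueness
  have huniq : ∀ f : ℕ →₀ ℕ, ↑f.support ⊆ A → (∀ a ∈ f.support, f a ∈ M) →
      f.sum (fun a m => m * a) = n → f = g := by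
    intro f hsupp hval hsum
    have hch : ∀ a : ℕ, ∃ dd : ℕ, a ∈ f.support → ↑(bitsF dd) ⊆ B ∧ a = 2 ^ dd := by
      intro a
      by_cases h : a ∈ f.support
      · obtain ⟨dd, h1, h2⟩ := (memA a).1 (hsupp h)
        exact ⟨dd, fun _ => ⟨h1, h2⟩⟩
      · exact ⟨0, fun h' => absurd h' h⟩
    choose d hd using hch
    have hbitsE : ∀ a ∈ f.support, ∀ e ∈ bitsF (f a), ↑(bitsF e) ⊆ C := by
      intro a ha e he
      exact (memE e).1 (((memM _).1 (hval a ha)).2 he)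
    have hkey : ∀ a ∈ f.support, ∀ e ∈ bitsF (f a),
        dpartF B (d a + e) = d a ∧ dpartF C (d a + e) = e :=
      fun a ha e he => dpartF_add hdisj (hd a ha).1 (hbitsE a ha e he)
    have hinj2 : ∀ a ∈ f.support, ∀ a' ∈ f.support, ∀ e ∈ bitsF (f a),
        ∀ e' ∈ bitsF (f a'), d a + e = d a' + e' → a = a' := by
      intro a ha a' ha' e he e' he' h
      have h1 := (hkey a ha e he).1
      have h2 := (hkey a' ha' e' he').1
      rw [h] at h1
      rw [(hd a ha).2, (hd a' ha').2, h1.symm.trans h2]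
    set U := f.support.biUnion (fun a => (bitsF (f a)).image (fun e => d a + e)) with hUdef
    have hterm : ∀ a ∈ f.support, f a * a = ∑ e ∈ bitsF (f a), 2 ^ (d a + e) := by
      intro a ha
      have h1 : f a * a = phiF (bitsF (f a)) * 2 ^ d a := by
        rw [phiF_bitsF, ← (hd a ha).2]
      rw [h1, phiF_def, Finset.sum_mul]
      refine Finset.sum_congr rfl fun e he => ?_
      rw [← pow_add]
      congr 1
      omega
    have hU : bitsF n = U := by
      have hn' : n = phiF U := by
        rw [phiF_def, hUdef, sum_biUnion_add f.support (fun a => bitsF (f a)) d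
          (fun k => 2 ^ k) hinj2]
        rw [← hsum, Finsupp.sum]
        exact Finset.sum_congr rfl hterm
      rw [hn', bitsF_phiF]
    have hfe : f = ∑ a ∈ f.support, Finsupp.single a (f a) := by
      conv_lhs => rw [← Finsupp.sum_single f]
      rfl
    have hstep : ∀ a ∈ f.support,
        Finsupp.single a (f a) = ∑ e ∈ bitsF (f a), F (d a + e) := by
      intro a ha
      have h1 : Finsupp.single a (f a) = Finsupp.single (2 ^ d a) (phiF (bitsF (f a))) := by
        rw [phiF_bitsF, ← (hd a ha).2]
      rw [h1, phiF_def, Finsupp.single_finset_sum]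
      refine Finset.sum_congr rfl fun e he => ?_
      simp only [hF]
      rw [(hkey a ha e he).1, (hkey a ha e he).2]
    rw [hfe, Finset.sum_congr rfl hstep, hg, hU, hUdef]
    exact (sum_biUnion_add f.support (fun a => bitsF (f a)) d F hinj2).symm
  have hseteq : {f : ℕ →₀ ℕ | ↑f.support ⊆ A ∧ (∀ a ∈ f.support, f a ∈ M) ∧
      f.sum (fun a m => m * a) = n} = {g} := by
    apply Set.eq_singleton_iff_unique_mem.2
    exact ⟨⟨hgsupp, hgval, hgsum⟩, fun f hf => huniq f hf.1 hf.2.1 hf.2.2⟩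
  rw [pCount, hseteq, Set.ncard_singleton]
end

section
/- For every monotone function w : ℕ → ℕ tending to infinity, there exist infinite sets A and M of positive integers such that p(n,A,M) = 1 for every positive integer n, and |A ∩ {1,...,n}| ≥ (log₂ n)/w(n) for all sufficiently large n. -/
open Filter Finset

namespace Stmt3Aux

noncomputable section
open scoped Classical

/-- sum of powers of two over a finset -/
def ofBits (F : Finset ℕ) : ℕ := ∑ i ∈ F, 2 ^ i

/-- the set of binary digit positions of `n` -/
def bitset (n : ℕ) : Finset ℕ := n.bitIndices.toFinset

@[simp] lemma bitset_ofBits (F : Finset ℕ) : bitset (ofBits F) = F :=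
  Finset.toFinset_bitIndices_twoPowSum F

@[simp] lemma ofBits_bitset (n : ℕ) : ofBits (bitset n) = n :=
  Finset.twoPowSum_toFinset_bitIndices n

lemma ofBits_injective : Function.Injective ofBits :=
  Function.LeftInverse.injective bitset_ofBits

@[simp] lemma ofBits_empty : ofBits ∅ = 0 := rfl

lemma ofBits_eq_zero {F : Finset ℕ} (h : ofBits F = 0) : F = ∅ :=
  ofBits_injective (by simp [h])

lemma ofBits_union {F G : Finset ℕ} (h : Disjoint F G) :
    ofBits (F ∪ G) = ofBits F + ofBits G := Finset.sum_union h

lemma ofBits_singleton (i : ℕ) : ofBits {i} = 2 ^ i := by simp [ofBits]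

lemma ofBits_lt {F : Finset ℕ} {r : ℕ} (h : F ⊆ Finset.range r) : ofBits F < 2 ^ r := by
  calc ofBits F ≤ ∑ i ∈ Finset.range r, 2 ^ i :=
        Finset.sum_le_sum_of_subset h
    _ < 2 ^ r := by
        rw [Nat.geomSum_eq le_rfl]
        have : 1 ≤ 2 ^ r := Nat.one_le_two_pow
        omega

lemma bitset_add {s t : ℕ} (h : Disjoint (bitset s) (bitset t)) :
    bitset (s + t) = bitset s ∪ bitset t := by
  conv_lhs => rw [← ofBits_bitset s, ← ofBits_bitset t, ← ofBits_union h]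
  exact bitset_ofBits _

variable (J : Set ℕ)

/-- the part of `e` whose bits lie in `J` -/
def sPart (e : ℕ) : ℕ := ofBits ((bitset e).filter (· ∈ J))

/-- the part of `e` whose bits lie outside `J` -/
def tPart (e : ℕ) : ℕ := ofBits ((bitset e).filter (· ∉ J))

lemma sPart_add_tPart (e : ℕ) : sPart J e + tPart J e = e := by
  rw [sPart, tPart, ofBits, ofBits, Finset.sum_filter_add_sum_filter_not, ← ofBits, ofBits_bitset]

@[simp] lemma bitset_sPart (e : ℕ) : bitset (sPart J e) = (bitset e).filter (· ∈ J) :=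
  bitset_ofBits _

@[simp] lemma bitset_tPart (e : ℕ) : bitset (tPart J e) = (bitset e).filter (· ∉ J) :=
  bitset_ofBits _

lemma sPart_tPart_eq {s t : ℕ} (hs : ∀ i ∈ bitset s, i ∈ J) (ht : ∀ i ∈ bitset t, i ∉ J) :
    sPart J (s + t) = s ∧ tPart J (s + t) = t := by
  have hdisj : Disjoint (bitset s) (bitset t) :=
    Finset.disjoint_left.2 fun i hi hi' => (ht i hi') (hs i hi)
  have hadd := bitset_add hdisj
  constructor
  · rw [sPart, hadd, Finset.filter_union, Finset.filter_true_of_mem hs,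
      Finset.filter_false_of_mem (fun i hi => by simp [ht i hi]), Finset.union_empty, ofBits_bitset]
  · rw [tPart, hadd, Finset.filter_union, Finset.filter_false_of_mem (fun i hi => by simp [hs i hi]),
      Finset.filter_true_of_mem ht, Finset.empty_union, ofBits_bitset]


/-- numbers whose bits avoid `J` -/
def TJ : Set ℕ := {t | ∀ i ∈ bitset t, i ∉ J}

/-- numbers whose bits lie in `J` -/
def SJ : Set ℕ := {s | ∀ i ∈ bitset s, i ∈ J}

/-- the set `A` -/
def Aset : Set ℕ := {a | ∃ t ∈ TJ J, a = 2 ^ t}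

/-- the set `M` -/
def Mset : Set ℕ := {m | 0 < m ∧ ∀ i ∈ bitset m, i ∈ SJ J}

lemma tPart_mem_TJ (e : ℕ) : tPart J e ∈ TJ J := by
  intro i hi
  rw [bitset_tPart] at hi
  exact (Finset.mem_filter.1 hi).2

lemma sPart_mem_SJ (e : ℕ) : sPart J e ∈ SJ J := by
  intro i hi
  rw [bitset_sPart] at hi
  exact (Finset.mem_filter.1 hi).2

lemma two_pow_inj : Function.Injective (fun t : ℕ => 2 ^ t) :=
  fun _ _ h => Nat.pow_right_injective le_rfl h

/-- the canonical coefficient function -/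
def canonG (n : ℕ) : ℕ → ℕ := fun a =>
  ofBits (((bitset n).filter (fun e => 2 ^ tPart J e = a)).image (sPart J))

lemma canonG_ne_zero {n a : ℕ} (h : canonG J n a ≠ 0) :
    a ∈ (bitset n).image (fun e => 2 ^ tPart J e) := by
  by_contra hcon
  apply h
  rw [canonG]
  have hfil : (bitset n).filter (fun e => 2 ^ tPart J e = a) = ∅ := by
    rw [Finset.filter_eq_empty_iff]
    intro e he heq
    exact hcon (Finset.mem_image.2 ⟨e, he, heq⟩)
  rw [hfil, Finset.image_empty, ofBits_empty]

/-- the canonical representation of `n` -/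
def canonRep (n : ℕ) : ℕ →₀ ℕ :=
  Finsupp.onFinset ((bitset n).image (fun e => 2 ^ tPart J e)) (canonG J n)
    (fun _ h => canonG_ne_zero J h)

@[simp] lemma canonRep_apply (n a : ℕ) : canonRep J n a = canonG J n a := rfl

lemma canonRep_mem (n : ℕ) :
    ↑(canonRep J n).support ⊆ Aset J ∧ (∀ a ∈ (canonRep J n).support, canonRep J n a ∈ Mset J) ∧
      (canonRep J n).sum (fun a m => m * a) = n := by
  refine ⟨?_, ?_, ?_⟩
  · intro a ha
    have h : canonG J n a ≠ 0 := by
      simpa using Finsupp.mem_support_iff.1 ha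
    obtain ⟨e, _, heq⟩ := Finset.mem_image.1 (canonG_ne_zero J h)
    exact ⟨tPart J e, tPart_mem_TJ J e, heq.symm⟩
  · intro a ha
    have h : canonG J n a ≠ 0 := by
      simpa using Finsupp.mem_support_iff.1 ha
    refine ⟨Nat.pos_of_ne_zero h, ?_⟩
    intro i hi
    rw [canonRep_apply, canonG, bitset_ofBits] at hi
    obtain ⟨e, _, heq⟩ := Finset.mem_image.1 hi
    rw [← heq]
    exact sPart_mem_SJ J e
  · rw [Finsupp.sum]
    have hsub : (canonRep J n).support ⊆ (bitset n).image (fun e => 2 ^ tPart J e) :=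
      Finsupp.support_onFinset_subset
    rw [Finset.sum_subset hsub (fun a _ ha => by
      have : canonRep J n a = 0 := Finsupp.notMem_support_iff.1 ha
      simp [this])]
    have key : ∀ a ∈ (bitset n).image (fun e => 2 ^ tPart J e),
        canonRep J n a * a = ∑ e ∈ (bitset n).filter (fun e => 2 ^ tPart J e = a), 2 ^ e := by
      intro a ha
      obtain ⟨e₀, he₀, ha₀⟩ := Finset.mem_image.1 ha
      set Φ := (bitset n).filter (fun e => 2 ^ tPart J e = a) with hΦ
      have htp : ∀ e ∈ Φ, tPart J e = tPart J e₀ := by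
        intro e he
        exact two_pow_inj (((Finset.mem_filter.1 he).2).trans ha₀.symm)
      have hinj : ∀ x ∈ Φ, ∀ y ∈ Φ, sPart J x = sPart J y → x = y := by
        intro x hx y hy hxy
        have := sPart_add_tPart J x
        rw [hxy, htp x hx, ← htp y hy, sPart_add_tPart J y] at this
        omega
      rw [canonRep_apply, canonG, ← hΦ, ← ha₀, ofBits, Finset.sum_mul, Finset.sum_image hinj]
      refine Finset.sum_congr rfl fun e he => ?_
      rw [← pow_add, ← htp e he, sPart_add_tPart]
    rw [Finset.sum_congr rfl key, Finset.sum_fiberwise_of_maps_to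
      (fun e he => Finset.mem_image_of_mem _ he), ← ofBits, ofBits_bitset]

lemma rep_eq_canon (n : ℕ) (f' : ℕ →₀ ℕ)
    (hA : ↑f'.support ⊆ Aset J) (hM : ∀ a ∈ f'.support, f' a ∈ Mset J)
    (hs : f'.sum (fun a m => m * a) = n) : f' = canonRep J n := by
  have hτ : ∀ a ∈ f'.support, a = 2 ^ Nat.log 2 a ∧ Nat.log 2 a ∈ TJ J := by
    intro a ha
    obtain ⟨t, ht, rfl⟩ := hA ha
    rw [Nat.log_pow one_lt_two]
    exact ⟨rfl, ht⟩
  have hF : ∀ a ∈ f'.support, ∀ s ∈ bitset (f' a),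
      sPart J (s + Nat.log 2 a) = s ∧ tPart J (s + Nat.log 2 a) = Nat.log 2 a := by
    intro a ha s hsmem
    have hsS : s ∈ SJ J := (hM a ha).2 s hsmem
    exact sPart_tPart_eq J hsS (hτ a ha).2
  set U := f'.support.biUnion (fun a => (bitset (f' a)).image (· + Nat.log 2 a)) with hUdef
  have hdisj : (↑f'.support : Set ℕ).PairwiseDisjoint
      (fun a => (bitset (f' a)).image (· + Nat.log 2 a)) := by
    intro a ha b hb hab
    refine Finset.disjoint_left.2 fun i hia hib => hab ?_
    obtain ⟨s, hsmem, hsi⟩ := Finset.mem_image.1 hia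
    obtain ⟨s', hsmem', hsi'⟩ := Finset.mem_image.1 hib
    have h1 := (hF a ha s hsmem).2
    have h2 := (hF b hb s' hsmem').2
    rw [hsi] at h1
    rw [hsi'] at h2
    have : Nat.log 2 a = Nat.log 2 b := by rw [← h1, h2]
    rw [(hτ a ha).1, (hτ b hb).1, this]
  have hU : ofBits U = n := by
    rw [ofBits, hUdef, Finset.sum_biUnion hdisj, ← hs, Finsupp.sum]
    refine Finset.sum_congr rfl fun a ha => ?_
    rw [Finset.sum_image (fun x _ y _ h => by omega)]
    have : ∀ s ∈ bitset (f' a), 2 ^ (s + Nat.log 2 a) = 2 ^ s * 2 ^ Nat.log 2 a := fun s _ => pow_add 2 s (Nat.log 2 a)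
    rw [Finset.sum_congr rfl this, ← Finset.sum_mul, ← ofBits, ofBits_bitset]
    rw [← (hτ a ha).1]
  have hUbit : bitset n = U := by rw [← hU, bitset_ofBits]
  ext a
  rw [canonRep_apply, canonG, hUbit]
  by_cases ha : a ∈ f'.support
  · have hfib : U.filter (fun e => 2 ^ tPart J e = a) = (bitset (f' a)).image (· + Nat.log 2 a) := by
      ext i
      simp only [Finset.mem_filter, hUdef, Finset.mem_biUnion]
      constructor
      · rintro ⟨⟨b, hb, hib⟩, heq⟩
        obtain ⟨s, hsmem, hsi⟩ := Finset.mem_image.1 hib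
        have h2 := (hF b hb s hsmem).2
        rw [hsi] at h2
        have hba : b = a := by
          rw [(hτ b hb).1, ← h2, heq]
        rw [← hba]
        exact hib
      · intro hi
        obtain ⟨s, hsmem, hsi⟩ := Finset.mem_image.1 hi
        have h2 := (hF a ha s hsmem).2
        rw [hsi] at h2
        exact ⟨⟨a, ha, hi⟩, by rw [h2, ← (hτ a ha).1]⟩
    rw [hfib, Finset.image_image]
    have himg : (bitset (f' a)).image (sPart J ∘ (· + Nat.log 2 a)) = bitset (f' a) := by
      rw [show (bitset (f' a)).image (sPart J ∘ (· + Nat.log 2 a)) =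
          (bitset (f' a)).image id from Finset.image_congr
          (fun s hsmem => (hF a ha s hsmem).1), Finset.image_id]
    rw [himg, ofBits_bitset]
  · rw [Finsupp.notMem_support_iff.1 ha]
    have hfib : U.filter (fun e => 2 ^ tPart J e = a) = ∅ := by
      rw [Finset.filter_eq_empty_iff]
      intro e he heq
      obtain ⟨b, hb, hib⟩ := Finset.mem_biUnion.1 he
      obtain ⟨s, hsmem, hsi⟩ := Finset.mem_image.1 hib
      have h2 := (hF b hb s hsmem).2
      rw [hsi] at h2
      apply ha
      have : b = a := by rw [(hτ b hb).1, ← h2, heq]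
      rwa [← this]
    rw [hfib, Finset.image_empty, ofBits_empty]

lemma repSet_eq (n : ℕ) :
    {f : ℕ →₀ ℕ | ↑f.support ⊆ Aset J ∧ (∀ a ∈ f.support, f a ∈ Mset J) ∧
      f.sum (fun a m => m * a) = n} = {canonRep J n} := by
  ext f'
  constructor
  · rintro ⟨h1, h2, h3⟩
    exact rep_eq_canon J n f' h1 h2 h3
  · rintro rfl
    exact canonRep_mem J n


lemma bitset_two_pow (i : ℕ) : bitset (2 ^ i) = {i} := by
  rw [← ofBits_singleton, bitset_ofBits]

end
end Stmt3Aux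

open Stmt3Aux

theorem stmt3 (w : ℕ → ℕ) (hmono : Monotone w) (hw : Tendsto w atTop atTop) :
    ∃ A M : Set ℕ, A.Infinite ∧ M.Infinite ∧ (∀ a ∈ A, 0 < a) ∧ (∀ m ∈ M, 0 < m) ∧
      (∀ n : ℕ, 0 < n → pCount A M n = 1) ∧
      (∀ᶠ n : ℕ in atTop,
        Real.logb 2 n / (w n : ℝ) ≤ ((A ∩ Set.Icc 1 n).ncard : ℝ)) := by
  classical
  have hB : ∀ k : ℕ, ∃ B : ℕ, ∀ m ≥ B, 2 ^ (k + 2) ≤ w m := fun k =>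
    Filter.eventually_atTop.1 (hw.eventually_ge_atTop (2 ^ (k + 2)))
  choose B hBspec using hB
  let j : ℕ → ℕ := fun k => Nat.rec (B 0) (fun k ih => max (ih + 1) (B (k + 1))) k
  have hjmono : StrictMono j :=
    strictMono_nat_of_lt_succ fun k => lt_of_lt_of_le (Nat.lt_succ_self _) (le_max_left _ _)
  have hjB : ∀ k, B k ≤ j k := by
    intro k
    cases k with
    | zero => exact le_rfl
    | succ k => exact le_max_right _ _
  set jj : ℕ → ℕ := fun k => 2 * j k + 1 with hjjdef
  have hjjmono : StrictMono jj := fun a b h => by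
    have := hjmono h
    simp only [hjjdef]
    omega
  set J : Set ℕ := Set.range jj with hJdef
  have hodd : ∀ i ∈ J, i % 2 = 1 := by
    rintro i ⟨k, rfl⟩
    simp only [hjjdef]
    omega
  have hkey : ∀ k n, (2:ℕ) ^ 2 ^ jj k ≤ n → 2 ^ (k + 2) ≤ w n := by
    intro k n hn
    apply hBspec k
    have h1 : B k ≤ jj k := le_trans (hjB k) (by simp only [hjjdef]; omega)
    have h2 : jj k < 2 ^ jj k := Nat.lt_two_pow_self
    have h3 : 2 ^ jj k ≤ 2 ^ 2 ^ jj k := Nat.pow_le_pow_right (by norm_num) (le_of_lt h2)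
    omega
  refine ⟨Aset J, Mset J, ?_, ?_, ?_, ?_, ?_, ?_⟩
  · -- A infinite
    refine Set.infinite_of_injective_forall_mem
      (f := fun c : ℕ => (2:ℕ) ^ (2:ℕ) ^ (2 * c)) ?_ ?_
    · intro a b hab
      have := two_pow_inj (two_pow_inj hab)
      omega
    · intro c
      refine ⟨2 ^ (2 * c), ?_, rfl⟩
      intro i hi
      rw [bitset_two_pow, Finset.mem_singleton] at hi
      subst hi
      intro hiJ
      have := hodd _ hiJ
      omega
  · -- M infinite
    refine Set.infinite_of_injective_forall_mem
      (f := fun k : ℕ => (2:ℕ) ^ (2:ℕ) ^ jj k) ?_ ?_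
    · intro a b hab
      exact hjjmono.injective (two_pow_inj (two_pow_inj hab))
    · intro k
      refine ⟨Nat.pow_pos (by norm_num), ?_⟩
      intro i hi
      rw [bitset_two_pow, Finset.mem_singleton] at hi
      subst hi
      intro b hb
      rw [bitset_two_pow, Finset.mem_singleton] at hb
      subst hb
      exact ⟨k, rfl⟩
  · rintro a ⟨t, _, rfl⟩
    exact Nat.pow_pos (by norm_num)
  · rintro m ⟨hm, _⟩
    exact hm
  · intro n hn
    rw [pCount, repSet_eq J n, Set.ncard_singleton]
  · -- density
    filter_upwards [hw.eventually_ge_atTop 2, eventually_ge_atTop 2] with n hwn hn2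
    set r := Nat.log 2 n with hrdef
    set ρ := Nat.log 2 (r + 1) with hρdef
    set Jfin := (Finset.range ρ).filter (· ∈ J) with hJfin
    set k := Jfin.card with hk
    set R := Finset.range ρ \ Jfin with hR
    have hRcard : R.card = ρ - k := by
      rw [hR, Finset.card_sdiff_of_subset (Finset.filter_subset _ _), Finset.card_range, hk]
    set W := R.powerset.image (fun F => (2:ℕ) ^ ofBits F) with hW
    have hWcard : W.card = 2 ^ (ρ - k) := by
      have hinj : Function.Injective (fun F => (2:ℕ) ^ ofBits F) :=
        fun a b h => ofBits_injective (two_pow_inj h)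
      rw [hW, Finset.card_image_of_injective _ hinj, Finset.card_powerset, hRcard]
    have hWsub : ↑W ⊆ Aset J ∩ Set.Icc 1 n := by
      intro a haW
      rw [hW, Finset.coe_image] at haW
      obtain ⟨F, hF, rfl⟩ := haW
      rw [Finset.mem_coe, Finset.mem_powerset] at hF
      constructor
      · refine ⟨ofBits F, ?_, rfl⟩
        intro i hi
        rw [bitset_ofBits] at hi
        obtain ⟨hiρ, hiJf⟩ := Finset.mem_sdiff.1 (hF hi)
        intro hiJ
        exact hiJf (Finset.mem_filter.2 ⟨hiρ, hiJ⟩)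
      · have h2ρ : 2 ^ ρ ≤ r + 1 := Nat.pow_log_le_self 2 (by omega)
        have hFρ : F ⊆ Finset.range ρ := hF.trans Finset.sdiff_subset
        have hlt : ofBits F < 2 ^ ρ := ofBits_lt hFρ
        have hle : ofBits F ≤ r := by omega
        constructor
        · exact Nat.one_le_two_pow
        · calc (2:ℕ) ^ ofBits F ≤ 2 ^ r := Nat.pow_le_pow_right (by norm_num) hle
            _ ≤ n := Nat.pow_log_le_self 2 (by omega)
    have hfin : (Aset J ∩ Set.Icc 1 n).Finite :=
      Set.Finite.inter_of_right (Set.finite_Icc 1 n) _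
    have hcard_le : (2:ℕ) ^ (ρ - k) ≤ (Aset J ∩ Set.Icc 1 n).ncard := by
      rw [← hWcard, ← Set.ncard_coe_finset]
      exact Set.ncard_le_ncard hWsub hfin
    have hwk : 2 ^ (k + 1) ≤ w n := by
      rcases Nat.eq_zero_or_pos k with hk0 | hk0
      · rw [hk0]
        simpa using hwn
      · have hjlt : jj (k - 1) < ρ := by
          by_contra hcon
          push_neg at hcon
          have hsub : Jfin ⊆ Finset.image jj (Finset.range (k - 1)) := by
            intro x hx
            obtain ⟨hxρ, hxJ⟩ := Finset.mem_filter.1 hx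
            rw [Finset.mem_range] at hxρ
            obtain ⟨i, rfl⟩ := hxJ
            have hik : i < k - 1 := by
              by_contra hik
              push_neg at hik
              have := hjjmono.monotone hik
              omega
            exact Finset.mem_image_of_mem _ (Finset.mem_range.2 hik)
          have h1 := Finset.card_le_card hsub
          have h2 := Finset.card_image_le (s := Finset.range (k - 1)) (f := jj)
          rw [Finset.card_range] at h2
          omega
        have h2ρ : 2 ^ ρ ≤ r + 1 := Nat.pow_log_le_self 2 (by omega)
        have h1 : 2 * 2 ^ jj (k - 1) ≤ 2 ^ ρ := by
          calc 2 * 2 ^ jj (k - 1) = 2 ^ (jj (k - 1) + 1) := by ring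
            _ ≤ 2 ^ ρ := Nat.pow_le_pow_right (by norm_num) (by omega)
        have hx1 : 1 ≤ 2 ^ jj (k - 1) := Nat.one_le_two_pow
        have hjr : 2 ^ jj (k - 1) ≤ r := by omega
        have hnn : (2:ℕ) ^ 2 ^ jj (k - 1) ≤ n :=
          le_trans (Nat.pow_le_pow_right (by norm_num) hjr) (Nat.pow_log_le_self 2 (by omega))
        have hres := hkey (k - 1) n hnn
        have heq : k - 1 + 2 = k + 1 := by omega
        rwa [heq] at hres
    have hkρ : k ≤ ρ := by
      have h := Finset.card_le_card (Finset.filter_subset (fun x => x ∈ J) (Finset.range ρ))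
      rw [Finset.card_range] at h
      exact le_trans (le_of_eq (by rw [hk, hJfin])) h
    have hnat : r + 1 ≤ w n * 2 ^ (ρ - k) := by
      have h1 : r + 1 < 2 ^ (ρ + 1) := Nat.lt_pow_succ_log_self (by norm_num) (r + 1)
      have h2 : (2:ℕ) ^ (ρ + 1) = 2 ^ (k + 1) * 2 ^ (ρ - k) := by
        rw [← pow_add]
        congr 1
        omega
      have h3 : (2:ℕ) ^ (k + 1) * 2 ^ (ρ - k) ≤ w n * 2 ^ (ρ - k) :=
        Nat.mul_le_mul_right _ hwk
      omega
    have hw0 : (0:ℝ) < (w n : ℝ) := by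
      have h : (2:ℕ) ≤ w n := hwn
      have : (0:ℕ) < w n := by omega
      exact_mod_cast this
    have hlogb : Real.logb 2 n ≤ (r : ℝ) + 1 := by
      have hnlt : (n : ℝ) ≤ ((2:ℝ) ^ (r + 1)) := by
        exact_mod_cast (Nat.lt_pow_succ_log_self (by norm_num) n).le
      calc Real.logb 2 n ≤ Real.logb 2 ((2:ℝ) ^ (r + 1)) :=
            Real.logb_le_logb_of_le (by norm_num) (by positivity) hnlt
        _ = (r : ℝ) + 1 := by
            rw [Real.logb_pow, Real.logb_self_eq_one (by norm_num)]
            push_cast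
            ring
    rw [div_le_iff₀ hw0]
    calc Real.logb 2 n ≤ (r : ℝ) + 1 := hlogb
      _ ≤ (w n : ℝ) * (2:ℝ) ^ (ρ - k) := by exact_mod_cast hnat
      _ ≤ ((Aset J ∩ Set.Icc 1 n).ncard : ℝ) * (w n : ℝ) := by
          rw [mul_comm]
          have h : ((2:ℝ) ^ (ρ - k)) ≤ ((Aset J ∩ Set.Icc 1 n).ncard : ℝ) := by
            exact_mod_cast hcard_le
          exact mul_le_mul_of_nonneg_right h (le_of_lt hw0)
end

section
/- Let A be an infinite set of positive integers with 1 ∈ A such that |A ∩ {1,...,n}| = (1+o(1)) · (log n)/(log log n) as n → ∞. Then for every ε > 0 there exist an integer n₀ and an infinite set M of positive integers such that 0 < p(n,A,M) ≤ n^{8+ε} for all n > n₀. -/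
open Filter

open Filter

namespace Stmt6Aux

/-- counting function of A -/
noncomputable def cnt (A : Set ℕ) (x : ℕ) : ℕ := (A ∩ Set.Icc 1 x).ncard

/-- the k-th smallest element of A (0-indexed) -/
noncomputable def elt (A : Set ℕ) (k : ℕ) : ℕ := sInf {x | k + 1 ≤ cnt A x}

lemma finite_inter (A : Set ℕ) (x : ℕ) : (A ∩ Set.Icc 1 x).Finite :=
  (Set.finite_Icc 1 x).inter_of_right _

lemma cnt_mono (A : Set ℕ) {x y : ℕ} (h : x ≤ y) : cnt A x ≤ cnt A y :=
  Set.ncard_le_ncard (Set.inter_subset_inter_right _ (Set.Icc_subset_Icc_right h))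
    (finite_inter A y)

lemma cnt_zero (A : Set ℕ) : cnt A 0 = 0 := by
  simp [cnt]

lemma cnt_succ_le (A : Set ℕ) (x : ℕ) : cnt A (x + 1) ≤ cnt A x + 1 := by
  have hsub : A ∩ Set.Icc 1 (x + 1) ⊆ (A ∩ Set.Icc 1 x) ∪ {x + 1} := by
    rintro y ⟨hyA, hy1, hy2⟩
    rcases Nat.lt_or_ge y (x + 1) with h | h
    · exact Or.inl ⟨hyA, hy1, Nat.lt_succ_iff.mp h⟩
    · exact Or.inr (le_antisymm hy2 h)
  calc cnt A (x + 1) ≤ ((A ∩ Set.Icc 1 x) ∪ {x + 1}).ncard :=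
        Set.ncard_le_ncard hsub (((finite_inter A x)).union (Set.finite_singleton _))
    _ ≤ (A ∩ Set.Icc 1 x).ncard + ({x + 1} : Set ℕ).ncard := Set.ncard_union_le _ _
    _ = cnt A x + 1 := by rw [Set.ncard_singleton]; rfl

lemma cnt_of_not_mem (A : Set ℕ) {x : ℕ} (hx : (x + 1) ∉ A) : cnt A (x + 1) = cnt A x := by
  have : A ∩ Set.Icc 1 (x + 1) = A ∩ Set.Icc 1 x := by
    ext y
    constructor
    · rintro ⟨hyA, hy1, hy2⟩
      refine ⟨hyA, hy1, ?_⟩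
      rcases Nat.lt_or_ge y (x + 1) with h | h
      · exact Nat.lt_succ_iff.mp h
      · exact absurd (le_antisymm hy2 h ▸ hyA) hx
    · rintro ⟨hyA, hy1, hy2⟩
      exact ⟨hyA, hy1, hy2.trans (Nat.le_succ x)⟩
  simp [cnt, this]

lemma cnt_one (A : Set ℕ) (h1 : 1 ∈ A) : cnt A 1 = 1 := by
  have : A ∩ Set.Icc 1 1 = {1} := by
    ext y; simp only [Set.mem_inter_iff, Set.mem_Icc, Set.mem_singleton_iff]
    constructor
    · rintro ⟨_, hy1, hy2⟩; omega
    · rintro rfl; exact ⟨h1, le_refl 1, le_refl 1⟩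
  rw [cnt, this, Set.ncard_singleton]

lemma cnt_set_nonempty (A : Set ℕ) (hA : A.Infinite) (hApos : ∀ a ∈ A, 0 < a) (k : ℕ) :
    {x | k + 1 ≤ cnt A x}.Nonempty := by
  obtain ⟨t, htA, htcard⟩ := hA.exists_subset_card_eq (k + 1)
  rcases t.eq_empty_or_nonempty with rfl | hne
  · simp at htcard
  · refine ⟨t.max' hne, ?_⟩
    have hsub : (↑t : Set ℕ) ⊆ A ∩ Set.Icc 1 (t.max' hne) := by
      intro y hy
      exact ⟨htA hy, hApos y (htA hy), t.le_max' y hy⟩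
    calc k + 1 = t.card := htcard.symm
      _ = (↑t : Set ℕ).ncard := (Set.ncard_coe_finset t).symm
      _ ≤ cnt A (t.max' hne) := Set.ncard_le_ncard hsub (finite_inter _ _)

lemma elt_spec (A : Set ℕ) (hA : A.Infinite) (hApos : ∀ a ∈ A, 0 < a) (k : ℕ) :
    k + 1 ≤ cnt A (elt A k) :=
  Nat.sInf_mem (cnt_set_nonempty A hA hApos k)

lemma elt_le (A : Set ℕ) {k y : ℕ} (h : k + 1 ≤ cnt A y) : elt A k ≤ y :=
  Nat.sInf_le h

lemma elt_pos (A : Set ℕ) (hA : A.Infinite) (hApos : ∀ a ∈ A, 0 < a) (k : ℕ) :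
    1 ≤ elt A k := by
  rcases Nat.eq_zero_or_pos (elt A k) with h | h
  · have := elt_spec A hA hApos k
    rw [h, cnt_zero] at this
    omega
  · exact h

lemma elt_mem (A : Set ℕ) (hA : A.Infinite) (hApos : ∀ a ∈ A, 0 < a) (k : ℕ) :
    elt A k ∈ A := by
  set e := elt A k with he
  have hpos : 1 ≤ e := elt_pos A hA hApos k
  obtain ⟨x, hx⟩ : ∃ x, e = x + 1 := ⟨e - 1, by omega⟩
  by_contra hmem
  have h1 : cnt A (x + 1) = cnt A x := cnt_of_not_mem A (hx ▸ hmem)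
  have h2 : k + 1 ≤ cnt A (x + 1) := hx ▸ elt_spec A hA hApos k
  have h3 : elt A k ≤ x := elt_le A (h1 ▸ h2)
  omega

lemma cnt_elt_le (A : Set ℕ) (hA : A.Infinite) (hApos : ∀ a ∈ A, 0 < a) (k : ℕ) :
    cnt A (elt A k) ≤ k + 1 := by
  set e := elt A k with he
  have hpos : 1 ≤ e := elt_pos A hA hApos k
  obtain ⟨x, hx⟩ : ∃ x, e = x + 1 := ⟨e - 1, by omega⟩
  have hlt : ¬ (k + 1 ≤ cnt A x) := by
    intro h
    have := elt_le A h
    omega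
  have := cnt_succ_le A x
  rw [← hx] at this
  omega

lemma elt_lt_succ (A : Set ℕ) (hA : A.Infinite) (hApos : ∀ a ∈ A, 0 < a) (k : ℕ) :
    elt A k < elt A (k + 1) := by
  by_contra h
  push_neg at h
  have h1 : k + 2 ≤ cnt A (elt A (k + 1)) := elt_spec A hA hApos (k + 1)
  have h2 : cnt A (elt A (k + 1)) ≤ cnt A (elt A k) := cnt_mono A h
  have h3 := cnt_elt_le A hA hApos k
  omega

lemma elt_strictMono (A : Set ℕ) (hA : A.Infinite) (hApos : ∀ a ∈ A, 0 < a) :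
    StrictMono (elt A) :=
  strictMono_nat_of_lt_succ (elt_lt_succ A hA hApos)

lemma elt_zero (A : Set ℕ) (h1 : 1 ∈ A) : elt A 0 = 1 := by
  have hle : elt A 0 ≤ 1 := elt_le A (by rw [cnt_one A h1])
  have : 1 ≤ elt A 0 := by
    rcases Nat.eq_zero_or_pos (elt A 0) with h | h
    · exfalso
      have h2 := Nat.sInf_mem (⟨1, by simp [cnt_one A h1]⟩ : {x | 0 + 1 ≤ cnt A x}.Nonempty)
      rw [show elt A 0 = sInf {x | 0 + 1 ≤ cnt A x} from rfl] at h
      rw [h] at h2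
      simp [cnt_zero] at h2
    · exact h
  omega

end Stmt6Aux
namespace Stmt6Aux

/-- capacity sequence -/
noncomputable def CC (A : Set ℕ) (C0 : ℕ) : ℕ → ℕ
  | 0 => C0
  | t + 1 => CC A C0 t + (Nat.log 2 (CC A C0 t)) ^ 6 *
      ((((CC A C0 t) + 1) / elt A (t + 1)) * elt A (t + 1))

/-- weight at step t (used with element elt A (t+1)) -/
noncomputable def Wt (A : Set ℕ) (C0 t : ℕ) : ℕ := ((CC A C0 t) + 1) / elt A (t + 1)

/-- digit bound at step t -/
noncomputable def Bt (A : Set ℕ) (C0 t : ℕ) : ℕ := (Nat.log 2 (CC A C0 t)) ^ 6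

/-- the set M of allowed multiplicities -/
noncomputable def MM (A : Set ℕ) (C0 : ℕ) : Set ℕ :=
  Set.Icc 1 C0 ∪ {m | ∃ t d : ℕ, 1 ≤ d ∧ d ≤ Bt A C0 t ∧ m = d * Wt A C0 t}

lemma CC_succ (A : Set ℕ) (C0 t : ℕ) :
    CC A C0 (t + 1) = CC A C0 t + Bt A C0 t * (Wt A C0 t * elt A (t + 1)) := by
  rw [CC, Bt, Wt]

lemma CC_le_succ (A : Set ℕ) (C0 t : ℕ) : CC A C0 t ≤ CC A C0 (t + 1) := by
  rw [CC_succ]; exact Nat.le_add_right _ _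

lemma CC_mono (A : Set ℕ) (C0 : ℕ) : Monotone (CC A C0) :=
  monotone_nat_of_le_succ (CC_le_succ A C0)

section Growth

variable (A : Set ℕ) (C0 : ℕ) (hA : A.Infinite) (hApos : ∀ a ∈ A, 0 < a)

lemma Wa_le (t : ℕ) : Wt A C0 t * elt A (t + 1) ≤ CC A C0 t + 1 :=
  Nat.div_mul_le_self _ _

include hA hApos in
lemma Wa_ge (t : ℕ) (hsq : (elt A (t + 1)) ^ 2 ≤ CC A C0 t) :
    CC A C0 t + 1 ≤ 2 * (Wt A C0 t * elt A (t + 1)) := by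
  have hapos : 1 ≤ elt A (t + 1) := elt_pos A hA hApos (t + 1)
  have h2a : 2 * elt A (t + 1) ≤ CC A C0 t + 2 := by nlinarith [hsq]
  have key : Wt A C0 t * elt A (t + 1) + (CC A C0 t + 1) % elt A (t + 1)
      = CC A C0 t + 1 := by
    rw [Wt]; exact Nat.div_add_mod' _ _
  have hmod : (CC A C0 t + 1) % elt A (t + 1) < elt A (t + 1) :=
    Nat.mod_lt _ (by omega)
  omega

include hA hApos in
lemma W_ge_sqrt (t : ℕ) (hsq : (elt A (t + 1)) ^ 2 ≤ CC A C0 t) :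
    Nat.sqrt (CC A C0 t) ≤ Wt A C0 t := by
  have hapos : 1 ≤ elt A (t + 1) := elt_pos A hA hApos (t + 1)
  rw [Wt, Nat.le_div_iff_mul_le (by omega : 0 < elt A (t + 1))]
  have h1 : elt A (t + 1) ≤ Nat.sqrt (CC A C0 t) := Nat.le_sqrt.mpr (by nlinarith [hsq])
  have h2 : Nat.sqrt (CC A C0 t) * Nat.sqrt (CC A C0 t) ≤ CC A C0 t := by
    have := Nat.sqrt_le' (CC A C0 t); nlinarith [this]
  calc Nat.sqrt (CC A C0 t) * elt A (t + 1)
      ≤ Nat.sqrt (CC A C0 t) * Nat.sqrt (CC A C0 t) := Nat.mul_le_mul_left _ h1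
    _ ≤ CC A C0 t := h2
    _ ≤ CC A C0 t + 1 := Nat.le_succ _

lemma log2_ge_two {C : ℕ} (hbig : 16 ≤ C) : 2 ≤ Nat.log 2 C := by
  have h4 : Nat.log 2 16 ≤ Nat.log 2 C := Nat.log_mono_right hbig
  rw [show (16:ℕ) = 2 ^ 4 by norm_num, Nat.log_pow (by norm_num)] at h4
  omega

include hA hApos in
lemma CC_growth_lower (t : ℕ) (hsq : (elt A (t + 1)) ^ 2 ≤ CC A C0 t)
    (hbig : 16 ≤ CC A C0 t) :
    CC A C0 t * (Nat.log 2 (CC A C0 t)) ^ 5 ≤ CC A C0 (t + 1) := by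
  have hwa := Wa_ge A C0 hA hApos t hsq
  have hL2 : 2 ≤ Nat.log 2 (CC A C0 t) := log2_ge_two hbig
  rw [CC_succ, Bt]
  set C := CC A C0 t
  set L := Nat.log 2 C
  set V := Wt A C0 t * elt A (t + 1)
  have key : 2 * (C * L ^ 5) ≤ 2 * (L ^ 6 * V) := by
    calc 2 * (C * L ^ 5) ≤ L * (C * L ^ 5) := Nat.mul_le_mul_right _ hL2
      _ = L ^ 6 * C := by ring
      _ ≤ L ^ 6 * (C + 1) := Nat.mul_le_mul_left _ (Nat.le_succ _)
      _ ≤ L ^ 6 * (2 * V) := Nat.mul_le_mul_left _ hwa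
      _ = 2 * (L ^ 6 * V) := by ring
  omega

include hA hApos in
lemma CC_growth_upper (t : ℕ) (hbig : 16 ≤ CC A C0 t) :
    CC A C0 (t + 1) ≤ 2 * CC A C0 t * (Nat.log 2 (CC A C0 t)) ^ 6 := by
  have hwa := Wa_le A C0 t
  have hL2 : 2 ≤ Nat.log 2 (CC A C0 t) := log2_ge_two hbig
  rw [CC_succ, Bt]
  set C := CC A C0 t
  set L := Nat.log 2 C
  set V := Wt A C0 t * elt A (t + 1)
  have h2 : 4 ≤ L ^ 6 := by
    calc (4:ℕ) = 2 ^ 2 := by norm_num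
      _ ≤ L ^ 2 := Nat.pow_le_pow_left hL2 2
      _ ≤ L ^ 6 := Nat.pow_le_pow_right (by omega) (by norm_num)
  have h1 : L ^ 6 * V ≤ L ^ 6 * (C + 1) := Nat.mul_le_mul_left _ hwa
  nlinarith [hbig, h1, h2]

include hA hApos in
lemma CC_double (t : ℕ) (hsq : (elt A (t + 1)) ^ 2 ≤ CC A C0 t)
    (hbig : 16 ≤ CC A C0 t) :
    2 * CC A C0 t ≤ CC A C0 (t + 1) := by
  have h := CC_growth_lower A C0 hA hApos t hsq hbig
  have hL2 : 2 ≤ Nat.log 2 (CC A C0 t) := log2_ge_two hbig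
  refine le_trans ?_ h
  have : 2 ≤ (Nat.log 2 (CC A C0 t)) ^ 5 := by
    calc 2 ≤ Nat.log 2 (CC A C0 t) := hL2
      _ = (Nat.log 2 (CC A C0 t)) ^ 1 := (pow_one _).symm
      _ ≤ (Nat.log 2 (CC A C0 t)) ^ 5 := Nat.pow_le_pow_right (by omega) (by norm_num)
  nlinarith [this]

end Growth

end Stmt6Aux
namespace Stmt6Aux

set_option maxRecDepth 4000
set_option maxHeartbeats 1000000

noncomputable def Gr (x : ℕ) : ℝ := (Real.log x - 2) / (2 * Real.log (Real.log x))

lemma exp6_le : Real.exp 6 ≤ 700 := by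
  have h1 : Real.exp 1 ^ (6:ℕ) = Real.exp 6 := by
    rw [Real.exp_one_pow]; norm_num
  have h2 : Real.exp 1 ≤ 2.7182818286 := le_of_lt Real.exp_one_lt_d9
  have h3 : Real.exp 1 ^ (6:ℕ) ≤ (2.7182818286:ℝ) ^ (6:ℕ) :=
    pow_le_pow_left₀ (le_of_lt (Real.exp_pos 1)) h2 6
  have h4 : ((2.7182818286:ℝ)) ^ (6:ℕ) ≤ 700 := by norm_num
  linarith [h1 ▸ h3]

lemma log_ge_6 {u : ℝ} (hu : 700 ≤ u) : 6 ≤ Real.log u := by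
  rw [Real.le_log_iff_exp_le (by linarith : (0:ℝ) < u)]
  linarith [exp6_le]

lemma natlog2_bounds {x : ℕ} (hx : 2 ^ 1024 ≤ x) :
    700 ≤ Real.log x ∧ Real.log x ≤ (Nat.log 2 x : ℝ) ∧ (Nat.log 2 x : ℝ) ≤ 1.5 * Real.log x := by
  have hx0 : 0 < x := lt_of_lt_of_le (Nat.pow_pos (n := 1024) (by norm_num : 0 < 2)) hx
  have hxR : ((2:ℝ)) ^ (1024:ℕ) ≤ (x:ℝ) := by exact_mod_cast hx
  have hlog2l : (0.6931471803:ℝ) < Real.log 2 := Real.log_two_gt_d9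
  have hlog2u : Real.log 2 < 0.6931471808 := Real.log_two_lt_d9
  have hu : 700 ≤ Real.log x := by
    have h1 : Real.log ((2:ℝ) ^ (1024:ℕ)) ≤ Real.log x := Real.log_le_log (by positivity) hxR
    rw [Real.log_pow] at h1
    have h2 : (1024:ℝ) * Real.log 2 ≤ Real.log x := by exact_mod_cast h1
    clear h1 hxR hx
    nlinarith
  have hn2u : (Nat.log 2 x : ℝ) * Real.log 2 ≤ Real.log x := by
    have h1 : (2:ℕ) ^ (Nat.log 2 x) ≤ x := Nat.pow_log_le_self 2 (by omega)
    have h2 : ((2:ℝ)) ^ (Nat.log 2 x) ≤ (x:ℝ) := by exact_mod_cast h1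
    have h3 := Real.log_le_log (pow_pos (by norm_num : (0:ℝ) < 2) _) h2
    rw [Real.log_pow] at h3
    exact h3
  have hn2l : Real.log x < ((Nat.log 2 x : ℝ) + 1) * Real.log 2 := by
    have h1 : x < (2:ℕ) ^ (Nat.log 2 x + 1) := Nat.lt_pow_succ_log_self (by norm_num) x
    have h2 : (x:ℝ) < ((2:ℝ)) ^ (Nat.log 2 x + 1) := by exact_mod_cast h1
    have h3 := Real.log_lt_log (by exact_mod_cast hx0) h2
    rw [Real.log_pow] at h3
    push_cast at h3
    linarith
  have hn2nonneg : (0:ℝ) ≤ (Nat.log 2 x : ℝ) := Nat.cast_nonneg _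
  clear hx hxR hx0
  refine ⟨hu, ?_, ?_⟩
  · nlinarith
  · nlinarith

lemma key_step {x y : ℕ} (hx : 2 ^ 1024 ≤ x) (hlow : x * (Nat.log 2 x) ^ 5 ≤ y)
    (hupp : y ≤ 2 * x * (Nat.log 2 x) ^ 6) : Gr x + 1.5 ≤ Gr y := by
  obtain ⟨hu700, hn2l, hn2u⟩ := natlog2_bounds hx
  have hx0 : 0 < x := lt_of_lt_of_le (Nat.pow_pos (n := 1024) (by norm_num : 0 < 2)) hx
  have hxpos : (0:ℝ) < (x:ℝ) := by exact_mod_cast hx0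
  have hn2nat : 0 < Nat.log 2 x := by
    have h700 : (700:ℝ) ≤ (Nat.log 2 x : ℝ) := le_trans hu700 hn2l
    exact_mod_cast lt_of_lt_of_le (by norm_num : (0:ℝ) < 700) h700
  have hy0' : 0 < y :=
    lt_of_lt_of_le (Nat.mul_pos hx0 (Nat.pow_pos (n := 5) hn2nat)) hlow
  have hy0 : (0:ℝ) < (y:ℝ) := by exact_mod_cast hy0'
  have hlowR : (x:ℝ) * (Nat.log 2 x : ℝ) ^ 5 ≤ (y:ℝ) := by exact_mod_cast hlow
  have huppR : (y:ℝ) ≤ 2 * (x:ℝ) * (Nat.log 2 x : ℝ) ^ 6 := by exact_mod_cast hupp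
  clear hx hlow hupp
  set u := Real.log x with hudef
  set n2 := (Nat.log 2 x : ℝ) with hn2def
  have hn2pos : (0:ℝ) < n2 := by linarith
  have hS6 : 6 ≤ Real.log u := log_ge_6 hu700
  set S := Real.log u with hSdef
  have hu0 : (0:ℝ) < u := by linarith
  have hS0 : (0:ℝ) < S := by linarith
  -- lower bound on log y
  have hv1 : u + 5 * S ≤ Real.log y := by
    have h2 : Real.log ((x:ℝ) * n2 ^ 5) ≤ Real.log y :=
      Real.log_le_log (by positivity) hlowR
    rw [Real.log_mul (ne_of_gt hxpos) (by positivity), Real.log_pow] at h2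
    have h3 : S ≤ Real.log n2 := Real.log_le_log hu0 hn2l
    push_cast at h2
    linarith
  -- upper bound on log y
  have hv2 : Real.log y ≤ u + 7 * S := by
    have h2 : Real.log y ≤ Real.log (2 * (x:ℝ) * n2 ^ 6) := Real.log_le_log hy0 huppR
    rw [Real.log_mul (by positivity) (by positivity),
        Real.log_mul (by norm_num) (ne_of_gt hxpos), Real.log_pow] at h2
    have h3 : Real.log n2 ≤ Real.log (1.5 * u) := Real.log_le_log hn2pos hn2u
    rw [Real.log_mul (by norm_num) (ne_of_gt hu0)] at h3
    have h4 : Real.log 1.5 ≤ 0.5 := by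
      have := Real.log_le_sub_one_of_pos (show (0:ℝ) < 1.5 by norm_num)
      linarith
    have h5 : Real.log 2 < 0.6931471808 := Real.log_two_lt_d9
    push_cast at h2
    linarith
  set v := Real.log y with hvdef
  have hv700 : 700 ≤ v := by linarith
  have hv0 : (0:ℝ) < v := by linarith
  set T := Real.log v with hTdef
  have hTS : S ≤ T := Real.log_le_log hu0 (by linarith)
  have hT0 : (0:ℝ) < T := by linarith
  -- q := 7S/u
  set q : ℝ := 7 * S / u with hqdef
  have hq0 : 0 ≤ q := by positivity
  have hqu : q * u = 7 * S := by
    rw [hqdef, div_mul_cancel₀ _ (ne_of_gt hu0)]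
  have hq100 : q ≤ S / 100 := by nlinarith [mul_nonneg hq0 (by linarith : (0:ℝ) ≤ u - 700)]
  have hTq : T ≤ S + q := by
    have h1 : v ≤ u * (1 + q) := by
      have : u * (1 + q) = u + q * u := by ring
      rw [this, hqu]; linarith
    have h2 : T ≤ Real.log (u * (1 + q)) := Real.log_le_log hv0 h1
    rw [Real.log_mul (ne_of_gt hu0) (by positivity)] at h2
    have h3 : Real.log (1 + q) ≤ q := by
      have := Real.log_le_sub_one_of_pos (show (0:ℝ) < 1 + q by linarith)
      linarith
    linarith
  -- main polynomial inequality : (u - 2 + 3S) * T ≤ (v - 2) * S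
  have hpoly : (u - 2 + 3 * S) * T ≤ (v - 2) * S := by
    nlinarith [mul_nonneg (by linarith : (0:ℝ) ≤ u - 2 + 3 * S) (by linarith : (0:ℝ) ≤ S + q - T),
      mul_nonneg (by linarith : (0:ℝ) ≤ S) (by linarith : (0:ℝ) ≤ S / 100 - q),
      mul_nonneg hq0 (by linarith : (0:ℝ) ≤ u - 700), hqu, hS6, hv1]
  -- convert to divisions
  have hGx : Gr x = (u - 2) / (2 * S) := rfl
  have hGy : Gr y = (v - 2) / (2 * T) := rfl
  rw [hGx, hGy]
  have hsum : (u - 2) / (2 * S) + 1.5 = (u - 2 + 3 * S) / (2 * S) := by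
    field_simp
    ring
  rw [hsum, div_le_div_iff₀ (by linarith) (by linarith)]
  nlinarith [hpoly]

lemma sqrt_G {x : ℕ} (hx : 2 ^ 1024 ≤ x) :
    Gr x ≤ Real.log (Nat.sqrt x) / Real.log (Real.log (Nat.sqrt x)) := by
  obtain ⟨hu700, -, -⟩ := natlog2_bounds hx
  have hx1 : 1 ≤ x := le_trans (Nat.one_le_two_pow) hx
  have hxpos : (0:ℝ) < (x:ℝ) := by exact_mod_cast hx1
  clear hx
  set s := Nat.sqrt x with hsdef
  set u := Real.log x with hudef
  have hs1 : 1 ≤ s := Nat.sqrt_pos.mpr hx1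
  have hspos : (0:ℝ) < (s:ℝ) := by exact_mod_cast hs1
  have hsx : x ≤ 4 * s ^ 2 := by
    have h1 : x < (s + 1) ^ 2 := Nat.lt_succ_sqrt' x
    nlinarith [hs1]
  have hlogs_low : (u - 2) / 2 ≤ Real.log s := by
    have h1 : (x:ℝ) ≤ 4 * (s:ℝ) ^ 2 := by exact_mod_cast hsx
    have h2 : u ≤ Real.log (4 * (s:ℝ) ^ 2) := Real.log_le_log hxpos h1

    rw [Real.log_mul (by norm_num) (by positivity), Real.log_pow] at h2
    have h3 : Real.log 4 ≤ 2 := by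
      have h4 : (4:ℝ) = 2 * 2 := by norm_num
      rw [h4, Real.log_mul (by norm_num) (by norm_num)]
      linarith [Real.log_two_lt_d9]
    push_cast at h2
    linarith
  have hlogs_up : Real.log s ≤ u := by
    have h1 : (s:ℝ) ≤ (x:ℝ) := by exact_mod_cast Nat.sqrt_le_self x
    exact Real.log_le_log hspos h1
  have hlogs_pos : 300 ≤ Real.log s := by linarith
  have hll_pos : 0 < Real.log (Real.log s) := Real.log_pos (by linarith)
  have hll_le : Real.log (Real.log s) ≤ Real.log u := Real.log_le_log (by linarith) hlogs_up
  rw [Gr, ← hudef, ← div_div]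
  exact div_le_div₀ (by linarith) (by linarith [hlogs_low]) hll_pos hll_le

lemma aux_div_log : Filter.Tendsto (fun y : ℝ => (y - 2) / (2 * Real.log y)) Filter.atTop Filter.atTop := by
  rw [Filter.tendsto_atTop]
  intro b
  have hc : (0:ℝ) < 1 / (8 * (|b| + 1)) := by positivity
  have h := Real.isLittleO_log_id_atTop.def hc
  filter_upwards [h, Filter.eventually_ge_atTop (4 : ℝ)] with y h1 h2
  have hy0 : (0:ℝ) < y := by linarith
  have hlogy : 0 < Real.log y := Real.log_pos (by linarith)
  simp only [Real.norm_eq_abs, id_eq, abs_of_pos hlogy, abs_of_pos hy0] at h1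
  -- h1 : log y ≤ (1/(8(|b|+1))) * y
  have habs : 0 < |b| + 1 := by positivity
  have key : (y / 2) / (2 * (1 / (8 * (|b| + 1))) * y) ≤ (y - 2) / (2 * Real.log y) := by
    apply div_le_div₀ (by linarith) (by linarith) (by linarith)
    calc 2 * Real.log y ≤ 2 * ((1 / (8 * (|b| + 1))) * y) := by linarith
      _ = 2 * (1 / (8 * (|b| + 1))) * y := by ring
  have hval : (y / 2) / (2 * (1 / (8 * (|b| + 1))) * y) = 2 * (|b| + 1) := by
    field_simp
    ring
  rw [hval] at key
  calc b ≤ |b| := le_abs_self b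
    _ ≤ 2 * (|b| + 1) := by linarith [abs_nonneg b]
    _ ≤ (y - 2) / (2 * Real.log y) := key

lemma Gr_tendsto : Filter.Tendsto (fun x : ℕ => Gr x) Filter.atTop Filter.atTop := by
  have h1 : Filter.Tendsto (fun x : ℕ => Real.log x) Filter.atTop Filter.atTop :=
    Real.tendsto_log_atTop.comp tendsto_natCast_atTop_atTop
  have := aux_div_log.comp h1
  simpa [Function.comp_def, Gr] using this

end Stmt6Aux
namespace Stmt6Aux

lemma sixteen_le_pow : (16:ℕ) ≤ 2 ^ 1024 := by
  have h : (2:ℕ) ^ 4 ≤ 2 ^ 1024 := Nat.pow_le_pow_right (by norm_num) (by norm_num)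
  simpa using h

section Invariant

variable (A : Set ℕ) (C0 N1 : ℕ) (hA : A.Infinite) (hApos : ∀ a ∈ A, 0 < a)
  (hdlow : ∀ x : ℕ, N1 ≤ x → 0.99 * (Real.log x / Real.log (Real.log x)) ≤ (cnt A x : ℝ))

include hdlow in
lemma elt_sq_of (t : ℕ) (h1 : 2 ^ 1024 ≤ CC A C0 t) (h2 : N1 ^ 2 ≤ CC A C0 t)
    (h3 : ((t:ℝ) + 4 ≤ 0.99 * Gr (CC A C0 t))) :
    (elt A (t + 1)) ^ 2 ≤ CC A C0 t := by
  set C := CC A C0 t with hC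
  set s := Nat.sqrt C with hs
  have hsN1 : N1 ≤ s := by
    have h := Nat.sqrt_le_sqrt h2
    rwa [Nat.sqrt_eq'] at h
  have hcnt : 0.99 * (Real.log s / Real.log (Real.log s)) ≤ (cnt A s : ℝ) := hdlow s hsN1
  have hG : Gr C ≤ Real.log s / Real.log (Real.log s) := sqrt_G h1
  have hGm : 0.99 * Gr C ≤ 0.99 * (Real.log s / Real.log (Real.log s)) :=
    mul_le_mul_of_nonneg_left hG (by norm_num)
  clear h1 h2 hG
  have ht4 : ((t:ℝ) + 4) ≤ (cnt A s : ℝ) := by linarith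
  have hnat : t + 2 ≤ cnt A s := by
    have h5 : ((t + 2 : ℕ) : ℝ) ≤ (cnt A s : ℝ) := by push_cast; linarith
    exact_mod_cast h5
  have helt : elt A (t + 1) ≤ s := elt_le A hnat
  calc elt A (t + 1) ^ 2 ≤ s ^ 2 := Nat.pow_le_pow_left helt 2
    _ ≤ C := Nat.sqrt_le' C

include hA hApos hdlow in
lemma invariant (hC0a : 2 ^ 1024 ≤ C0) (hC0b : N1 ^ 2 ≤ C0) (hC0c : (4:ℝ) ≤ 0.99 * Gr C0) :
    ∀ t, 2 ^ 1024 ≤ CC A C0 t ∧ N1 ^ 2 ≤ CC A C0 t ∧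
      ((t:ℝ) + 4 ≤ 0.99 * Gr (CC A C0 t)) := by
  intro t
  induction t with
  | zero =>
    refine ⟨hC0a, hC0b, ?_⟩
    have h : CC A C0 0 = C0 := rfl
    rw [h]
    push_cast
    linarith
  | succ t ih =>
    obtain ⟨h1, h2, h3⟩ := ih
    have hsq := elt_sq_of A C0 N1 hdlow t h1 h2 h3
    have h16 : 16 ≤ CC A C0 t := le_trans sixteen_le_pow h1
    have hlow := CC_growth_lower A C0 hA hApos t hsq h16
    have hupp := CC_growth_upper A C0 hA hApos t h16
    have hmono : CC A C0 t ≤ CC A C0 (t + 1) := CC_le_succ A C0 t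
    refine ⟨le_trans h1 hmono, le_trans h2 hmono, ?_⟩
    have hkey := key_step h1 hlow hupp
    clear h1 h2 hsq h16 hlow hupp hmono hC0a hC0b hC0c
    push_cast
    linarith [hkey, h3]

include hA hApos hdlow in
lemma elt_sq_all (hC0a : 2 ^ 1024 ≤ C0) (hC0b : N1 ^ 2 ≤ C0) (hC0c : (4:ℝ) ≤ 0.99 * Gr C0) :
    ∀ t, (elt A (t + 1)) ^ 2 ≤ CC A C0 t := by
  intro t
  obtain ⟨h1, h2, h3⟩ := invariant A C0 N1 hA hApos hdlow hC0a hC0b hC0c t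
  exact elt_sq_of A C0 N1 hdlow t h1 h2 h3

end Invariant

section Covering

variable (A : Set ℕ) (C0 : ℕ) (hA : A.Infinite) (hApos : ∀ a ∈ A, 0 < a) (h1A : 1 ∈ A)

include hA hApos h1A in
lemma cover (hsq : ∀ t, (elt A (t + 1)) ^ 2 ≤ CC A C0 t) (hbig : ∀ t, 16 ≤ CC A C0 t) :
    ∀ t, ∀ n, n ≤ CC A C0 t → ∃ f : ℕ →₀ ℕ,
      (∀ x ∈ f.support, ∃ s, s ≤ t ∧ x = elt A s) ∧
      (∀ a ∈ f.support, f a ∈ MM A C0) ∧ f.sum (fun a m => m * a) = n := by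
  intro t
  induction t with
  | zero =>
    intro n hn
    rcases Nat.eq_zero_or_pos n with rfl | hn0
    · exact ⟨0, by simp, by simp, by simp⟩
    · refine ⟨Finsupp.single 1 n, ?_, ?_, ?_⟩
      · intro x hx
        have hx1 : x = 1 := Finset.mem_singleton.mp
          (by rwa [Finsupp.support_single_ne_zero 1 (by omega)] at hx)
        exact ⟨0, le_refl 0, by rw [hx1, elt_zero A h1A]⟩
      · intro a ha
        have ha1 : a = 1 := Finset.mem_singleton.mp
          (by rwa [Finsupp.support_single_ne_zero 1 (by omega)] at ha)
        subst ha1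
        simp only [Finsupp.single_eq_same]
        exact Or.inl ⟨hn0, hn⟩
      · rw [Finsupp.sum_single_index (by simp)]
        simp
  | succ t ih =>
    intro n hn
    set a := elt A (t + 1) with haw
    set V := Wt A C0 t * a with hV
    have hapos : 1 ≤ a := elt_pos A hA hApos (t + 1)
    have hWpos : 1 ≤ Wt A C0 t := by
      have h := W_ge_sqrt A C0 hA hApos t (hsq t)
      have h2 : 1 ≤ Nat.sqrt (CC A C0 t) := Nat.sqrt_pos.mpr (by linarith [hbig t])
      omega
    have hVpos : 0 < V := by positivity
    have hBpos : 1 ≤ Bt A C0 t := by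
      have := log2_ge_two (hbig t)
      have : 2 ^ 6 ≤ (Nat.log 2 (CC A C0 t)) ^ 6 := Nat.pow_le_pow_left this 6
      rw [Bt]; omega
    set d := min (Bt A C0 t) (n / V) with hd
    have hdn : d * V ≤ n := by
      have h1 : d ≤ n / V := min_le_right _ _
      calc d * V ≤ (n / V) * V := Nat.mul_le_mul_right V h1
        _ ≤ n := Nat.div_mul_le_self n V
    set r := n - d * V with hr
    have hrec : CC A C0 (t + 1) = CC A C0 t + Bt A C0 t * V := by
      rw [hV, haw]; exact CC_succ A C0 t
    have hrC : r ≤ CC A C0 t := by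
      rcases le_or_gt (Bt A C0 t) (n / V) with hcase | hcase
      · have hdB : d = Bt A C0 t := min_eq_left hcase
        have hBV : Bt A C0 t * V ≤ n :=
          le_trans (Nat.mul_le_mul_right V hcase) (Nat.div_mul_le_self n V)
        have h1 : d * V = Bt A C0 t * V := by rw [hdB]
        omega
      · have hdq : d = n / V := min_eq_right (le_of_lt hcase)
        have hmod : n % V < V := Nat.mod_lt _ hVpos
        have hdm : n / V * V + n % V = n := Nat.div_add_mod' n V
        have hVC : V ≤ CC A C0 t + 1 := Wa_le A C0 t
        have h1 : d * V = n / V * V := by rw [hdq]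
        omega
    obtain ⟨f, hf1, hf2, hf3⟩ := ih r hrC
    rcases Nat.eq_zero_or_pos d with hd0 | hd0
    · refine ⟨f, ?_, hf2, ?_⟩
      · intro x hx
        obtain ⟨s, hs, hxs⟩ := hf1 x hx
        exact ⟨s, le_trans hs (Nat.le_succ t), hxs⟩
      · rw [hf3, hr, hd0]; simp
    · have hanot : a ∉ f.support := by
        intro hmem
        obtain ⟨s, hs, hxs⟩ := hf1 a hmem
        have : elt A s < elt A (t + 1) := elt_strictMono A hA hApos (by omega)
        omega
      have hfa0 : f a = 0 := Finsupp.notMem_support_iff.mp hanot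
      refine ⟨f + Finsupp.single a (d * Wt A C0 t), ?_, ?_, ?_⟩
      · intro x hx
        have := Finsupp.support_add hx
        rcases Finset.mem_union.mp this with h | h
        · obtain ⟨s, hs, hxs⟩ := hf1 x h
          exact ⟨s, le_trans hs (Nat.le_succ t), hxs⟩
        · have hx1 : x = a := Finset.mem_singleton.mp (Finsupp.support_single_subset h)
          exact ⟨t + 1, le_refl _, hx1⟩
      · intro x hx
        by_cases hxa : x = a
        · have hvala : (f + Finsupp.single a (d * Wt A C0 t)) x = d * Wt A C0 t := by
            rw [hxa]
            simp [Finsupp.add_apply, Finsupp.single_eq_same, hfa0]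
          rw [hvala]
          exact Or.inr ⟨t, d, hd0, min_le_left _ _, rfl⟩
        · have hval : (f + Finsupp.single a (d * Wt A C0 t)) x = f x := by
            rw [Finsupp.add_apply, Finsupp.single_eq_of_ne' (Ne.symm hxa), add_zero]
          rw [hval]
          apply hf2
          rw [Finsupp.mem_support_iff]
          have hne : (f + Finsupp.single a (d * Wt A C0 t)) x ≠ 0 :=
            Finsupp.mem_support_iff.mp hx
          rwa [hval] at hne
      · rw [Finsupp.sum_add_index' (fun b => by simp) (fun b m1 m2 => add_mul m1 m2 b)]
        rw [hf3, Finsupp.sum_single_index (by simp)]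
        have : d * Wt A C0 t * a = d * V := by rw [hV]; ring
        rw [this]
        omega

end Covering

end Stmt6Aux
namespace Stmt6Aux

lemma count_main (A M : Set ℕ) (hApos : ∀ a ∈ A, 0 < a) (hM : ∀ m ∈ M, 0 < m) (n : ℕ) :
    {f : ℕ →₀ ℕ | ↑f.support ⊆ A ∧ (∀ a ∈ f.support, f a ∈ M) ∧
      f.sum (fun a m => m * a) = n}.Finite ∧
    {f : ℕ →₀ ℕ | ↑f.support ⊆ A ∧ (∀ a ∈ f.support, f a ∈ M) ∧
      f.sum (fun a m => m * a) = n}.ncard ≤ (1 + (M ∩ Set.Icc 1 n).ncard) ^ cnt A n := by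
  classical
  set S := {f : ℕ →₀ ℕ | ↑f.support ⊆ A ∧ (∀ a ∈ f.support, f a ∈ M) ∧
      f.sum (fun a m => m * a) = n} with hSdef
  have hFA : (A ∩ Set.Icc 1 n).Finite := finite_inter A n
  have hFM : (M ∩ Set.Icc 1 n).Finite := (Set.finite_Icc 1 n).inter_of_right _
  set Fs : Finset ℕ := hFA.toFinset with hFs
  set Ts : Finset ℕ := insert 0 hFM.toFinset with hTs
  have hsupp : ∀ f : ℕ →₀ ℕ, f ∈ S → ∀ a ∈ f.support, a ∈ Fs := by
    intro f hf a ha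
    obtain ⟨hs1, hs2, hs3⟩ := hf
    have haA : a ∈ A := hs1 ha
    have hfa : 0 < f a := hM _ (hs2 a ha)
    have h1a : 1 ≤ a := hApos a haA
    have hterm : f a * a ≤ n := by
      rw [← hs3]
      exact Finset.single_le_sum (f := fun a => f a * a) (fun i _ => Nat.zero_le _) ha
    have han : a ≤ n := le_trans (Nat.le_mul_of_pos_left a hfa) hterm
    rw [hFs, hFA.mem_toFinset]
    exact ⟨haA, h1a, han⟩
  have hval : ∀ f : ℕ →₀ ℕ, f ∈ S → ∀ a : ℕ, f a ∈ Ts := by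
    intro f hf a
    by_cases hfa : f a = 0
    · rw [hfa, hTs]; exact Finset.mem_insert_self 0 _
    · have ha : a ∈ f.support := Finsupp.mem_support_iff.mpr hfa
      obtain ⟨hs1, hs2, hs3⟩ := hf
      have hfM : f a ∈ M := hs2 a ha
      have h1a : 1 ≤ a := hApos a (hs1 ha)
      have hterm : f a * a ≤ n := by
        rw [← hs3]
        exact Finset.single_le_sum (f := fun a => f a * a) (fun i _ => Nat.zero_le _) ha
      have hfan : f a ≤ n := le_trans (Nat.le_mul_of_pos_right (f a) (by omega)) hterm
      rw [hTs]
      exact Finset.mem_insert.mpr (Or.inr (hFM.mem_toFinset.mpr ⟨hfM, hM _ hfM, hfan⟩))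
  let Φ : S → (↥Fs → ↥Ts) := fun f x => ⟨(f : ℕ →₀ ℕ) x, hval f f.2 x⟩
  have hinj : Function.Injective Φ := by
    rintro ⟨f, hf⟩ ⟨g, hg⟩ h
    apply Subtype.ext
    ext a
    by_cases haF : a ∈ Fs
    · have := congrFun h ⟨a, haF⟩
      simpa [Φ] using this
    · have hfa : f a = 0 := by
        by_contra hne
        exact haF (hsupp f hf a (Finsupp.mem_support_iff.mpr hne))
      have hga : g a = 0 := by
        by_contra hne
        exact haF (hsupp g hg a (Finsupp.mem_support_iff.mpr hne))
      rw [hfa, hga]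
  have hfinS : Finite ↥S := Finite.of_injective Φ hinj
  have hSfin : S.Finite := Set.finite_coe_iff.mp hfinS
  refine ⟨hSfin, ?_⟩
  have h1 : S.ncard = Nat.card ↥S := (Nat.card_coe_set_eq S).symm
  have h2 : Nat.card ↥S ≤ Nat.card (↥Fs → ↥Ts) := Nat.card_le_card_of_injective Φ hinj
  have h3 : Nat.card (↥Fs → ↥Ts) = Ts.card ^ Fs.card := by
    rw [Nat.card_eq_fintype_card, Fintype.card_fun, Fintype.card_coe, Fintype.card_coe]
  have h4 : Ts.card ≤ 1 + (M ∩ Set.Icc 1 n).ncard := by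
    rw [hTs]
    calc (insert 0 hFM.toFinset).card ≤ hFM.toFinset.card + 1 := Finset.card_insert_le _ _
      _ = 1 + (M ∩ Set.Icc 1 n).ncard := by
          rw [Set.ncard_eq_toFinset_card _ hFM]; omega
  have h5 : Fs.card = cnt A n := by
    rw [hFs, cnt, Set.ncard_eq_toFinset_card _ hFA]
  calc S.ncard = Nat.card ↥S := h1
    _ ≤ Nat.card (↥Fs → ↥Ts) := h2
    _ = Ts.card ^ Fs.card := h3
    _ ≤ (1 + (M ∩ Set.Icc 1 n).ncard) ^ Fs.card := Nat.pow_le_pow_left h4 _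
    _ = (1 + (M ∩ Set.Icc 1 n).ncard) ^ cnt A n := by rw [h5]

section MCard

variable (A : Set ℕ) (C0 : ℕ) (hA : A.Infinite) (hApos : ∀ a ∈ A, 0 < a)

include hA hApos in
lemma CC_ge_two_pow (hsq : ∀ t, (elt A (t + 1)) ^ 2 ≤ CC A C0 t)
    (hbig : ∀ t, 16 ≤ CC A C0 t) (hC01 : 1 ≤ C0) :
    ∀ t, 2 ^ t ≤ CC A C0 t := by
  intro t
  induction t with
  | zero => simpa [CC] using hC01
  | succ t ih =>
    have h2 := CC_double A C0 hA hApos t (hsq t) (hbig t)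
    calc 2 ^ (t + 1) = 2 * 2 ^ t := by ring
      _ ≤ 2 * CC A C0 t := by omega
      _ ≤ CC A C0 (t + 1) := h2

include hA hApos in
lemma mcard_le (hsq : ∀ t, (elt A (t + 1)) ^ 2 ≤ CC A C0 t)
    (hpow : ∀ t, 2 ^ t ≤ CC A C0 t) (y : ℕ) :
    (MM A C0 ∩ Set.Icc 1 y).ncard ≤ C0 + (2 * Nat.log 2 (y + 1) + 2) ^ 7 := by
  classical
  set L := Nat.log 2 (y + 1) with hL
  set F : Finset ℕ := (Finset.Icc 1 C0) ∪ (Finset.range (2 * L + 2)).biUnion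
      (fun t => if Wt A C0 t ≤ y then (Finset.Icc 1 (Bt A C0 t)).image
        (fun d => d * Wt A C0 t) else ∅) with hF
  have hCy : ∀ t, Wt A C0 t ≤ y → CC A C0 t < (y + 1) ^ 2 := by
    intro t hWy
    have hsqW : Nat.sqrt (CC A C0 t) ≤ Wt A C0 t := W_ge_sqrt A C0 hA hApos t (hsq t)
    exact Nat.sqrt_lt'.mp (lt_of_le_of_lt (le_trans hsqW hWy) (Nat.lt_succ_self y))
  have hy2 : (y + 1) ^ 2 ≤ 2 ^ (2 * L + 2) := by
    have h1 : y + 1 < 2 ^ (L + 1) := Nat.lt_pow_succ_log_self (by norm_num) (y + 1)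
    calc (y + 1) ^ 2 ≤ (2 ^ (L + 1)) ^ 2 := Nat.pow_le_pow_left (le_of_lt h1) 2
      _ = 2 ^ (2 * L + 2) := by rw [← pow_mul]; ring_nf
  have hsub : MM A C0 ∩ Set.Icc 1 y ⊆ ↑F := by
    rintro m ⟨hmM, hm1, hmy⟩
    rcases hmM with h | ⟨t, d, hd1, hdB, rfl⟩
    · rw [hF]
      apply Finset.mem_coe.mpr
      apply Finset.mem_union_left
      exact Finset.mem_Icc.mpr ⟨h.1, h.2⟩
    · have hWy : Wt A C0 t ≤ y :=
        le_trans (Nat.le_mul_of_pos_left _ (by omega)) hmy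
      have htlt : t < 2 * L + 2 := by
        by_contra hge
        push_neg at hge
        have h1 : 2 ^ (2 * L + 2) ≤ 2 ^ t := Nat.pow_le_pow_right (by norm_num) hge
        have h2 := hpow t
        have h3 := hCy t hWy
        omega
      rw [hF]
      apply Finset.mem_coe.mpr
      apply Finset.mem_union_right
      apply Finset.mem_biUnion.mpr
      refine ⟨t, Finset.mem_range.mpr htlt, ?_⟩
      rw [if_pos hWy]
      exact Finset.mem_image.mpr ⟨d, Finset.mem_Icc.mpr ⟨hd1, hdB⟩, rfl⟩
  have h1 : (MM A C0 ∩ Set.Icc 1 y).ncard ≤ F.card := by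
    rw [← Set.ncard_coe_finset F]
    exact Set.ncard_le_ncard hsub (F.finite_toSet)
  have hterm : ∀ t ∈ Finset.range (2 * L + 2),
      (if Wt A C0 t ≤ y then (Finset.Icc 1 (Bt A C0 t)).image
        (fun d => d * Wt A C0 t) else ∅).card ≤ (2 * L + 2) ^ 6 := by
    intro t _
    by_cases hWy : Wt A C0 t ≤ y
    · rw [if_pos hWy]
      have hC := hCy t hWy
      have hC2 : CC A C0 t < 2 ^ (2 * L + 2) := lt_of_lt_of_le hC hy2
      have hCpos : CC A C0 t ≠ 0 := by
        have := hpow t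
        have : 0 < 2 ^ t := Nat.pow_pos (by norm_num)
        omega
      have hlog : Nat.log 2 (CC A C0 t) < 2 * L + 2 := Nat.log_lt_of_lt_pow hCpos hC2
      calc ((Finset.Icc 1 (Bt A C0 t)).image (fun d => d * Wt A C0 t)).card
          ≤ (Finset.Icc 1 (Bt A C0 t)).card := Finset.card_image_le
        _ = Bt A C0 t := by rw [Nat.card_Icc]; omega
        _ ≤ (2 * L + 2) ^ 6 := by
            rw [Bt]
            exact Nat.pow_le_pow_left (by omega) 6
    · rw [if_neg hWy]; simp
  have h2 : F.card ≤ C0 + (2 * L + 2) * (2 * L + 2) ^ 6 := by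
    rw [hF]
    calc ((Finset.Icc 1 C0) ∪ _).card
        ≤ (Finset.Icc 1 C0).card + ((Finset.range (2 * L + 2)).biUnion _).card :=
          Finset.card_union_le _ _
      _ ≤ C0 + ∑ t ∈ Finset.range (2 * L + 2), (if Wt A C0 t ≤ y then
            (Finset.Icc 1 (Bt A C0 t)).image (fun d => d * Wt A C0 t) else ∅).card := by
          have hc : (Finset.Icc 1 C0).card = C0 := by rw [Nat.card_Icc]; omega
          have hb := Finset.card_biUnion_le (s := Finset.range (2 * L + 2))
            (t := fun t => if Wt A C0 t ≤ y then (Finset.Icc 1 (Bt A C0 t)).image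
              (fun d => d * Wt A C0 t) else ∅)
          omega
      _ ≤ C0 + ∑ _t ∈ Finset.range (2 * L + 2), (2 * L + 2) ^ 6 := by
          have := Finset.sum_le_sum hterm
          omega
      _ = C0 + (2 * L + 2) * (2 * L + 2) ^ 6 := by
          rw [Finset.sum_const, Finset.card_range, smul_eq_mul]
  have h3 : (2 * L + 2) * (2 * L + 2) ^ 6 = (2 * L + 2) ^ 7 := by ring
  omega

end MCard

end Stmt6Aux
set_option maxHeartbeats 1600000 in
set_option maxRecDepth 8000 in
theorem stmt6 (A : Set ℕ) (hA : A.Infinite) (hApos : ∀ a ∈ A, 0 < a) (h1 : 1 ∈ A)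
    (hdens : Tendsto
      (fun n : ℕ => ((A ∩ Set.Icc 1 n).ncard : ℝ) * Real.log (Real.log n) / Real.log n)
      atTop (nhds 1)) :
    ∀ ε : ℝ, 0 < ε →
      ∃ (n₀ : ℕ) (M : Set ℕ), M.Infinite ∧ (∀ m ∈ M, 0 < m) ∧
      ∀ n : ℕ, n > n₀ → 0 < pCount A M n ∧ (pCount A M n : ℝ) ≤ (n : ℝ) ^ ((8 : ℝ) + ε) := by
  intro ε hε
  classical
  -- Step 1: extract two-sided density bounds
  have hloglog : Tendsto (fun n : ℕ => Real.log (Real.log n)) atTop atTop :=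
    Real.tendsto_log_atTop.comp (Real.tendsto_log_atTop.comp tendsto_natCast_atTop_atTop)
  have hlog : Tendsto (fun n : ℕ => Real.log n) atTop atTop :=
    Real.tendsto_log_atTop.comp tendsto_natCast_atTop_atTop
  have hballs : ∀ᶠ n : ℕ in atTop,
      dist (((A ∩ Set.Icc 1 n).ncard : ℝ) * Real.log (Real.log n) / Real.log n) 1 < 0.005 :=
    Metric.tendsto_nhds.mp hdens 0.005 (by norm_num)
  have hcnt_ev : ∀ᶠ n : ℕ in atTop,
      0.99 * (Real.log n / Real.log (Real.log n)) ≤ ((Stmt6Aux.cnt A n : ℝ)) ∧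
      ((Stmt6Aux.cnt A n : ℝ)) ≤ 1.01 * (Real.log n / Real.log (Real.log n)) := by
    filter_upwards [hballs, hloglog.eventually_ge_atTop 2, hlog.eventually_ge_atTop 1]
      with n h1' h2' h3'
    have hCnt : ((A ∩ Set.Icc 1 n).ncard : ℝ) = (Stmt6Aux.cnt A n : ℝ) := rfl
    rw [Real.dist_eq, hCnt] at h1'
    have hll0 : (0:ℝ) < Real.log (Real.log n) := by linarith
    have hl0 : (0:ℝ) < Real.log n := by linarith
    have habs := abs_lt.mp h1'
    have hlow : 0.995 * Real.log n ≤ (Stmt6Aux.cnt A n : ℝ) * Real.log (Real.log n) := by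
      have hq : (0.995:ℝ) < (Stmt6Aux.cnt A n : ℝ) * Real.log (Real.log n) / Real.log n := by
        linarith [habs.1]
      have h := (lt_div_iff₀ hl0).mp hq
      linarith
    have hup : (Stmt6Aux.cnt A n : ℝ) * Real.log (Real.log n) ≤ 1.005 * Real.log n := by
      have hq : (Stmt6Aux.cnt A n : ℝ) * Real.log (Real.log n) / Real.log n < 1.005 := by
        linarith [habs.2]
      have h := (div_lt_iff₀ hl0).mp hq
      linarith
    constructor
    · rw [← mul_div_assoc, div_le_iff₀ hll0]
      nlinarith
    · rw [← mul_div_assoc, le_div_iff₀ hll0]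
      nlinarith
  obtain ⟨N1, hN1⟩ := eventually_atTop.mp hcnt_ev
  have hdlow : ∀ x : ℕ, N1 ≤ x →
      0.99 * (Real.log x / Real.log (Real.log x)) ≤ (Stmt6Aux.cnt A x : ℝ) :=
    fun x hx => (hN1 x hx).1
  -- Step 2: choose C0
  have hev2 : ∀ᶠ x : ℕ in atTop,
      (5:ℝ) ≤ Stmt6Aux.Gr x ∧ 2 ^ 1024 ≤ x ∧ N1 ^ 2 ≤ x :=
    (Stmt6Aux.Gr_tendsto.eventually_ge_atTop 5).and
      ((eventually_ge_atTop _).and (eventually_ge_atTop _))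
  obtain ⟨C0, hGr5, hC0a, hC0b⟩ := hev2.exists
  have hC0c : (4:ℝ) ≤ 0.99 * Stmt6Aux.Gr C0 := by linarith
  set M : Set ℕ := Stmt6Aux.MM A C0 with hMdef
  have hsq : ∀ t, (Stmt6Aux.elt A (t + 1)) ^ 2 ≤ Stmt6Aux.CC A C0 t :=
    Stmt6Aux.elt_sq_all A C0 N1 hA hApos hdlow hC0a hC0b hC0c
  have hinv := Stmt6Aux.invariant A C0 N1 hA hApos hdlow hC0a hC0b hC0c
  have hbig : ∀ t, 16 ≤ Stmt6Aux.CC A C0 t :=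
    fun t => le_trans Stmt6Aux.sixteen_le_pow (hinv t).1
  have hC01 : 1 ≤ C0 := le_trans Nat.one_le_two_pow hC0a
  have hpow := Stmt6Aux.CC_ge_two_pow A C0 hA hApos hsq hbig hC01
  clear hC0a hC0b hC0c hGr5 hinv hev2
  -- M positive
  have hMpos : ∀ m ∈ M, 0 < m := by
    rintro m (hm | ⟨t, d, hd1, hdB, rfl⟩)
    · exact lt_of_lt_of_le one_pos hm.1
    · have hW : 1 ≤ Stmt6Aux.Wt A C0 t := by
        have hws := Stmt6Aux.W_ge_sqrt A C0 hA hApos t (hsq t)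
        have h2 : 1 ≤ Nat.sqrt (Stmt6Aux.CC A C0 t) := Nat.sqrt_pos.mpr (by linarith [hbig t])
        omega
      exact Nat.mul_pos (by omega) (by omega)
  -- M infinite
  have hMinf : M.Infinite := by
    apply Set.infinite_of_not_bddAbove
    rintro ⟨b, hb⟩
    have hBt : 1 ≤ Stmt6Aux.Bt A C0 (2 * b + 2) := by
      have h2 := Stmt6Aux.log2_ge_two (hbig (2 * b + 2))
      have h3 : 2 ^ 6 ≤ (Nat.log 2 (Stmt6Aux.CC A C0 (2 * b + 2))) ^ 6 :=
        Nat.pow_le_pow_left h2 6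
      rw [Stmt6Aux.Bt]; omega
    have hmem : Stmt6Aux.Wt A C0 (2 * b + 2) ∈ M :=
      Or.inr ⟨2 * b + 2, 1, le_refl 1, hBt, (one_mul _).symm⟩
    have hle : Stmt6Aux.Wt A C0 (2 * b + 2) ≤ b := hb hmem
    have hWb : b < Stmt6Aux.Wt A C0 (2 * b + 2) := by
      have hws := Stmt6Aux.W_ge_sqrt A C0 hA hApos (2 * b + 2) (hsq (2 * b + 2))
      have h2 : (2:ℕ) ^ (b + 1) ≤ Nat.sqrt (Stmt6Aux.CC A C0 (2 * b + 2)) := by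
        apply Nat.le_sqrt.mpr
        calc (2:ℕ) ^ (b + 1) * 2 ^ (b + 1) = 2 ^ (2 * b + 2) := by
              rw [← pow_add]; ring_nf
          _ ≤ Stmt6Aux.CC A C0 (2 * b + 2) := hpow _
      have h3 : b < 2 ^ (b + 1) :=
        lt_of_lt_of_le (Nat.lt_two_pow_self (n := b)) (Nat.pow_le_pow_right (by norm_num) (Nat.le_succ b))
      omega
    omega
  -- numeric constant
  set K : ℝ := (C0 : ℝ) + 1 + 5 ^ 7 with hK
  have hK1 : (1:ℝ) ≤ K := by
    have hc : (1:ℝ) ≤ (C0:ℝ) := by exact_mod_cast hC01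
    rw [hK]; norm_num
    linarith
  have hlogK0 : 0 ≤ Real.log K := Real.log_nonneg hK1
  -- eventual conditions for n
  have hfin_ev : ∀ᶠ n : ℕ in atTop,
      N1 ≤ n ∧ (3:ℝ) ≤ Real.log n ∧
      2 * Real.log K + 2 ≤ Real.log (Real.log n) ∧ 1 ≤ n :=
    (eventually_ge_atTop _).and ((hlog.eventually_ge_atTop 3).and
      ((hloglog.eventually_ge_atTop _).and (eventually_ge_atTop _)))
  obtain ⟨n₀, hn₀⟩ := eventually_atTop.mp hfin_ev
  refine ⟨n₀, M, hMinf, hMpos, ?_⟩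
  intro n hn
  obtain ⟨hnN1, hlog3, hllK, hn1⟩ := hn₀ n (le_of_lt hn)
  obtain ⟨hSfin, hScard⟩ := Stmt6Aux.count_main A M hApos hMpos n
  constructor
  · -- positivity
    have hnCC : n ≤ Stmt6Aux.CC A C0 n :=
      le_trans (le_of_lt (Nat.lt_two_pow_self (n := n))) (hpow n)
    obtain ⟨f, hf1, hf2, hf3⟩ :=
      Stmt6Aux.cover A C0 hA hApos h1 hsq hbig n n hnCC
    have hfS : f ∈ {f : ℕ →₀ ℕ | ↑f.support ⊆ A ∧ (∀ a ∈ f.support, f a ∈ M) ∧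
        f.sum (fun a m => m * a) = n} := by
      refine ⟨?_, hf2, hf3⟩
      intro x hx
      obtain ⟨s, _, rfl⟩ := hf1 x hx
      exact Stmt6Aux.elt_mem A hA hApos s
    exact (Set.ncard_pos hSfin).mpr ⟨f, hfS⟩
  · -- upper bound
    have hmc := Stmt6Aux.mcard_le A C0 hA hApos hsq hpow n
    set X : ℕ := 1 + (M ∩ Set.Icc 1 n).ncard with hX
    set k : ℕ := Stmt6Aux.cnt A n with hk
    have hnatb : pCount A M n ≤ X ^ k := hScard
    have hXpos : 0 < X := by omega
    have hXR : (0:ℝ) < (X:ℝ) := by exact_mod_cast hXpos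
    have hX1 : (1:ℝ) ≤ (X:ℝ) := by exact_mod_cast hXpos
    have hR1 : (pCount A M n : ℝ) ≤ ((X:ℝ)) ^ k := by exact_mod_cast hnatb
    have hl0 : (0:ℝ) < Real.log n := by linarith
    have hll0 : (0:ℝ) < Real.log (Real.log n) := by linarith
    have hnpos : (0:ℝ) < (n:ℝ) := by exact_mod_cast hn1
    have hΛ : (Nat.log 2 (n + 1) : ℝ) ≤ 2 * Real.log n := by
      have hp : (2:ℕ) ^ (Nat.log 2 (n + 1)) ≤ n + 1 := Nat.pow_log_le_self 2 (by omega)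
      have hpR : ((2:ℝ)) ^ (Nat.log 2 (n + 1)) ≤ ((n:ℝ) + 1) := by exact_mod_cast hp
      have h2 := Real.log_le_log (pow_pos (by norm_num : (0:ℝ) < 2) _) hpR
      rw [Real.log_pow] at h2
      have h3 : Real.log ((n:ℝ) + 1) ≤ Real.log 2 + Real.log n := by
        have h4 : ((n:ℝ) + 1) ≤ 2 * n := by
          have h6 : (1:ℝ) ≤ (n:ℝ) := by exact_mod_cast hn1
          linarith
        have h5 := Real.log_le_log (by linarith) h4
        rw [Real.log_mul (by norm_num) (ne_of_gt hnpos)] at h5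
        linarith
      have hl2l : (0.6931471803:ℝ) < Real.log 2 := Real.log_two_gt_d9
      have hl2u : Real.log 2 < 0.6931471808 := Real.log_two_lt_d9
      nlinarith [(by positivity : (0:ℝ) ≤ (Nat.log 2 (n + 1) : ℝ))]
    have hXle : (X:ℝ) ≤ K * (Real.log n) ^ 7 := by
      have h1' : (X:ℝ) ≤ (C0:ℝ) + 1 + (2 * (Nat.log 2 (n + 1):ℝ) + 2) ^ 7 := by
        have hcast : ((1 + (M ∩ Set.Icc 1 n).ncard : ℕ) : ℝ) ≤
            ((1 + (C0 + (2 * Nat.log 2 (n + 1) + 2) ^ 7) : ℕ) : ℝ) := by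
          exact_mod_cast Nat.add_le_add_left hmc 1
        push_cast at hcast
        rw [hX]
        push_cast
        linarith
      have h2' : (2 * (Nat.log 2 (n + 1):ℝ) + 2) ≤ 5 * Real.log n := by linarith [hΛ]
      have h3' : (2 * (Nat.log 2 (n + 1):ℝ) + 2) ^ 7 ≤ (5 * Real.log n) ^ 7 :=
        pow_le_pow_left₀ (by positivity) h2' 7
      have h4' : (5 * Real.log n) ^ 7 = 5 ^ 7 * (Real.log n) ^ 7 := by ring
      have h5' : (1:ℝ) ≤ (Real.log n) ^ 7 := by
        calc (1:ℝ) = 1 ^ 7 := by norm_num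
          _ ≤ (Real.log n) ^ 7 := pow_le_pow_left₀ (by norm_num) (by linarith) 7
      have h6' : (C0:ℝ) + 1 ≤ ((C0:ℝ) + 1) * (Real.log n) ^ 7 := by
        nlinarith [(by positivity : (0:ℝ) ≤ ((C0:ℕ) : ℝ)), h5']
      rw [hK]
      linarith
    have hlogX : Real.log X ≤ Real.log K + 7 * Real.log (Real.log n) := by
      have h1' := Real.log_le_log hXR hXle
      rw [Real.log_mul (by positivity) (by positivity), Real.log_pow] at h1'
      push_cast at h1'
      linarith
    have hcnt_up : (k:ℝ) ≤ 1.01 * (Real.log n / Real.log (Real.log n)) := (hN1 n hnN1).2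
    have hlogX0 : 0 ≤ Real.log X := Real.log_nonneg hX1
    clear hsq hbig hpow hmc hnatb hXle hΛ hballs hcnt_ev hfin_ev hN1 hdlow hSfin
    have hkey : (k:ℝ) * Real.log X ≤ 8 * Real.log n := by
      have hq0 : 0 ≤ Real.log n / Real.log (Real.log n) := by positivity
      have hql : (Real.log n / Real.log (Real.log n)) * Real.log (Real.log n) = Real.log n :=
        div_mul_cancel₀ _ (ne_of_gt hll0)
      have h1' : (k:ℝ) * Real.log X ≤ (1.01 * (Real.log n / Real.log (Real.log n))) *
          (Real.log K + 7 * Real.log (Real.log n)) :=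
        mul_le_mul hcnt_up hlogX hlogX0 (by positivity)
      have h2' : (Real.log n / Real.log (Real.log n)) * Real.log K ≤ Real.log n / 2 := by
        have h3' : (Real.log n / Real.log (Real.log n)) * (2 * Real.log K + 2) ≤
            (Real.log n / Real.log (Real.log n)) * Real.log (Real.log n) :=
          mul_le_mul_of_nonneg_left hllK hq0
        rw [hql] at h3'
        nlinarith [hq0]
      nlinarith [hql, hq0, h1', h2']
    have hXk : ((X:ℝ)) ^ k = Real.exp ((k:ℝ) * Real.log X) := by
      rw [← Real.log_pow, Real.exp_log (pow_pos hXR k)]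
    have hrpow : (n:ℝ) ^ (8:ℝ) = Real.exp (8 * Real.log n) := by
      rw [Real.rpow_def_of_pos hnpos, mul_comm]
    have hle8 : (pCount A M n : ℝ) ≤ (n:ℝ) ^ (8:ℝ) := by
      rw [hrpow]
      calc (pCount A M n : ℝ) ≤ ((X:ℝ)) ^ k := hR1
        _ = Real.exp ((k:ℝ) * Real.log X) := hXk
        _ ≤ Real.exp (8 * Real.log n) := Real.exp_le_exp.mpr hkey
    calc (pCount A M n : ℝ) ≤ (n:ℝ) ^ (8:ℝ) := hle8
      _ ≤ (n:ℝ) ^ ((8:ℝ) + ε) := by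
          apply Real.rpow_le_rpow_of_exponent_le (by exact_mod_cast hn1) (by linarith)
end

section
/- Let A = {k^k : k ≥ 1}. Then there exist a constant c, an integer n₀, and an infinite set M of positive integers such that 0 < p(n,A,M) ≤ n^c for all n > n₀. -/
namespace Stmt8Aux

/-- Coverage bounds: using parts `1^1, 2^2, …, k^k` we can represent every `n < LL k`. -/
def LL : ℕ → ℕ
  | 0 => 16
  | 1 => 16
  | (k+2) => LL (k+1) + (k+2)^6 * (LL (k+1) / (k+2)^(k+2)) * (k+2)^(k+2)

/-- The digit granularity at level `k`. -/
def gg (k : ℕ) : ℕ := LL (k-1) / k^k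

/-- The multiplier set. -/
def MM : Set ℕ :=
  {m | (1 ≤ m ∧ m < 16) ∨ ∃ k, 2 ≤ k ∧ ∃ j, 1 ≤ j ∧ j ≤ k^6 ∧ m = j * gg k}

lemma pow_ratio (k : ℕ) : (k+2)^(2*k+4) ≤ 81 * (k+1)^(2*k+4) := by
  have h1 : ((k+2 : ℕ) : ℝ) ^ (2*k+4) ≤ 81 * ((k+1 : ℕ) : ℝ) ^ (2*k+4) := by
    have hx : (0:ℝ) < (k:ℝ) + 1 := by positivity
    have h2 : ((k:ℝ)+2) ≤ ((k:ℝ)+1) * Real.exp (1/((k:ℝ)+1)) := by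
      have h := Real.add_one_le_exp (1/((k:ℝ)+1))
      have h3 : ((k:ℝ)+1) * (1/((k:ℝ)+1) + 1) ≤ ((k:ℝ)+1) * Real.exp (1/((k:ℝ)+1)) :=
        mul_le_mul_of_nonneg_left h (by positivity)
      calc ((k:ℝ)+2) = ((k:ℝ)+1) * (1/((k:ℝ)+1) + 1) := by field_simp; ring
        _ ≤ _ := h3
    have h7 : ((2*k+4 : ℕ):ℝ) * (1/((k:ℝ)+1)) ≤ 4 := by
      rw [mul_one_div, div_le_iff₀ hx]
      push_cast
      nlinarith [Nat.cast_nonneg (α := ℝ) k]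
    have h9 : Real.exp 4 ≤ 81 := by
      have he : Real.exp 4 = (Real.exp 1)^4 := by
        rw [← Real.exp_nat_mul]; norm_num
      rw [he]
      have h10 : Real.exp 1 ≤ 3 := le_of_lt (lt_trans Real.exp_one_lt_d9 (by norm_num))
      calc (Real.exp 1)^4 ≤ 3^4 := pow_le_pow_left₀ (le_of_lt (Real.exp_pos 1)) h10 4
        _ ≤ 81 := by norm_num
    push_cast
    calc ((k:ℝ)+2)^(2*k+4)
        ≤ (((k:ℝ)+1) * Real.exp (1/((k:ℝ)+1)))^(2*k+4) := pow_le_pow_left₀ (by positivity) h2 _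
      _ = ((k:ℝ)+1)^(2*k+4) * (Real.exp (1/((k:ℝ)+1)))^(2*k+4) := mul_pow _ _ _
      _ = ((k:ℝ)+1)^(2*k+4) * Real.exp (((2*k+4 : ℕ):ℝ) * (1/((k:ℝ)+1))) := by
          rw [Real.exp_nat_mul]
      _ ≤ ((k:ℝ)+1)^(2*k+4) * Real.exp 4 := by
          gcongr
      _ ≤ ((k:ℝ)+1)^(2*k+4) * 81 := by gcongr
      _ = 81 * ((k:ℝ)+1)^(2*k+4) := by ring
  exact_mod_cast h1

lemma LL_succ (K : ℕ) (hK : 1 ≤ K) :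
    LL (K+1) = LL K + (K+1)^6 * (LL K / (K+1)^(K+1)) * (K+1)^(K+1) := by
  obtain ⟨m, rfl⟩ : ∃ m, K = m + 1 := ⟨K - 1, by omega⟩
  rfl

lemma LL_ge : ∀ k, 1 ≤ k → (k+1)^(2*(k+1)) ≤ LL k := by
  intro k hk
  induction k with
  | zero => omega
  | succ K ih =>
    rcases Nat.lt_or_ge K 3 with hK | hK
    · interval_cases K <;> norm_num [LL]
    · -- general step, K ≥ 3
      have hIH : (K+1)^(2*(K+1)) ≤ LL K := ih (by omega)
      set aa := (K+1)^(K+1) with haa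
      have haapos : 0 < aa := by positivity
      have haa2 : aa * aa ≤ LL K := by
        calc aa * aa = (K+1)^(2*(K+1)) := by rw [haa, ← pow_add]; ring_nf
          _ ≤ LL K := hIH
      have haage : 2 ≤ aa := by
        calc 2 ≤ 2^(K+1) := Nat.le_self_pow (by omega) 2
          _ ≤ (K+1)^(K+1) := Nat.pow_le_pow_left (by omega) _
      have haaLL : 2 * aa ≤ LL K := le_trans (by nlinarith) haa2
      set q := LL K / aa with hq
      have hqa : LL K - aa ≤ q * aa := by
        have h1 := Nat.div_add_mod (LL K) aa
        have h2 := Nat.mod_lt (LL K) haapos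
        have h3 : q * aa = aa * q := Nat.mul_comm _ _
        rw [← hq] at h1
        omega
      have hLL : LL (K+1) = LL K + (K+1)^6 * q * aa := by
        rw [LL_succ K (by omega)]
      have hmain : (K+1)^6 * LL K ≤ 2 * LL (K+1) := by
        have h3 : LL K ≤ 2 * (q * aa) := by omega
        calc (K+1)^6 * LL K ≤ (K+1)^6 * (2 * (q * aa)) := Nat.mul_le_mul_left _ h3
          _ = 2 * ((K+1)^6 * q * aa) := by ring
          _ ≤ 2 * LL (K+1) := by omega
      -- goal: (K+2)^(2*(K+2)) ≤ LL (K+1)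
      have hgoal2 : 2 * (K+2)^(2*(K+1)+2) ≤ (K+1)^6 * LL K := by
        calc 2 * (K+2)^(2*(K+1)+2) = 2 * (K+2)^(2*K+4) := by ring_nf
          _ ≤ 2 * (81 * (K+1)^(2*K+4)) := Nat.mul_le_mul_left _ (pow_ratio K)
          _ = 162 * (K+1)^(2*K+4) := by ring
          _ ≤ (K+1)^4 * (K+1)^(2*K+4) := by
              have : 162 ≤ (K+1)^4 := by
                calc 162 ≤ 4^4 := by norm_num
                  _ ≤ (K+1)^4 := Nat.pow_le_pow_left (by omega) _
              exact Nat.mul_le_mul_right _ this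
          _ = (K+1)^(2*K+8) := by rw [← pow_add]; congr 1; omega
          _ = (K+1)^6 * (K+1)^(2*(K+1)) := by rw [← pow_add]; congr 1; omega
          _ ≤ (K+1)^6 * LL K := Nat.mul_le_mul_left _ hIH
      show (K+2)^(2*(K+2)) ≤ LL (K+1)
      have : 2 * (K+2)^(2*(K+2)) ≤ 2 * LL (K+1) := by
        calc 2 * (K+2)^(2*(K+2)) = 2 * (K+2)^(2*(K+1)+2) := by ring_nf
          _ ≤ (K+1)^6 * LL K := hgoal2
          _ ≤ 2 * LL (K+1) := hmain
      omega

lemma gg_ge (k : ℕ) (hk : 2 ≤ k) : k^k ≤ gg k := by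
  have h1 : (k-1+1)^(2*(k-1+1)) ≤ LL (k-1) := LL_ge (k-1) (by omega)
  have hk1 : k - 1 + 1 = k := by omega
  rw [hk1] at h1
  have h2 : k^k * k^k ≤ LL (k-1) := by
    calc k^k * k^k = k^(2*k) := by rw [← pow_add]; ring_nf
      _ ≤ LL (k-1) := h1
  rw [gg]
  exact (Nat.le_div_iff_mul_le (by positivity)).2 h2

lemma gg_pos (k : ℕ) (hk : 2 ≤ k) : 0 < gg k :=
  lt_of_lt_of_le (Nat.pow_pos (by omega)) (gg_ge k hk)

lemma MM_pos : ∀ m ∈ MM, 0 < m := by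
  rintro m (⟨h1, _⟩ | ⟨k, hk, j, hj1, _, rfl⟩)
  · omega
  · exact Nat.mul_pos (by omega) (gg_pos k hk)

lemma MM_infinite : MM.Infinite := by
  intro hfin
  obtain ⟨b, hb⟩ := hfin.bddAbove
  have hmem : gg (max 2 (b+1)) ∈ MM := by
    right
    exact ⟨max 2 (b+1), le_max_left _ _, 1, le_refl 1, Nat.one_le_pow _ _ (by omega), (one_mul _).symm⟩
  have hle : gg (max 2 (b+1)) ≤ b := hb hmem
  have hge : max 2 (b+1) ≤ gg (max 2 (b+1)) := by
    calc max 2 (b+1) ≤ (max 2 (b+1))^(max 2 (b+1)) := Nat.le_self_pow (by omega) _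
      _ ≤ gg (max 2 (b+1)) := gg_ge _ (le_max_left _ _)
  omega

lemma pow_self_mono {k K : ℕ} (hk : 1 ≤ k) (hK : k ≤ K) : k^k ≤ K^K :=
  le_trans (Nat.pow_le_pow_left hK k) (Nat.pow_le_pow_right (by omega) hK)

lemma cover : ∀ K n, n < LL (K+1) → ∃ f : ℕ →₀ ℕ,
    (∀ a ∈ f.support, ∃ k, 1 ≤ k ∧ k ≤ K+1 ∧ a = k^k) ∧
    (∀ a ∈ f.support, f a ∈ MM) ∧ f.sum (fun a m => m * a) = n := by
  intro K
  induction K with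
  | zero =>
    intro n hn
    have hn' : n < 16 := hn
    rcases Nat.eq_zero_or_pos n with rfl | hpos
    · exact ⟨0, by simp, by simp, by simp⟩
    · refine ⟨Finsupp.single 1 n, ?_, ?_, ?_⟩
      · intro a ha
        have := Finsupp.support_single_subset ha
        simp only [Finset.mem_singleton] at this
        exact ⟨1, le_refl 1, le_refl 1, by simp [this]⟩
      · intro a ha
        have := Finsupp.support_single_subset ha
        simp only [Finset.mem_singleton] at this
        subst this
        rw [Finsupp.single_eq_same]
        left
        omega
      · rw [Finsupp.sum_single_index] <;> simp
  | succ K ih =>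
    intro n hn
    rw [show K+1+1 = K+2 from rfl] at hn ⊢
    rcases Nat.lt_or_ge n (LL (K+1)) with hlt | hge
    · obtain ⟨f, h1, h2, h3⟩ := ih n hlt
      refine ⟨f, ?_, h2, h3⟩
      intro a ha
      obtain ⟨k, hk1, hk2, hk3⟩ := h1 a ha
      exact ⟨k, hk1, by omega, hk3⟩
    · set aa := (K+2)^(K+2) with haa_def
      have haapos : 0 < aa := Nat.pow_pos (by omega)
      set q := LL (K+1) / aa with hq_def
      have hLLge : aa * aa ≤ LL (K+1) := by
        have h := LL_ge (K+1) (by omega)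
        calc aa * aa = (K+2)^(2*(K+2)) := by rw [haa_def, ← pow_add]; congr 1; omega
          _ ≤ LL (K+1) := h
      have hq1 : 1 ≤ q := by
        rw [hq_def]
        rw [Nat.one_le_div_iff haapos]
        nlinarith
      have hqaapos : 0 < q * aa := Nat.mul_pos (by omega) haapos
      have hqaaLL : q * aa ≤ LL (K+1) := by
        rw [hq_def, Nat.mul_comm]
        exact le_trans (Nat.mul_div_le _ _) (le_refl _)
      set t := (K+2)^6 with ht_def
      have ht1 : 1 ≤ t := Nat.one_le_pow _ _ (by omega)
      set j := min t (n / (q * aa)) with hj_def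
      have hj1 : 1 ≤ j := by
        have : 1 ≤ n / (q * aa) := (Nat.one_le_div_iff hqaapos).2 (le_trans hqaaLL hge)
        omega
      have hjt : j ≤ t := min_le_left _ _
      have hjn : j * (q * aa) ≤ n := by
        have h1 : j ≤ n / (q * aa) := min_le_right _ _
        calc j * (q * aa) ≤ (n / (q * aa)) * (q * aa) := Nat.mul_le_mul_right _ h1
          _ ≤ n := Nat.div_mul_le_self _ _
      have hLLsucc : LL (K+2) = LL (K+1) + t * q * aa := LL_succ (K+1) (by omega)
      have hr : n - j * (q * aa) < LL (K+1) := by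
        rcases Nat.lt_or_ge (n / (q * aa)) t with hcase | hcase
        · -- j = n / (q*aa) : remainder is n % (q*aa) < q*aa ≤ LL (K+1)
          have hjeq : j = n / (q * aa) := by omega
          have h1 := Nat.div_add_mod n (q * aa)
          have h2 := Nat.mod_lt n hqaapos
          have h3 : (q * aa) * (n / (q * aa)) = j * (q * aa) := by rw [hjeq, Nat.mul_comm]
          omega
        · -- j = t
          have hjeq : j = t := by omega
          have h1 : t * q * aa = t * (q * aa) := by ring
          rw [hjeq]
          omega
      obtain ⟨f', hsup', hmm', hsum'⟩ := ih (n - j * (q * aa)) hr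
      set c := j * q with hc_def
      have hcpos : 0 < c := Nat.mul_pos (by omega) (by omega)
      have haa_not : aa ∉ f'.support := by
        intro hmem
        obtain ⟨k, hk1, hk2, hk3⟩ := hsup' aa hmem
        have : k^k ≤ (K+1)^(K+1) := pow_self_mono hk1 hk2
        have h2 : (K+1)^(K+1) < (K+2)^(K+2) := by
          calc (K+1)^(K+1) < (K+2)^(K+1) := Nat.pow_lt_pow_left (by omega) (by omega)
            _ ≤ (K+2)^(K+2) := Nat.pow_le_pow_right (by omega) (by omega)
        omega
      have hf'aa : f' aa = 0 := Finsupp.notMem_support_iff.1 haa_not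
      refine ⟨f' + Finsupp.single aa c, ?_, ?_, ?_⟩
      · intro a ha
        have := Finsupp.support_add ha
        rw [Finset.mem_union] at this
        rcases this with h | h
        · obtain ⟨k, hk1, hk2, hk3⟩ := hsup' a h
          exact ⟨k, hk1, by omega, hk3⟩
        · have := Finsupp.support_single_subset h
          simp only [Finset.mem_singleton] at this
          exact ⟨K+2, by omega, le_refl _, by rw [this]⟩
      · intro a ha
        rcases eq_or_ne a aa with heq | hne
        · subst heq
          have hval : (f' + Finsupp.single aa c) aa = c := by
            rw [Finsupp.add_apply, hf'aa, Finsupp.single_eq_same, zero_add]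
          rw [hval]
          right
          refine ⟨K+2, by omega, j, hj1, by omega, ?_⟩
          have : gg (K+2) = q := by
            rw [gg]
            congr 1
          rw [this, hc_def]
        · have hval : (f' + Finsupp.single aa c) a = f' a := by
            rw [Finsupp.add_apply, Finsupp.single_eq_of_ne' (Ne.symm hne), add_zero]
          rw [hval]
          apply hmm'
          rw [Finsupp.mem_support_iff] at ha ⊢
          rw [hval] at ha
          exact ha
      · rw [Finsupp.sum_add_index' (fun a => by simp) (fun a b₁ b₂ => add_mul b₁ b₂ a)]
        rw [hsum', Finsupp.sum_single_index (by simp)]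
        have : c * aa = j * (q * aa) := by rw [hc_def]; ring
        omega


end Stmt8Aux

open Filter

open Stmt8Aux

theorem stmt8 (A : Set ℕ) (hA : A = {x | ∃ k : ℕ, 1 ≤ k ∧ x = k ^ k}) :
    ∃ (c : ℝ) (n₀ : ℕ) (M : Set ℕ), M.Infinite ∧ (∀ m ∈ M, 0 < m) ∧
      ∀ n : ℕ, n > n₀ → 0 < pCount A M n ∧ (pCount A M n : ℝ) ≤ (n : ℝ) ^ c := by
  classical
  refine ⟨9, 18^18, MM, MM_infinite, MM_pos, ?_⟩
  intro n hn
  have hn1 : 1 ≤ n := by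
    have h : (0:ℕ) < 18^18 := by positivity
    omega
  set P : ℕ → Prop := fun k => k^k ≤ n with hP
  set Kb := Nat.findGreatest P n with hKbdef
  have hKbspec : Kb^Kb ≤ n := by
    have : P Kb := Nat.findGreatest_spec (m := 1) hn1 (by simpa [hP] using hn1)
    exact this
  have hKbmax : ∀ k, 1 ≤ k → k^k ≤ n → k ≤ Kb := by
    intro k hk hkn
    exact Nat.le_findGreatest (le_trans (Nat.le_self_pow (by omega) k) hkn) hkn
  have hKb18 : 18 ≤ Kb := by
    apply hKbmax 18 (by norm_num)
    omega
  have hKb1 : 1 ≤ Kb := by omega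
  set s : Finset ℕ := (Finset.Icc 1 Kb).image (fun k => k^k) with hs
  set V : Finset ℕ := insert 0 ((Finset.Icc 1 16) ∪
      (Finset.Icc 2 Kb).biUnion (fun k => (Finset.Icc 1 (k^6)).image (fun j => j * gg k))) with hV
  set T : Set (ℕ →₀ ℕ) := {f : ℕ →₀ ℕ | ↑f.support ⊆ A ∧ (∀ a ∈ f.support, f a ∈ MM) ∧
    f.sum (fun a m => m * a) = n} with hT
  have hpc : pCount A MM n = T.ncard := rfl
  have hkey : ∀ f ∈ T, ∀ a ∈ f.support, a ∈ s ∧ f a ∈ V := by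
    intro f hf a ha
    obtain ⟨hsupA, hval, hsum⟩ := hf
    have haA : a ∈ A := hsupA ha
    rw [hA] at haA
    obtain ⟨k, hk1, rfl⟩ := haA
    have hfa1 : 1 ≤ f (k^k) := Nat.one_le_iff_ne_zero.2 (Finsupp.mem_support_iff.1 ha)
    have hterm : f (k^k) * k^k ≤ n := by
      rw [← hsum]
      exact Finset.single_le_sum (f := fun x => f x * x) (fun i _ => Nat.zero_le _) ha
    have hkk1 : 1 ≤ k^k := Nat.one_le_pow _ _ (by omega)
    have hale : k^k ≤ n := le_trans (by nlinarith) hterm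
    have hfan : f (k^k) ≤ n := le_trans (by nlinarith) hterm
    constructor
    · rw [hs]
      exact Finset.mem_image.2 ⟨k, Finset.mem_Icc.2 ⟨hk1, hKbmax k hk1 hale⟩, rfl⟩
    · rw [hV]
      rcases hval _ ha with ⟨h1, h2⟩ | ⟨k', hk', j, hj1, hj2, hfeq⟩
      · apply Finset.mem_insert_of_mem; apply Finset.mem_union_left
        exact Finset.mem_Icc.2 ⟨h1, by omega⟩
      · apply Finset.mem_insert_of_mem; apply Finset.mem_union_right
        apply Finset.mem_biUnion.2
        have hkn' : k'^k' ≤ n := by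
          have h3 : gg k' ≤ f (k^k) := by
            rw [hfeq]
            nlinarith [gg_pos k' hk']
          exact le_trans (gg_ge k' hk') (le_trans h3 hfan)
        refine ⟨k', Finset.mem_Icc.2 ⟨hk', hKbmax k' (by omega) hkn'⟩, ?_⟩
        exact Finset.mem_image.2 ⟨j, Finset.mem_Icc.2 ⟨hj1, hj2⟩, hfeq.symm⟩
  have hsupp_sub : ∀ f ∈ T, ∀ x, x ∉ s → f x = 0 := by
    intro f hf x hx
    by_contra h
    exact hx ((hkey f hf x (Finsupp.mem_support_iff.2 h)).1)
  have h0V : (0:ℕ) ∈ V := Finset.mem_insert_self _ _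
  let ψ : T → (↥s → ↥V) := fun f x => ⟨f.1 x, by
    by_cases hx : (x : ℕ) ∈ f.1.support
    · exact (hkey f.1 f.2 x hx).2
    · rw [Finsupp.notMem_support_iff.1 hx]; exact h0V⟩
  have hinj : Function.Injective ψ := by
    intro f g hfg
    apply Subtype.ext
    apply Finsupp.ext
    intro x
    by_cases hx : x ∈ s
    · exact congrArg Subtype.val (congrFun hfg ⟨x, hx⟩)
    · rw [hsupp_sub f.1 f.2 x hx, hsupp_sub g.1 g.2 x hx]
  have hfinT : T.Finite := by
    have : Finite T := Finite.of_injective ψ hinj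
    exact Set.finite_coe_iff.1 this
  have hnonempty : T.Nonempty := by
    have hnLL : n < LL (n+1) := by
      have h1 := LL_ge (n+1) (by omega)
      have h2 : n+1+1 ≤ (n+1+1)^(2*(n+1+1)) := Nat.le_self_pow (by omega) _
      omega
    obtain ⟨f, h1, h2, h3⟩ := cover n n hnLL
    refine ⟨f, ?_, h2, h3⟩
    rw [hA]
    intro a ha
    simp only [Finset.mem_coe] at ha
    obtain ⟨k, hk1, _, hk3⟩ := h1 a ha
    exact ⟨k, hk1, hk3⟩
  refine ⟨by rw [hpc]; exact (Set.ncard_pos hfinT).2 hnonempty, ?_⟩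
  have hcard : T.ncard ≤ V.card ^ s.card := by
    have h1 : Nat.card T ≤ Nat.card (↥s → ↥V) := Nat.card_le_card_of_injective ψ hinj
    rw [Nat.card_coe_set_eq] at h1
    rwa [Nat.card_eq_fintype_card, Fintype.card_fun, Fintype.card_coe, Fintype.card_coe] at h1
  have hscard : s.card ≤ Kb := by
    refine le_trans Finset.card_image_le ?_
    rw [Nat.card_Icc]
    omega
  have hVcard : V.card ≤ Kb^7 := by
    obtain ⟨m, hm⟩ : ∃ m, Kb = m + 1 := ⟨Kb - 1, by omega⟩
    have hb : ((Finset.Icc 2 Kb).biUnion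
        (fun k => (Finset.Icc 1 (k^6)).image (fun j => j * gg k))).card ≤ m * Kb^6 := by
      refine le_trans Finset.card_biUnion_le ?_
      have hstep : ∀ k ∈ Finset.Icc 2 Kb,
          ((Finset.Icc 1 (k^6)).image (fun j => j * gg k)).card ≤ Kb^6 := by
        intro k hk
        rw [Finset.mem_Icc] at hk
        refine le_trans Finset.card_image_le ?_
        rw [Nat.card_Icc]
        have : k^6 ≤ Kb^6 := Nat.pow_le_pow_left hk.2 _
        omega
      refine le_trans (Finset.sum_le_sum hstep) ?_
      rw [Finset.sum_const, Nat.card_Icc, smul_eq_mul]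
      have : Kb + 1 - 2 ≤ m := by omega
      exact Nat.mul_le_mul_right _ this
    have hcv : V.card ≤ 16 + m * Kb^6 + 1 := by
      refine le_trans (Finset.card_insert_le _ _) ?_
      have := Finset.card_union_le (Finset.Icc 1 16)
        ((Finset.Icc 2 Kb).biUnion (fun k => (Finset.Icc 1 (k^6)).image (fun j => j * gg k)))
      rw [Nat.card_Icc] at this
      omega
    have h17 : 17 ≤ Kb^6 := by
      have : 18^6 ≤ Kb^6 := Nat.pow_le_pow_left hKb18 _
      have h186 : (17:ℕ) ≤ 18^6 := by norm_num
      omega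
    have hp7 : Kb^7 = m * Kb^6 + Kb^6 := by
      rw [hm]; ring
    omega
  have hfinal : T.ncard ≤ n^9 := by
    calc T.ncard ≤ V.card ^ s.card := hcard
      _ ≤ (Kb^7) ^ s.card := Nat.pow_le_pow_left hVcard _
      _ ≤ (Kb^7) ^ Kb := Nat.pow_le_pow_right (Nat.one_le_pow _ _ (by omega)) hscard
      _ = (Kb^Kb) ^ 7 := by rw [← pow_mul, ← pow_mul]; ring_nf
      _ ≤ n ^ 7 := Nat.pow_le_pow_left hKbspec _
      _ ≤ n ^ 9 := Nat.pow_le_pow_right hn1 (by omega)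
  have hrpow : (n:ℝ) ^ (9:ℝ) = ((n^9 : ℕ) : ℝ) := by
    rw [show (9:ℝ) = ((9:ℕ):ℝ) by norm_num, Real.rpow_natCast]
    push_cast
    ring
  rw [hpc, hrpow]
  exact_mod_cast hfinal
end

section
/- Let A and M be infinite sets of positive integers and suppose that: (i) for some ε > 0 and all sufficiently large n, |A ∩ {1,...,n}| ≤ (1+ε) · (log n)/(log log n) with ε ≤ 1/16, and (ii) |M ∩ {1,...,n}| ≤ (log₂ n)^8 − 1 for all sufficiently large n. Then for every δ > 0 there is an m₀ such that ∑_{n=1}^{m} p(n,A,M) ≤ m^{8(1+ε)+δ} for all m > m₀. -/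
open Filter

lemma sum_pCount_le (A M : Set ℕ) (hApos : ∀ a ∈ A, 0 < a) (hMpos : ∀ x ∈ M, 0 < x)
    (m : ℕ) :
    ∑ n ∈ Finset.Icc 1 m, pCount A M n ≤
      ((M ∩ Set.Icc 1 m).ncard + 1) ^ (A ∩ Set.Icc 1 m).ncard := by
  classical
  have hTfin : (A ∩ Set.Icc 1 m).Finite := (Set.finite_Icc 1 m).inter_of_right A
  have hVfin : (M ∩ Set.Icc 1 m).Finite := (Set.finite_Icc 1 m).inter_of_right M
  set T : Finset ℕ := hTfin.toFinset with hT
  set V : Finset ℕ := hVfin.toFinset with hV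
  set S : Set (ℕ →₀ ℕ) := {f : ℕ →₀ ℕ | ↑f.support ⊆ A ∧ (∀ a ∈ f.support, f a ∈ M) ∧
    f.sum (fun a m => m * a) ∈ Set.Icc 1 m} with hSdef
  -- key fact: members of S have support in T and values in V
  have hkey : ∀ f ∈ S, f.support ⊆ T ∧ ∀ a ∈ f.support, f a ∈ V := by
    intro f hf
    obtain ⟨hsupp, hval, hsum⟩ := hf
    have hterm : ∀ a ∈ f.support, f a * a ≤ m := by
      intro a ha
      have h1 : f a * a ≤ f.sum (fun a m => m * a) :=
        Finset.single_le_sum (f := fun a => f a * a) (fun i _ => Nat.zero_le _) ha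
      exact h1.trans hsum.2
    constructor
    · intro a ha
      have haA : a ∈ A := hsupp ha
      have hfa : 0 < f a := Nat.pos_of_ne_zero (Finsupp.mem_support_iff.mp ha)
      have hapos : 0 < a := hApos a haA
      have : a ≤ m := le_trans (Nat.le_mul_of_pos_left a hfa) (hterm a ha)
      simp [hT, Set.Finite.mem_toFinset]
      exact ⟨haA, hapos, this⟩
    · intro a ha
      have haA : a ∈ A := hsupp ha
      have hfa : 0 < f a := Nat.pos_of_ne_zero (Finsupp.mem_support_iff.mp ha)
      have hapos : 0 < a := hApos a haA
      have : f a ≤ m := le_trans (Nat.le_mul_of_pos_right (f a) hapos) (hterm a ha)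
      simp [hV, Set.Finite.mem_toFinset]
      exact ⟨hval a ha, hfa, this⟩
  -- injection of S into functions T → insert 0 V
  have hinj : Set.InjOn (fun (f : ℕ →₀ ℕ) (a : T) =>
      if h : f a.1 ∈ insert 0 V then (⟨f a.1, h⟩ : ↥(insert 0 V))
      else ⟨0, Finset.mem_insert_self 0 V⟩) S := by
    intro f hf g hg hfg
    have hfT := hkey f hf
    have hgT := hkey g hg
    ext a
    by_cases haT : a ∈ T
    · have := congrFun hfg ⟨a, haT⟩
      have hfm : f a ∈ insert 0 V := by
        by_cases h : a ∈ f.support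
        · exact Finset.mem_insert_of_mem (hfT.2 a h)
        · simp [Finsupp.notMem_support_iff.mp h]
      have hgm : g a ∈ insert 0 V := by
        by_cases h : a ∈ g.support
        · exact Finset.mem_insert_of_mem (hgT.2 a h)
        · simp [Finsupp.notMem_support_iff.mp h]
      simpa [hfm, hgm, Subtype.ext_iff] using this
    · have h1 : f a = 0 := Finsupp.notMem_support_iff.mp (fun h => haT (hfT.1 h))
      have h2 : g a = 0 := Finsupp.notMem_support_iff.mp (fun h => haT (hgT.1 h))
      rw [h1, h2]
  have hScard : S.ncard ≤ (V.card + 1) ^ T.card := by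
    have := Set.ncard_le_ncard_of_injOn _ (Set.mapsTo_univ _ S) hinj Set.finite_univ
    refine this.trans ?_
    rw [Set.ncard_univ, Nat.card_eq_fintype_card]
    calc Fintype.card (↥T → ↥(insert 0 V)) = (insert 0 V).card ^ T.card := by
          simp [Fintype.card_fun]
      _ ≤ (V.card + 1) ^ T.card := Nat.pow_le_pow_left (Finset.card_insert_le 0 V) _
  have hSfin : S.Finite := by
    refine Set.Finite.of_finite_image ?_ hinj
    exact Set.toFinite _
  -- sum of pCount equals the card of S
  have hsum : ∑ n ∈ Finset.Icc 1 m, pCount A M n = S.ncard := by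
    classical
    set Fs : Finset (ℕ →₀ ℕ) := hSfin.toFinset with hFs
    have hfiber : ∀ n ∈ Finset.Icc 1 m,
        pCount A M n = (Fs.filter (fun f => f.sum (fun a m => m * a) = n)).card := by
      intro n hn
      rw [Finset.mem_Icc] at hn
      have hset : {f : ℕ →₀ ℕ | ↑f.support ⊆ A ∧ (∀ a ∈ f.support, f a ∈ M) ∧
          f.sum (fun a m => m * a) = n} =
          ↑(Fs.filter (fun f => f.sum (fun a m => m * a) = n)) := by
        ext f
        simp only [Set.mem_setOf_eq, Finset.coe_filter, Set.Finite.mem_toFinset, hFs,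
          Set.mem_setOf_eq, hSdef, Set.mem_Icc]
        constructor
        · rintro ⟨h1, h2, h3⟩
          exact ⟨⟨h1, h2, h3 ▸ hn.1, h3 ▸ hn.2⟩, h3⟩
        · rintro ⟨⟨h1, h2, _⟩, h3⟩
          exact ⟨h1, h2, h3⟩
      rw [pCount, hset, Set.ncard_coe_finset]
    rw [Finset.sum_congr rfl hfiber]
    have hmem : ∀ f ∈ Fs, (fun g : ℕ →₀ ℕ => g.sum (fun a m => m * a)) f ∈ Finset.Icc 1 m := by
      intro f hf
      rw [hFs, Set.Finite.mem_toFinset] at hf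
      rw [Finset.mem_Icc]
      exact ⟨hf.2.2.1, hf.2.2.2⟩
    have hcard := Finset.card_eq_sum_card_fiberwise hmem
    rw [← hcard, ← Set.ncard_coe_finset, hFs, Set.Finite.coe_toFinset]
  rw [hsum]
  have hTc : T.card = (A ∩ Set.Icc 1 m).ncard := (Set.ncard_eq_toFinset_card _ hTfin).symm
  have hVc : V.card = (M ∩ Set.Icc 1 m).ncard := (Set.ncard_eq_toFinset_card _ hVfin).symm
  rw [← hTc, ← hVc]
  exact hScard

lemma analytic_bound (ε δ : ℝ) (hε : 0 < ε) (hδ : 0 < δ) :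
    ∀ᶠ m : ℕ in atTop, ∀ v k : ℕ,
      (v : ℝ) ≤ Real.logb 2 m ^ 8 - 1 →
      (k : ℝ) ≤ (1 + ε) * Real.log m / Real.log (Real.log m) →
      ((v + 1 : ℕ) : ℝ) ^ k ≤ (m : ℝ) ^ (8 * (1 + ε) + δ) := by
  set c : ℝ := Real.log (Real.log 2)⁻¹ with hc
  have hc0 : 0 < c := by
    rw [hc]
    apply Real.log_pos
    rw [one_lt_inv_iff₀]
    exact ⟨Real.log_pos (by norm_num), by
      have := Real.log_lt_sub_one_of_pos (x := 2) (by norm_num) (by norm_num)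
      linarith⟩
  have htend : Tendsto (fun m : ℕ => Real.log (Real.log m)) atTop atTop :=
    (Real.tendsto_log_atTop.comp Real.tendsto_log_atTop).comp tendsto_natCast_atTop_atTop
  have h1 : ∀ᶠ m : ℕ in atTop, Real.log (Real.log m) ≥ max 1 (8 * (1 + ε) * c / δ) :=
    htend.eventually_ge_atTop _
  have h2 : ∀ᶠ m : ℕ in atTop, (2 : ℝ) ≤ (m : ℕ) := by
    filter_upwards [eventually_ge_atTop 2] with m hm
    exact_mod_cast hm
  filter_upwards [h1, h2] with m hm1 hm2
  intro v k hv hk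
  have hL : 0 < Real.log m := Real.log_pos (by linarith)
  have hLL1 : 1 ≤ Real.log (Real.log m) := le_trans (le_max_left _ _) hm1
  have hLLc : 8 * (1 + ε) * c / δ ≤ Real.log (Real.log m) := le_trans (le_max_right _ _) hm1
  have hLL0 : 0 < Real.log (Real.log m) := lt_of_lt_of_le one_pos hLL1
  set L := Real.log m
  set LL := Real.log L
  have hlogb : Real.logb 2 m = L / Real.log 2 := rfl
  have hlog2 : 0 < Real.log 2 := Real.log_pos (by norm_num)
  have hlogb1 : 1 ≤ Real.logb 2 m := by
    rw [hlogb, le_div_iff₀ hlog2]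
    have : Real.log 2 ≤ L := Real.log_le_log (by norm_num) hm2
    linarith
  set B : ℝ := Real.logb 2 m ^ 8 with hB
  have hB1 : 1 ≤ B := one_le_pow₀ hlogb1
  have hB0 : 0 < B := lt_of_lt_of_le one_pos hB1
  set K : ℝ := (1 + ε) * L / LL with hK
  -- step 1 : (v+1)^k ≤ B^k
  have hv1 : ((v + 1 : ℕ) : ℝ) ≤ B := by push_cast; linarith
  have s1 : ((v + 1 : ℕ) : ℝ) ^ k ≤ B ^ k :=
    pow_le_pow_left₀ (by positivity) hv1 k
  -- step 2 : B^k ≤ B^K (rpow)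
  have s2 : B ^ k ≤ B ^ K := by
    rw [← Real.rpow_natCast B k]
    exact Real.rpow_le_rpow_of_exponent_le hB1 hk
  -- step 3 : B^K ≤ m^(8(1+ε)+δ)
  have hlogB : Real.log B = 8 * (LL + c) := by
    rw [hB, Real.log_pow, hlogb, Real.log_div (ne_of_gt hL) (ne_of_gt hlog2), hc,
      Real.log_inv]
    push_cast
    ring
  have s3 : B ^ K ≤ (m : ℝ) ^ (8 * (1 + ε) + δ) := by
    rw [Real.rpow_def_of_pos hB0, Real.rpow_def_of_pos (by linarith : (0:ℝ) < (m:ℝ))]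
    apply Real.exp_le_exp.mpr
    rw [hlogB, hK]
    have key : (1 + ε) * L / LL * (8 * (LL + c)) = 8 * (1 + ε) * L + 8 * (1 + ε) * L * c / LL := by
      field_simp
    rw [mul_comm, key]
    have h8 : 8 * (1 + ε) * L * c / LL ≤ δ * L := by
      rw [div_le_iff₀ hLL0]
      have h' : 8 * (1 + ε) * c ≤ δ * LL := by
        rw [div_le_iff₀ hδ] at hLLc
        linarith [hLLc]
      calc 8 * (1 + ε) * L * c = (8 * (1 + ε) * c) * L := by ring
        _ ≤ (δ * LL) * L := by
            apply mul_le_mul_of_nonneg_right h' (le_of_lt hL)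
        _ = δ * L * LL := by ring
    have hLm : Real.log (m : ℝ) = L := rfl
    rw [hLm]
    nlinarith [hL]
  exact le_trans s1 (le_trans s2 s3)

theorem stmt10 (A M : Set ℕ) (hA : A.Infinite) (hM : M.Infinite)
    (hApos : ∀ a ∈ A, 0 < a) (hMpos : ∀ x ∈ M, 0 < x)
    (ε : ℝ) (hε : 0 < ε) (hε16 : ε ≤ 1 / 16)
    (hAdens : ∀ᶠ n : ℕ in atTop,
      ((A ∩ Set.Icc 1 n).ncard : ℝ) ≤ (1 + ε) * Real.log n / Real.log (Real.log n))
    (hMdens : ∀ᶠ n : ℕ in atTop,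
      ((M ∩ Set.Icc 1 n).ncard : ℝ) ≤ Real.logb 2 n ^ 8 - 1) :
    ∀ δ : ℝ, 0 < δ → ∃ m₀ : ℕ, ∀ m : ℕ, m > m₀ →
      ((∑ n ∈ Finset.Icc 1 m, pCount A M n : ℕ) : ℝ) ≤ (m : ℝ) ^ (8 * (1 + ε) + δ) := by
  intro δ hδ
  have hev : ∀ᶠ m : ℕ in atTop,
      ((∑ n ∈ Finset.Icc 1 m, pCount A M n : ℕ) : ℝ) ≤ (m : ℝ) ^ (8 * (1 + ε) + δ) := by
    filter_upwards [hAdens, hMdens, analytic_bound ε δ hε hδ] with m hAm hMm hana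
    set v := (M ∩ Set.Icc 1 m).ncard
    set k := (A ∩ Set.Icc 1 m).ncard
    have hnat := sum_pCount_le A M hApos hMpos m
    have hcast : ((∑ n ∈ Finset.Icc 1 m, pCount A M n : ℕ) : ℝ) ≤ ((v + 1 : ℕ) : ℝ) ^ k := by
      rw [← Nat.cast_pow]
      exact_mod_cast hnat
    exact hcast.trans (hana v k hMm hAm)
  obtain ⟨a, ha⟩ := eventually_atTop.mp hev
  exact ⟨a, fun m hm => ha m (le_of_lt hm)⟩
end

section
/- Let A be an infinite set of positive integers with 1 ∈ A such that |A ∩ {1,...,n}| = (1+o(1)) · (log n)/(log log n) as n → ∞. Then there exist an integer n₀ and an infinite set M of positive integers such that for all n > n₀ both p(n,A,M) > 0 and |M ∩ {1,...,n}| < (log₂ n)^8 − 1. -/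
open Filter

namespace Stmt12Aux


/-- Covering radius recursion. -/
def Rf (a : ℕ → ℕ) (C : ℕ) : ℕ → ℕ
  | 0 => C
  | i+1 => Rf a C i + 2*(i+10)^6 * (((Rf a C i + 1) / a (i+1)) * a (i+1))

/-- Coefficient unit for level `i+1`. -/
def Dq (a : ℕ → ℕ) (C : ℕ) (i : ℕ) : ℕ := (Rf a C i + 1) / a (i+1)

lemma Rf_succ (a : ℕ → ℕ) (C i : ℕ) :
    Rf a C (i+1) = Rf a C i + 2*(i+10)^6 * (Dq a C i * a (i+1)) := rfl

/-- The multiplier set. -/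
def Mset (a : ℕ → ℕ) (C : ℕ) : Set ℕ :=
  Set.Icc 1 C ∪ {m | ∃ i c, 1 ≤ c ∧ c ≤ 2*(i+10)^6 ∧ m = c * Dq a C i}

variable {a : ℕ → ℕ} {C : ℕ}

lemma step (i : ℕ) (h2 : 2 ≤ a (i+1)) (hk : a (i+1)^2 ≤ Rf a C i) :
    Rf a C i + 2 ≤ 2 * (Dq a C i * a (i+1)) := by
  have hapos : 0 < a (i+1) := by omega
  have h1 : Rf a C i + 1 < Dq a C i * a (i+1) + a (i+1) := Nat.lt_div_mul_add hapos
  have h2a : 2 * a (i+1) ≤ a (i+1) ^ 2 := by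
    have := Nat.mul_le_mul_right (a (i+1)) h2
    nlinarith [this]
  omega

lemma Dq_pos (i : ℕ) (h2 : 2 ≤ a (i+1)) (hk : a (i+1)^2 ≤ Rf a C i) :
    1 ≤ Dq a C i := by
  have hapos : 0 < a (i+1) := by omega
  have ha : a (i+1) ≤ Rf a C i + 1 := by nlinarith
  exact (Nat.one_le_div_iff hapos).mpr ha

lemma q_le (i : ℕ) : Dq a C i * a (i+1) ≤ Rf a C i + 1 := Nat.div_mul_le_self _ _

lemma stepR (i : ℕ) (h2 : 2 ≤ a (i+1)) (hk : a (i+1)^2 ≤ Rf a C i) :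
    (i+10)^6 * (Rf a C i + 2) ≤ Rf a C (i+1) := by
  have h := step i h2 hk
  rw [Rf_succ]
  calc (i+10)^6 * (Rf a C i + 2) ≤ (i+10)^6 * (2 * (Dq a C i * a (i+1))) :=
        Nat.mul_le_mul_left _ h
    _ = 2*(i+10)^6 * (Dq a C i * a (i+1)) := by ring
    _ ≤ _ := Nat.le_add_left _ _

lemma Rf_mono : Monotone (Rf a C) := by
  apply monotone_nat_of_le_succ
  intro i
  rw [Rf_succ]
  omega

lemma growth (i : ℕ)
    (hkeys : ∀ j, j < i → 2 ≤ a (j+1) ∧ a (j+1)^2 ≤ Rf a C j) :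
    C * (Nat.factorial i)^6 ≤ Rf a C i := by
  induction i with
  | zero => simp [Rf]
  | succ i ih =>
      have h := hkeys i (Nat.lt_succ_self i)
      have hg := stepR i h.1 h.2
      have ihg := ih (fun j hj => hkeys j (hj.trans (Nat.lt_succ_self i)))
      have h1 : C * (Nat.factorial (i+1))^6 = (C * (Nat.factorial i)^6) * (i+1)^6 := by
        rw [Nat.factorial_succ]
        ring
      rw [h1]
      calc (C * (Nat.factorial i)^6) * (i+1)^6 ≤ Rf a C i * (i+10)^6 := by
            apply Nat.mul_le_mul ihg
            exact Nat.pow_le_pow_left (by omega) 6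
        _ ≤ (i+10)^6 * (Rf a C i + 2) := by
            rw [Nat.mul_comm]
            exact Nat.mul_le_mul_left _ (by omega)
        _ ≤ Rf a C (i+1) := hg

lemma pow2_le (hC : 1 ≤ C)
    (hkeys : ∀ j, 2 ≤ a (j+1) ∧ a (j+1)^2 ≤ Rf a C j) (i : ℕ) :
    2^i ≤ Rf a C i := by
  induction i with
  | zero => simpa [Rf] using hC
  | succ i ih =>
      have hg := stepR i (hkeys i).1 (hkeys i).2
      have : 2 * 2^i ≤ (i+10)^6 * (Rf a C i + 2) := by
        calc 2 * 2^i ≤ 2 * Rf a C i := by omega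
          _ ≤ (i+10)^6 * (Rf a C i + 2) := by
              have h10 : 2 ≤ (i+10)^6 := by
                calc 2 ≤ 10^6 := by norm_num
                  _ ≤ (i+10)^6 := Nat.pow_le_pow_left (by omega) 6
              nlinarith [h10]
      calc 2^(i+1) = 2 * 2^i := by ring
        _ ≤ (i+10)^6 * (Rf a C i + 2) := this
        _ ≤ Rf a C (i+1) := hg




lemma pow_le_factorial_mul_exp : ∀ i : ℕ, (i:ℝ)^i ≤ (Nat.factorial i) * Real.exp i := by
  intro i
  induction i with
  | zero => simp
  | succ i ih =>
      push_cast
      rcases Nat.eq_zero_or_pos i with rfl | hi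
      · simpa using Real.one_le_exp (by norm_num)
      have hipos : (0:ℝ) < i := by exact_mod_cast hi
      have h1 : ((i:ℝ)+1)^i ≤ (i:ℝ)^i * Real.exp 1 := by
        have hfrac : ((i:ℝ)+1) = i * (1 + 1/i) := by field_simp
        have hexp : (1 + 1/(i:ℝ)) ≤ Real.exp (1/i) := by
          have := Real.add_one_le_exp (1/(i:ℝ))
          linarith
        have h2 : ((i:ℝ)+1)^i = (i:ℝ)^i * (1+1/(i:ℝ))^i := by
          rw [hfrac, mul_pow]
        rw [h2]
        apply mul_le_mul_of_nonneg_left _ (by positivity)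
        calc (1+1/(i:ℝ))^i ≤ (Real.exp (1/i))^i := by
              apply pow_le_pow_left₀ (by positivity) hexp
          _ = Real.exp ((1/i) * i) := by rw [← Real.exp_nat_mul]; ring_nf
          _ = Real.exp 1 := by rw [one_div, inv_mul_cancel₀ (ne_of_gt hipos)]
      have hfact : (Nat.factorial (i+1) : ℝ) = ((i:ℝ)+1) * Nat.factorial i := by
        rw [Nat.factorial_succ]; push_cast; ring
      calc ((i:ℝ)+1)^(i+1) = ((i:ℝ)+1) * ((i:ℝ)+1)^i := by ring
        _ ≤ ((i:ℝ)+1) * ((i:ℝ)^i * Real.exp 1) := by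
            apply mul_le_mul_of_nonneg_left h1 (by positivity)
        _ ≤ ((i:ℝ)+1) * ((Nat.factorial i * Real.exp i) * Real.exp 1) := by
            apply mul_le_mul_of_nonneg_left _ (by positivity)
            apply mul_le_mul_of_nonneg_right ih (Real.exp_nonneg 1)
        _ = (Nat.factorial (i+1) : ℝ) * (Real.exp i * Real.exp 1) := by rw [hfact]; ring
        _ = (Nat.factorial (i+1) : ℝ) * Real.exp ((i:ℝ)+1) := by rw [← Real.exp_add]

lemma log_factorial_lb (i : ℕ) (hi : 1 ≤ i) :
    (i:ℝ) * Real.log i - i ≤ Real.log (Nat.factorial i) := by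
  have hipos : (0:ℝ) < i := by exact_mod_cast hi
  have hfpos : (0:ℝ) < (Nat.factorial i : ℝ) := by exact_mod_cast (Nat.factorial_pos i)
  have h := pow_le_factorial_mul_exp i
  have hlog := Real.log_le_log (by positivity) h
  rw [Real.log_pow, Real.log_mul (ne_of_gt hfpos) (ne_of_gt (Real.exp_pos _)),
    Real.log_exp] at hlog
  linarith

lemma log_le_c_self {t : ℝ} (ht : 32 ≤ t) : Real.log t ≤ 0.11 * t := by
  have he32 : Real.exp 1 ≤ 32 := by
    have := Real.exp_one_lt_d9
    linarith
  have hmem32 : (32:ℝ) ∈ {x : ℝ | Real.exp 1 ≤ x} := by simpa using he32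
  have hmemt : t ∈ {x : ℝ | Real.exp 1 ≤ x} := by
    simp only [Set.mem_setOf_eq]; linarith
  have h := Real.log_div_self_antitoneOn hmem32 hmemt ht
  have h32 : Real.log 32 ≤ 3.47 := by
    have h2 : (32:ℝ) = 2^5 := by norm_num
    rw [h2, Real.log_pow]
    have := Real.log_two_lt_d9
    push_cast
    linarith
  have htpos : (0:ℝ) < t := by linarith
  rw [div_le_div_iff₀ htpos (by norm_num : (0:ℝ) < 32)] at h
  nlinarith

lemma key_numeric (i s : ℕ) (hi : 2^50 ≤ i) (hfs : (Nat.factorial i)^3 ≤ 3 * s) :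
    ((i:ℝ) + 2) * Real.log (Real.log s) ≤ (2/3) * Real.log s := by
  have hi1 : 1 ≤ i := le_trans (by norm_num) hi
  have hipos : (0:ℝ) < i := by exact_mod_cast hi1
  have hireal0 : ((2^50 : ℕ) : ℝ) ≤ (i:ℝ) := Nat.cast_le.mpr hi
  set li := Real.log i with hlidef
  have hli34 : 34 ≤ li := by
    push_cast at hireal0
    have h1 : Real.log ((2:ℝ)^(50:ℕ)) ≤ li := Real.log_le_log (by positivity) (by exact_mod_cast hireal0)
    rw [Real.log_pow] at h1
    have := Real.log_two_gt_d9
    push_cast at h1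
    linarith
  have hspos : 1 ≤ s := by
    have := Nat.factorial_pos i
    have h3 : 1 ≤ 3 * s := le_trans (Nat.one_le_iff_ne_zero.mpr (pow_ne_zero _ (Nat.factorial_ne_zero i))) hfs
    omega
  have hsreal : (0:ℝ) < s := by exact_mod_cast hspos
  set y := Real.log s with hydef
  -- lower bound on y
  have hfs' : ((Nat.factorial i : ℝ))^3 ≤ 3 * s := by exact_mod_cast hfs
  have hfpos : (0:ℝ) < (Nat.factorial i : ℝ) := by exact_mod_cast Nat.factorial_pos i
  have hlog3 : Real.log 3 ≤ 1.4 := by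
    have h4 : Real.log 3 ≤ Real.log 4 := Real.log_le_log (by norm_num) (by norm_num)
    have h42 : (4:ℝ) = 2^2 := by norm_num
    rw [h42, Real.log_pow] at h4
    have := Real.log_two_lt_d9
    push_cast at h4
    linarith
  have hyl : 3 * ((i:ℝ) * li - i) - 1.4 ≤ y := by
    have h1 := Real.log_le_log (by positivity) hfs'
    rw [Real.log_pow, Real.log_mul (by norm_num) (ne_of_gt hsreal)] at h1
    have h2 := log_factorial_lb i hi1
    push_cast at h1
    linarith
  set v := (14/5) * ((i:ℝ) * li) with hvdef
  have hi1' : (1:ℝ) ≤ (i:ℝ) := by exact_mod_cast hi1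
  have h34i : (i:ℝ) * 34 ≤ (i:ℝ) * li := mul_le_mul_of_nonneg_left hli34 hipos.le
  have hvy : v ≤ y := by linarith
  have hv3 : (3:ℝ) ≤ v := by linarith
  have hev : Real.exp 1 ≤ v := by
    have := Real.exp_one_lt_d9; linarith
  have hey : Real.exp 1 ≤ y := le_trans hev hvy
  have hvpos : (0:ℝ) < v := by linarith [Real.exp_pos 1]
  have hypos : (0:ℝ) < y := by linarith [Real.exp_pos 1]
  -- antitone
  have hanti := Real.log_div_self_antitoneOn
    (by simpa using hev) (by simpa using hey) hvy
  -- log v ≤ 1.2 li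
  have hlv : Real.log v ≤ 1.2 * li := by
    have hlipos : (0:ℝ) < li := by linarith
    have h1 : Real.log v = Real.log (14/5) + Real.log i + Real.log li := by
      rw [hvdef, Real.log_mul (by norm_num) (by positivity),
        Real.log_mul (ne_of_gt hipos) (ne_of_gt hlipos)]
      ring
    have h2 : Real.log (14/5 : ℝ) ≤ 1.4 := by
      have := Real.log_le_log (by norm_num : (0:ℝ) < 14/5) (by norm_num : (14/5:ℝ) ≤ 3)
      linarith [hlog3]
    have h3 : Real.log li ≤ 0.11 * li := log_le_c_self (by linarith)
    rw [h1]
    nlinarith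
  -- conclude
  have hlogv_pos : (0:ℝ) < Real.log v := by
    rw [Real.lt_log_iff_exp_lt hvpos] at *
    calc Real.exp 0 = 1 := Real.exp_zero
      _ < v := by linarith
  have hratio : Real.log y / y ≤ Real.log v / v := hanti
  have hvv : Real.log v / v ≤ 3 / (7 * i) := by
    rw [div_le_div_iff₀ hvpos (by positivity)]
    have : Real.log v * (7 * i) ≤ 1.2 * li * (7 * i) := by nlinarith
    nlinarith
  have hly : Real.log y ≤ y * (3 / (7 * i)) := by
    have := (div_le_iff₀ hypos).mp (le_trans hratio hvv)
    linarith
  have hcmp : (3:ℝ) / (7 * i) * ((i:ℝ)+2) ≤ 2/3 := by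
    rw [div_mul_eq_mul_div, div_le_iff₀ (by positivity)]
    have hi4 : (4:ℝ) ≤ (i:ℝ) := by exact_mod_cast le_trans (by norm_num : 4 ≤ 2^50) hi
    linarith
  calc ((i:ℝ)+2) * Real.log y ≤ ((i:ℝ)+2) * (y * (3/(7*i))) := by
        apply mul_le_mul_of_nonneg_left hly (by positivity)
    _ = (3/(7*(i:ℝ)) * ((i:ℝ)+2)) * y := by ring
    _ ≤ (2/3) * y := by
        apply mul_le_mul_of_nonneg_right hcmp (le_of_lt hypos)




lemma cover (hC : 1 ≤ C) (ha0 : a 0 = 1) (hmono : StrictMono a)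
    (hkeys : ∀ j, 2 ≤ a (j+1) ∧ a (j+1)^2 ≤ Rf a C j) :
    ∀ i n, n ≤ Rf a C i → ∃ f : ℕ →₀ ℕ,
      (∀ x ∈ f.support, ∃ j, j ≤ i ∧ x = a j) ∧ (∀ x ∈ f.support, f x ∈ Mset a C) ∧
      f.sum (fun x m => m * x) = n := by
  intro i
  induction i with
  | zero =>
      intro n hn
      rcases Nat.eq_zero_or_pos n with rfl | hn1
      · exact ⟨0, by simp, by simp, by simp [Finsupp.sum]⟩
      · refine ⟨Finsupp.single 1 n, ?_, ?_, ?_⟩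
        · intro x hx
          rw [Finsupp.support_single_ne_zero _ hn1.ne'] at hx
          simp only [Finset.mem_singleton] at hx
          exact ⟨0, le_refl 0, by rw [hx, ha0]⟩
        · intro x hx
          rw [Finsupp.support_single_ne_zero _ hn1.ne'] at hx
          simp only [Finset.mem_singleton] at hx
          subst hx
          left
          simp only [Finsupp.single_eq_same]
          exact ⟨hn1, by simpa [Rf] using hn⟩
        · rw [Finsupp.sum_single_index (by simp)]
          simp
  | succ i ih =>
      intro n hn
      have h2 := (hkeys i).1
      have hk := (hkeys i).2
      have hapos : 0 < a (i+1) := by omega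
      have hD1 : 1 ≤ Dq a C i := by
        have ha : a (i+1) ≤ Rf a C i + 1 := by nlinarith
        exact (Nat.one_le_div_iff hapos).mpr ha
      set q := Dq a C i * a (i+1) with hqdef
      have hqpos : 0 < q := Nat.mul_pos hD1 hapos
      set l := 2*(i+10)^6 with hldef
      set c := min l (n / q) with hcdef
      have hcq : c * q ≤ n := by
        calc c * q ≤ (n / q) * q := Nat.mul_le_mul_right q (min_le_right _ _)
          _ ≤ n := Nat.div_mul_le_self n q
      have hrem : n - c * q ≤ Rf a C i := by
        rcases le_or_gt (n / q) l with h | h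
        · have hc : c = n / q := min_eq_right h
          have hmod := Nat.div_add_mod' n q
          have hmq : n % q < q := Nat.mod_lt n hqpos
          have hq1 : q ≤ Rf a C i + 1 := q_le i
          rw [hc]
          have heq : n - n / q * q = n % q := by omega
          rw [heq]
          omega
        · have hc : c = l := min_eq_left h.le
          have hsucc : Rf a C (i+1) = Rf a C i + l * q := Rf_succ a C i
          rw [hc]
          rw [hsucc] at hn
          omega
      obtain ⟨f', hs', hv', hsum'⟩ := ih (n - c * q) hrem
      set v := c * Dq a C i with hvdef
      have hxni : a (i+1) ∉ f'.support := by
        intro hmem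
        obtain ⟨j, hj, hx⟩ := hs' _ hmem
        have := hmono.injective hx.symm
        omega
      refine ⟨f' + Finsupp.single (a (i+1)) v, ?_, ?_, ?_⟩
      · intro x hx
        have := Finsupp.support_add hx
        rw [Finset.mem_union] at this
        rcases this with h | h
        · obtain ⟨j, hj, hx2⟩ := hs' _ h
          exact ⟨j, by omega, hx2⟩
        · have := Finsupp.support_single_subset h
          simp only [Finset.mem_singleton] at this
          exact ⟨i+1, le_refl _, this⟩
      · intro x hx
        have hmem := Finsupp.support_add hx
        rw [Finset.mem_union] at hmem
        rcases hmem with h | h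
        · have hne : x ≠ a (i+1) := fun he => hxni (he ▸ h)
          have : (f' + Finsupp.single (a (i+1)) v) x = f' x := by
            rw [Finsupp.add_apply, Finsupp.single_eq_of_ne' (Ne.symm hne), Nat.add_zero]
          rw [this]
          exact hv' _ h
        · have hx2 := Finsupp.support_single_subset h
          simp only [Finset.mem_singleton] at hx2
          subst hx2
          have hval : (f' + Finsupp.single (a (i+1)) v) (a (i+1)) = v := by
            rw [Finsupp.add_apply, Finsupp.single_eq_same,
              Finsupp.notMem_support_iff.mp hxni, Nat.zero_add]
          rw [hval]
          have hvne : v ≠ 0 := by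
            intro hv0
            rw [hv0] at h
            simp at h
          have hc1 : 1 ≤ c := by
            rcases Nat.eq_zero_or_pos c with h0 | h0
            · exact absurd (by rw [hvdef, h0, Nat.zero_mul]) hvne
            · exact h0
          right
          exact ⟨i, c, hc1, min_le_left _ _, rfl⟩
      · rw [Finsupp.sum_add_index' (fun x => Nat.zero_mul x) (fun x m1 m2 => Nat.add_mul m1 m2 x)]
        rw [hsum', Finsupp.sum_single_index (by simp)]
        have : v * a (i+1) = c * q := by rw [hvdef, hqdef]; ring
        rw [this]
        omega


end Stmt12Aux

open Filter Stmt12Aux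

theorem stmt12 (A : Set ℕ) (hA : A.Infinite) (hApos : ∀ a ∈ A, 0 < a) (h1 : 1 ∈ A)
    (hdens : Tendsto
      (fun n : ℕ => ((A ∩ Set.Icc 1 n).ncard : ℝ) * Real.log (Real.log n) / Real.log n)
      atTop (nhds 1)) :
    ∃ (n₀ : ℕ) (M : Set ℕ), M.Infinite ∧ (∀ m ∈ M, 0 < m) ∧
      ∀ n : ℕ, n > n₀ → 0 < pCount A M n ∧
        ((M ∩ Set.Icc 1 n).ncard : ℝ) < Real.logb 2 n ^ 8 - 1 := by
  classical
  set p : ℕ → Prop := fun k => k ∈ A with hpdef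
  haveI : DecidablePred p := Classical.decPred p
  have hAp : (setOf p).Infinite := hA
  set a : ℕ → ℕ := Nat.nth p with hadef
  have hmono : StrictMono a := Nat.nth_strictMono hAp
  have haA : ∀ i, a i ∈ A := fun i => Nat.nth_mem_of_infinite hAp i
  have ha0 : a 0 = 1 := by
    rw [hadef, Nat.nth_zero]
    apply le_antisymm
    · exact Nat.sInf_le h1
    · exact hApos _ (Nat.sInf_mem (Set.nonempty_of_mem h1))
  have ha2 : ∀ i, 2 ≤ a (i+1) := by
    intro i
    have h : a 0 < a (i+1) := hmono (by omega)
    omega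
  -- counting identity
  have hage : ∀ k, k + 1 ≤ a k := by
    intro k
    induction k with
    | zero => omega
    | succ k ih => have : a k < a (k+1) := hmono (by omega); omega
  have hcount : ∀ m : ℕ, (A ∩ Set.Icc 1 m).ncard = Nat.count p (m+1) := by
    intro m
    have hset : A ∩ Set.Icc 1 m = ↑((Finset.range (m+1)).filter p) := by
      ext k
      simp only [Set.mem_inter_iff, Set.mem_Icc, Finset.coe_filter, Finset.mem_range,
        Set.mem_setOf_eq]
      constructor
      · rintro ⟨hk, h1k, hkm⟩
        exact ⟨by omega, hk⟩
      · rintro ⟨hk, hkA⟩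
        exact ⟨hkA, hApos _ hkA, by omega⟩
    rw [hset, Set.ncard_coe_finset, Nat.count_eq_card_filter_range]
  -- eventual density lower bound
  obtain ⟨m₁, hEv⟩ : ∃ m₁ : ℕ, ∀ m : ℕ, m₁ ≤ m →
      (2/3 : ℝ) * Real.log m < (Nat.count p (m+1) : ℝ) * Real.log (Real.log m) := by
    have h23 : ∀ᶠ n : ℕ in atTop,
        (2/3 : ℝ) < ((A ∩ Set.Icc 1 n).ncard : ℝ) * Real.log (Real.log n) / Real.log n :=
      hdens.eventually (eventually_gt_nhds (by norm_num))
    obtain ⟨m₀, hm₀⟩ := eventually_atTop.mp h23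
    refine ⟨max m₀ 2, fun m hm => ?_⟩
    have h := hm₀ m (le_trans (le_max_left _ _) hm)
    have hm2 : (2:ℕ) ≤ m := le_trans (le_max_right _ _) hm
    have hm1R : (1:ℝ) < (m:ℝ) := by exact_mod_cast hm2
    have hlm : (0:ℝ) < Real.log m := Real.log_pos hm1R
    rw [lt_div_iff₀ hlm] at h
    rw [hcount m] at h
    linarith
  set i₂ : ℕ := max m₁ (2^50) with hi₂def
  obtain ⟨C, hCdef⟩ : ∃ C : ℕ, C = (a i₂)^2 + 1 := ⟨_, rfl⟩
  have hC1 : 1 ≤ C := by omega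
  -- the key property
  have hkey : ∀ i, 2 ≤ a (i+1) ∧ a (i+1)^2 ≤ Rf a C i := by
    intro i
    induction i using Nat.strong_induction_on with
    | _ i IH =>
      refine ⟨ha2 i, ?_⟩
      have hgrow : C * (Nat.factorial i)^6 ≤ Rf a C i := growth i (fun j hj => IH j hj)
      have hCRf : C ≤ Rf a C i := by
        have h1 : C * 1 ≤ C * (Nat.factorial i)^6 :=
          Nat.mul_le_mul_left C (Nat.one_le_iff_ne_zero.mpr (pow_ne_zero _ (Nat.factorial_ne_zero i)))
        omega
      rcases lt_or_ge i i₂ with hcase | hcase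
      · have hle : a (i+1) ≤ a i₂ := hmono.monotone (by omega)
        have : a (i+1)^2 ≤ (a i₂)^2 := Nat.pow_le_pow_left hle 2
        omega
      · -- big case
        set s := Nat.sqrt (Rf a C i) with hsdef
        have hi50 : 2^50 ≤ i := le_trans (le_max_right _ _) hcase
        have hfac6 : (Nat.factorial i)^3 * (Nat.factorial i)^3 ≤ Rf a C i := by
          have : (Nat.factorial i)^3 * (Nat.factorial i)^3 = (Nat.factorial i)^6 := by ring
          rw [this]
          calc (Nat.factorial i)^6 = 1 * (Nat.factorial i)^6 := (Nat.one_mul _).symm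
            _ ≤ C * (Nat.factorial i)^6 := Nat.mul_le_mul_right _ hC1
            _ ≤ Rf a C i := hgrow
        have hfs : (Nat.factorial i)^3 ≤ s := by
          rw [hsdef]
          exact Nat.le_sqrt.mpr hfac6
        have hfs3 : (Nat.factorial i)^3 ≤ 3 * s := le_trans hfs (by omega)
        have hsm₁ : m₁ ≤ s := by
          have hif : i ≤ Nat.factorial i := Nat.self_le_factorial i
          have hif3 : i ≤ (Nat.factorial i)^3 := by
            calc i ≤ Nat.factorial i := hif
              _ ≤ (Nat.factorial i)^3 := Nat.le_self_pow (by norm_num) _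
          have : m₁ ≤ i := le_trans (le_max_left _ _) hcase
          omega
        have hnum := key_numeric i s hi50 hfs3
        have hev := hEv s hsm₁
        -- s ≥ 16 so log s > 0
        have hs16 : (16:ℕ) ≤ s := by
          have h2i : 2^50 ≤ Nat.factorial i := le_trans hi50 (Nat.self_le_factorial i)
          have : (2:ℕ)^50 ≤ (Nat.factorial i)^3 :=
            le_trans h2i (Nat.le_self_pow (by norm_num) _)
          have h16 : (16:ℕ) ≤ 2^50 := by norm_num
          omega
        have hlogs_pos : (0:ℝ) < Real.log s := by
          apply Real.log_pos
          have : (16:ℝ) ≤ (s:ℝ) := by exact_mod_cast hs16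
          linarith
        have hll_pos : (0:ℝ) < Real.log (Real.log s) := by
          by_contra hneg
          push_neg at hneg
          have hcnt_nonneg : (0:ℝ) ≤ (Nat.count p (s+1) : ℝ) := Nat.cast_nonneg _
          nlinarith
        have hlt : ((i:ℝ) + 2) * Real.log (Real.log s)
            < (Nat.count p (s+1) : ℝ) * Real.log (Real.log s) := lt_of_le_of_lt hnum hev
        have hic : ((i:ℝ) + 2) < (Nat.count p (s+1) : ℝ) :=
          lt_of_mul_lt_mul_right hlt (le_of_lt hll_pos)
        have hic' : i + 2 ≤ Nat.count p (s+1) := by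
          have : ((i + 2 : ℕ) : ℝ) < (Nat.count p (s+1) : ℝ) := by push_cast; linarith
          exact_mod_cast le_of_lt this
        have hnth : a (i+1) < s + 1 := by
          rw [hadef]
          exact Nat.nth_lt_of_lt_count (by omega)
        have hs2 : a (i+1) ≤ s := by omega
        calc a (i+1)^2 ≤ s^2 := Nat.pow_le_pow_left hs2 2
          _ ≤ Rf a C i := Nat.sqrt_le' _
  -- the multiplier set
  refine ⟨2^(C + 100000), Mset a C, ?_, ?_, ?_⟩
  · -- infinite
    apply Set.infinite_of_not_bddAbove
    rintro ⟨B, hB⟩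
    have hmem : Dq a C (2*B+2) ∈ Mset a C := by
      right
      refine ⟨2*B+2, 1, le_refl 1, ?_, (Nat.one_mul _).symm⟩
      have : 0 < 2*((2*B+2)+10)^6 := by positivity
      omega
    have hDB : B < Dq a C (2*B+2) := by
      set j := 2*B+2 with hjdef
      have hstep := step j (hkey j).1 (hkey j).2
      have hk := (hkey j).2
      have hpos : 0 < a (j+1) := by have := ha2 j; omega
      have hk' : a (j+1) * a (j+1) ≤ Rf a C j := by
        have he : a (j+1)^2 = a (j+1) * a (j+1) := by ring
        omega
      have h1 : a (j+1) * a (j+1) + 2 ≤ 2 * (Dq a C j * a (j+1)) := by omega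
      have h2D : a (j+1) < 2 * Dq a C j := by
        by_contra hcon
        push_neg at hcon
        have hle : 2 * (Dq a C j * a (j+1)) ≤ a (j+1) * a (j+1) := by
          calc 2 * (Dq a C j * a (j+1)) = (2 * Dq a C j) * a (j+1) := by ring
            _ ≤ a (j+1) * a (j+1) := Nat.mul_le_mul_right _ hcon
        omega
      have haj : j + 2 ≤ a (j+1) := hage (j+1)
      omega
    exact absurd (hB hmem) (by omega)
  · -- positive
    rintro m (hm | ⟨i, c, hc1, hcl, rfl⟩)
    · exact lt_of_lt_of_le Nat.zero_lt_one hm.1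
    · have hD := Dq_pos i (hkey i).1 (hkey i).2
      positivity
  · -- main clause
    intro n hn
    have hn1 : 1 ≤ n := by
      have : (1:ℕ) ≤ 2^(C+100000) := Nat.one_le_two_pow
      omega
    constructor
    · -- positivity of pCount
      have hnRf : n ≤ Rf a C n := by
        have h1 : n < 2^n := Nat.lt_two_pow_self
        have h2 : 2^n ≤ Rf a C n := pow2_le hC1 hkey n
        omega
      obtain ⟨f, hsupp, hvals, hsum⟩ := cover hC1 ha0 hmono hkey n n hnRf
      set S : Set (ℕ →₀ ℕ) := {f : ℕ →₀ ℕ | ↑f.support ⊆ A ∧ (∀ x ∈ f.support, f x ∈ Mset a C) ∧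
        f.sum (fun a m => m * a) = n} with hSdef
      have hfS : f ∈ S := by
        refine ⟨?_, hvals, hsum⟩
        intro x hx
        simp only [Finset.mem_coe] at hx
        obtain ⟨j, _, rfl⟩ := hsupp x hx
        exact haA j
      -- finiteness
      set g : ℕ →₀ ℕ := Finsupp.indicator (Finset.Icc 1 n) (fun _ _ => n) with hgdef
      have hSsub : S ⊆ Set.Icc 0 g := by
        intro f' hf'
        obtain ⟨hf'A, hf'M, hf'sum⟩ := hf'
        refine ⟨zero_le, ?_⟩
        rw [Finsupp.le_iff]
        intro x hx
        have hxA : x ∈ A := hf'A (Finset.mem_coe.mpr hx)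
        have hxpos : 0 < x := hApos x hxA
        have hf'xpos : 0 < f' x := Nat.pos_of_ne_zero (Finsupp.mem_support_iff.mp hx)
        have hterm : f' x * x ≤ n := by
          rw [← hf'sum]
          exact Finset.single_le_sum (f := fun y => f' y * y) (fun i _ => Nat.zero_le _) hx
        have hxn : x ≤ n := by
          calc x ≤ f' x * x := Nat.le_mul_of_pos_left x hf'xpos
            _ ≤ n := hterm
        have hfxn : f' x ≤ n := by
          calc f' x ≤ f' x * x := Nat.le_mul_of_pos_right (f' x) hxpos
            _ ≤ n := hterm
        have hgx : g x = n := by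
          rw [hgdef, Finsupp.indicator_of_mem (Finset.mem_Icc.mpr ⟨hxpos, hxn⟩)]
        rw [hgx]
        exact hfxn
      have hSfin : S.Finite := (Set.finite_Icc 0 g).subset hSsub
      show 0 < pCount A (Mset a C) n
      rw [pCount]
      exact (Set.ncard_pos hSfin).mpr ⟨f, hfS⟩
    · -- count bound
      set J : ℕ := Nat.log 2 (4*n^2) with hJdef
      set F : Finset ℕ := (Finset.Icc 1 C) ∪
        (Finset.range (J+1)).biUnion
          (fun i => (Finset.Icc 1 (2*(i+10)^6)).image (fun c => c * Dq a C i)) with hFdef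
      have hsub : Mset a C ∩ Set.Icc 1 n ⊆ ↑F := by
        rintro m ⟨hmM, hm1, hmn⟩
        rcases hmM with hm | ⟨i, c, hc1, hcl, rfl⟩
        · apply Finset.mem_coe.mpr
          apply Finset.mem_union_left
          exact Finset.mem_Icc.mpr ⟨hm.1, hm.2⟩
        · apply Finset.mem_coe.mpr
          apply Finset.mem_union_right
          have hDn : Dq a C i ≤ n := by
            have : Dq a C i ≤ c * Dq a C i := Nat.le_mul_of_pos_left _ hc1
            omega
          have hstep := step i (hkey i).1 (hkey i).2
          have hk2 := (hkey i).2
          have hapos : 0 < a (i+1) := by have := ha2 i; omega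
          have ha2n : a (i+1) ≤ 2*n := by
            by_contra hcon
            push_neg at hcon
            have h1 : a (i+1) * a (i+1) + 2 ≤ 2 * (Dq a C i * a (i+1)) := by
              have he : a (i+1)^2 = a (i+1) * a (i+1) := by ring
              omega
            have h2 : Dq a C i * a (i+1) ≤ n * a (i+1) :=
              Nat.mul_le_mul_right _ hDn
            nlinarith
          have hRf4 : Rf a C i ≤ 4*n^2 := by
            have h1 : Rf a C i + 2 ≤ 2 * (Dq a C i * a (i+1)) := hstep
            have h2 : Dq a C i * a (i+1) ≤ n * (2*n) :=
              Nat.mul_le_mul hDn ha2n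
            nlinarith
          have h2i : 2^i ≤ 4*n^2 := le_trans (pow2_le hC1 hkey i) hRf4
          have hiJ : i ≤ J := by
            rw [hJdef]
            exact (Nat.le_log_iff_pow_le (by norm_num) (by positivity)).mpr h2i
          apply Finset.mem_biUnion.mpr
          exact ⟨i, Finset.mem_range.mpr (by omega),
            Finset.mem_image.mpr ⟨c, Finset.mem_Icc.mpr ⟨hc1, hcl⟩, rfl⟩⟩
      have hcard : F.card ≤ C + 2*(J+10)^7 := by
        calc F.card ≤ (Finset.Icc 1 C).card +
            ((Finset.range (J+1)).biUnion
              (fun i => (Finset.Icc 1 (2*(i+10)^6)).image (fun c => c * Dq a C i))).card :=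
              Finset.card_union_le _ _
          _ ≤ C + 2*(J+10)^7 := by
              apply Nat.add_le_add
              · rw [Nat.card_Icc]; omega
              · calc ((Finset.range (J+1)).biUnion _).card
                    ≤ ∑ i ∈ Finset.range (J+1),
                      ((Finset.Icc 1 (2*(i+10)^6)).image (fun c => c * Dq a C i)).card :=
                      Finset.card_biUnion_le
                  _ ≤ ∑ i ∈ Finset.range (J+1), 2*(J+10)^6 := by
                      apply Finset.sum_le_sum
                      intro i hi
                      have hi' : i ≤ J := by
                        have := Finset.mem_range.mp hi; omega
                      calc ((Finset.Icc 1 (2*(i+10)^6)).image (fun c => c * Dq a C i)).card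
                          ≤ (Finset.Icc 1 (2*(i+10)^6)).card := Finset.card_image_le
                        _ = 2*(i+10)^6 := by rw [Nat.card_Icc]; omega
                        _ ≤ 2*(J+10)^6 := by
                            have : (i+10)^6 ≤ (J+10)^6 := Nat.pow_le_pow_left (by omega) 6
                            omega
                  _ = (J+1) * (2*(J+10)^6) := by
                      rw [Finset.sum_const, Finset.card_range]
                      ring
                  _ ≤ 2*(J+10)^7 := by
                      have h1 : (J+1) * (2*(J+10)^6) = 2*((J+1)*(J+10)^6) := by ring
                      have h2 : (J+1)*(J+10)^6 ≤ (J+10)*(J+10)^6 :=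
                        Nat.mul_le_mul_right _ (by omega)
                      have h3 : (J+10)*(J+10)^6 = (J+10)^7 := by ring
                      omega
      have hncard : (Mset a C ∩ Set.Icc 1 n).ncard ≤ C + 2*(J+10)^7 := by
        calc (Mset a C ∩ Set.Icc 1 n).ncard ≤ (↑F : Set ℕ).ncard :=
              Set.ncard_le_ncard hsub F.finite_toSet
          _ = F.card := Set.ncard_coe_finset F
          _ ≤ C + 2*(J+10)^7 := hcard
      -- real arithmetic
      set x : ℝ := Real.logb 2 n with hxdef
      have hnpos : (0:ℝ) < (n:ℝ) := by
        have : (1:ℕ) ≤ n := hn1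
        exact_mod_cast Nat.lt_of_lt_of_le Nat.zero_lt_one this
      have hxlarge : (C:ℝ) + 100000 ≤ x := by
        have hle : ((2^(C+100000) : ℕ) : ℝ) ≤ (n:ℝ) := by
          have : 2^(C+100000) ≤ n := by omega
          exact_mod_cast this
        have hcast : ((2^(C+100000) : ℕ) : ℝ) = (2:ℝ)^(C+100000) := by push_cast; ring
        rw [hcast] at hle
        have h1 : Real.logb 2 ((2:ℝ)^(C+100000)) ≤ x := by
          rw [hxdef]
          exact Real.logb_le_logb_of_le (by norm_num) (by positivity) hle
        rw [← Real.rpow_natCast (2:ℝ) (C+100000), Real.logb_rpow (by norm_num) (by norm_num)] at h1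
        push_cast at h1
        linarith
      have hJx : (J:ℝ) ≤ 2 + 2*x := by
        have h2J : 2^J ≤ 4*n^2 := Nat.pow_log_le_self 2 (by positivity)
        have h2JR : ((2:ℝ))^J ≤ 4*(n:ℝ)^2 := by exact_mod_cast h2J
        have h1 : Real.logb 2 ((2:ℝ)^J) ≤ Real.logb 2 (4*(n:ℝ)^2) :=
          Real.logb_le_logb_of_le (by norm_num) (by positivity) h2JR
        rw [← Real.rpow_natCast (2:ℝ) J, Real.logb_rpow (by norm_num) (by norm_num)] at h1
        have h2 : Real.logb 2 (4*(n:ℝ)^2) = Real.logb 2 4 + 2 * x := by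
          rw [Real.logb_mul (by norm_num) (by positivity), Real.logb_pow]
          rw [hxdef]
          push_cast
          ring
        have h3 : Real.logb 2 (4:ℝ) = 2 := by
          have h4 : (4:ℝ) = 2^(2:ℕ) := by norm_num
          rw [h4, Real.logb_pow, Real.logb_self_eq_one (by norm_num)]
          norm_num
        rw [h2, h3] at h1
        linarith
      have hx12 : (12:ℝ) ≤ x := by linarith [Nat.cast_nonneg (α := ℝ) C]
      have hJ3x : (J:ℝ) + 10 ≤ 3*x := by linarith
      have hcastcard : ((Mset a C ∩ Set.Icc 1 n).ncard : ℝ) ≤ (C:ℝ) + 2*((J:ℝ)+10)^7 := by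
        have := Nat.cast_le (α := ℝ).mpr hncard
        push_cast at this
        linarith
      have hpow7 : ((J:ℝ)+10)^7 ≤ (3*x)^7 :=
        pow_le_pow_left₀ (by positivity) hJ3x 7
      have hx1' : (1:ℝ) ≤ x := by linarith
      have hx7 : (1:ℝ) ≤ x^7 := by
        have := pow_le_pow_left₀ (by norm_num : (0:ℝ) ≤ 1) hx1' 7
        simpa using this
      have hC7 : (C:ℝ) ≤ (C:ℝ) * x^7 := le_mul_of_one_le_right (Nat.cast_nonneg C) hx7
      have hmul : ((C:ℝ) + 100000) * x^7 ≤ x * x^7 :=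
        mul_le_mul_of_nonneg_right hxlarge (by positivity)
      have hpow8 : x^8 = x * x^7 := by ring
      have h3x7 : (3*x)^7 = 2187 * x^7 := by ring
      calc ((Mset a C ∩ Set.Icc 1 n).ncard : ℝ) ≤ (C:ℝ) + 2*((J:ℝ)+10)^7 := hcastcard
        _ ≤ (C:ℝ) + 2*(2187 * x^7) := by linarith [hpow7, h3x7]
        _ < x^8 - 1 := by linarith [hmul, hC7, hx7, hpow8]
end
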